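/- arXiv:1304.2961 — 8 statements merged into one kernel-verified Lean document; each statement's English description precedes it below -/
import Mathlib

section
/- Let m, n ∈ ℕ+ and let a, b, s ∈ ℕ with a ∣ m, b ∣ n, 0 ≤ s ≤ a−1 and a ∣ (n/b)·s. Then the set V_{a,b,s} = {(i·a + j·s mod m, j·b mod n) : 0 ≤ i ≤ m/a − 1, 0 ≤ j ≤ n/b − 1}, i.e. the subgroup of ℤ_m × ℤ_n generated by (a,0) and (s,b), is a subgroup of ℤ_m × ℤ_n of order mn/(ab). -/
-- auxiliary: zsmul reduces to nsmul when c • g = 0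
lemma zsmul_reduce {G : Type*} [AddCommGroup G] (g : G) (c : ℕ) (hc : 0 < c)
    (h : c • g = 0) (z : ℤ) : z • g = ((z % (c : ℤ)).toNat) • g := by
  have h2 : ((c : ℤ)) • g = 0 := by rwa [natCast_zsmul]
  have h3 : ((c : ℤ) * (z / c)) • g = 0 := by
    rw [mul_comm, mul_zsmul, h2, smul_zero]
  conv_lhs => rw [← Int.mul_ediv_add_emod z c]
  rw [add_zsmul, h3, zero_add]
  have h4 : (((z % (c:ℤ)).toNat : ℤ)) = z % (c:ℤ) :=
    Int.toNat_of_nonneg (Int.emod_nonneg z (by positivity))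
  conv_lhs => rw [← h4, natCast_zsmul]

lemma prod_card_smul (m n : ℕ) (g : ZMod m × ZMod n) : (m * n) • g = 0 := by
  obtain ⟨x, y⟩ := g
  ext
  · show (m * n) • x = 0
    rw [nsmul_eq_mul]
    push_cast
    simp [ZMod.natCast_self]
  · show (m * n) • y = 0
    rw [nsmul_eq_mul]
    push_cast
    simp [ZMod.natCast_self]

/-- For `m, n ∈ ℕ+`, `a ∣ m`, `b ∣ n`, `0 ≤ s ≤ a-1` with `a ∣ (n/b)·s`, the subgroup
`V_{a,b,s}` of `ℤ_m × ℤ_n` generated by `(a,0)` and `(s,b)` is the set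
`{(i·a + j·s, j·b) : 0 ≤ i ≤ m/a - 1, 0 ≤ j ≤ n/b - 1}` and has order `mn/(ab)`. -/
theorem subgroup_Vabs (m n : ℕ) (hm : 0 < m) (hn : 0 < n) (a b s : ℕ)
    (ha : a ∣ m) (hb : b ∣ n) (hs : s ≤ a - 1) (hdvd : a ∣ (n / b) * s) :
    ((AddSubgroup.closure {((a : ZMod m), (0 : ZMod n)), ((s : ZMod m), (b : ZMod n))} :
        AddSubgroup (ZMod m × ZMod n)) : Set (ZMod m × ZMod n)) =
      {p : ZMod m × ZMod n | ∃ i j : ℕ, i ≤ m / a - 1 ∧ j ≤ n / b - 1 ∧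
        p = (((i * a + j * s : ℕ) : ZMod m), ((j * b : ℕ) : ZMod n))} ∧
    Nat.card (AddSubgroup.closure {((a : ZMod m), (0 : ZMod n)), ((s : ZMod m), (b : ZMod n))} :
        AddSubgroup (ZMod m × ZMod n)) = m * n / (a * b) := by
  have hapos : 0 < a := Nat.pos_of_dvd_of_pos ha hm
  have hbpos : 0 < b := Nat.pos_of_dvd_of_pos hb hn
  set A := m / a with hA
  set B := n / b with hB
  have hmA : m = a * A := (Nat.mul_div_cancel' ha).symm
  have hnB : n = b * B := (Nat.mul_div_cancel' hb).symm
  have hApos : 0 < A := Nat.div_pos (Nat.le_of_dvd hm ha) hapos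
  have hBpos : 0 < B := Nat.div_pos (Nat.le_of_dvd hn hb) hbpos
  obtain ⟨k, hk⟩ := hdvd  -- B * s = a * k
  -- reduction lemma
  have reduce : ∀ i j : ℕ, ∃ i' j' : ℕ, i' < A ∧ j' < B ∧
      ((i * a + j * s : ℕ) : ZMod m) = ((i' * a + j' * s : ℕ) : ZMod m) ∧
      ((j * b : ℕ) : ZMod n) = ((j' * b : ℕ) : ZMod n) := by
    intro i j
    refine ⟨(i + (j / B) * k) % A, j % B, Nat.mod_lt _ hApos, Nat.mod_lt _ hBpos, ?_, ?_⟩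
    · rw [ZMod.natCast_eq_natCast_iff]
      have e1 : i * a + j * s =
          ((i + (j / B) * k) % A) * a + (j % B) * s + ((i + (j / B) * k) / A) * m := by
        have hj : j = B * (j / B) + j % B := (Nat.div_add_mod j B).symm
        have h1 : i + (j / B) * k = A * ((i + (j / B) * k) / A) + (i + (j / B) * k) % A :=
          (Nat.div_add_mod _ A).symm
        calc i * a + j * s = i * a + (B * (j / B) + j % B) * s := by rw [← hj]
          _ = (i + (j / B) * k) * a + (j % B) * s := by
              rw [add_mul, mul_comm B (j/B), mul_assoc, hk]; ring
          _ = (A * ((i + (j / B) * k) / A) + (i + (j / B) * k) % A) * a + (j % B) * s := by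
              rw [← h1]
          _ = _ := by rw [hmA]; ring
      rw [e1]
      simp [Nat.ModEq, Nat.add_mul_mod_self_right]
    · rw [ZMod.natCast_eq_natCast_iff]
      have e1 : j * b = (j % B) * b + (j / B) * n := by
        conv_lhs => rw [← Nat.div_add_mod j B]
        rw [hnB]; ring
      rw [e1]
      simp [Nat.ModEq, Nat.add_mul_mod_self_right]
  -- the element formula
  have elem_eq : ∀ i j : ℕ,
      i • ((a : ZMod m), (0 : ZMod n)) + j • ((s : ZMod m), (b : ZMod n)) =
      (((i * a + j * s : ℕ) : ZMod m), ((j * b : ℕ) : ZMod n)) := by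
    intro i j
    ext
    · show i • (a : ZMod m) + j • (s : ZMod m) = ((i * a + j * s : ℕ) : ZMod m)
      push_cast
      rw [nsmul_eq_mul, nsmul_eq_mul]
    · show i • (0 : ZMod n) + j • (b : ZMod n) = ((j * b : ℕ) : ZMod n)
      push_cast
      rw [smul_zero, zero_add, nsmul_eq_mul]
  have hset : ((AddSubgroup.closure {((a : ZMod m), (0 : ZMod n)), ((s : ZMod m), (b : ZMod n))} :
        AddSubgroup (ZMod m × ZMod n)) : Set (ZMod m × ZMod n)) =
      {p : ZMod m × ZMod n | ∃ i j : ℕ, i ≤ m / a - 1 ∧ j ≤ n / b - 1 ∧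
        p = (((i * a + j * s : ℕ) : ZMod m), ((j * b : ℕ) : ZMod n))} := by
    ext p
    simp only [SetLike.mem_coe, AddSubgroup.mem_closure_pair, Set.mem_setOf_eq]
    constructor
    · rintro ⟨z1, z2, rfl⟩
      have hmn : 0 < m * n := Nat.mul_pos hm hn
      rw [zsmul_reduce _ (m * n) hmn (prod_card_smul m n _) z1,
          zsmul_reduce _ (m * n) hmn (prod_card_smul m n _) z2, elem_eq]
      obtain ⟨i', j', hi', hj', h1, h2⟩ := reduce (z1 % ((m*n:ℕ):ℤ)).toNat (z2 % ((m*n:ℕ):ℤ)).toNat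
      exact ⟨i', j', by omega, by omega, by rw [h1, h2]⟩
    · rintro ⟨i, j, hi, hj, rfl⟩
      exact ⟨(i : ℤ), (j : ℤ), by rw [natCast_zsmul, natCast_zsmul, elem_eq]⟩
  refine ⟨hset, ?_⟩
  -- cardinality
  have hcard : Nat.card (AddSubgroup.closure
      {((a : ZMod m), (0 : ZMod n)), ((s : ZMod m), (b : ZMod n))} :
        AddSubgroup (ZMod m × ZMod n)) = A * B := by
    haveI : NeZero m := ⟨hm.ne'⟩
    haveI : NeZero n := ⟨hn.ne'⟩
    let f : Fin A × Fin B → ZMod m × ZMod n := fun p =>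
      (((p.1 * a + p.2 * s : ℕ) : ZMod m), ((p.2 * b : ℕ) : ZMod n))
    have hinj : Function.Injective f := by
      rintro ⟨⟨i1, hi1⟩, ⟨j1, hj1⟩⟩ ⟨⟨i2, hi2⟩, ⟨j2, hj2⟩⟩ h
      simp only [f, Prod.mk.injEq] at h
      obtain ⟨h1, h2⟩ := h
      rw [ZMod.natCast_eq_natCast_iff] at h1 h2
      have hj : j1 = j2 := by
        have l1 : j1 * b < n := by
          calc j1 * b ≤ (B - 1) * b := Nat.mul_le_mul_right b (by omega)
            _ < B * b := (Nat.mul_lt_mul_right hbpos).mpr (by omega)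
            _ = n := by rw [hnB, mul_comm]
        have l2 : j2 * b < n := by
          calc j2 * b ≤ (B - 1) * b := Nat.mul_le_mul_right b (by omega)
            _ < B * b := (Nat.mul_lt_mul_right hbpos).mpr (by omega)
            _ = n := by rw [hnB, mul_comm]
        have heq : j1 * b = j2 * b := by
          have := h2
          unfold Nat.ModEq at this
          rwa [Nat.mod_eq_of_lt l1, Nat.mod_eq_of_lt l2] at this
        exact Nat.eq_of_mul_eq_mul_right hbpos heq
      subst hj
      have h1' : i1 * a ≡ i2 * a [MOD m] := Nat.ModEq.add_right_cancel rfl h1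
      have l1 : i1 * a < m := by
        calc i1 * a ≤ (A - 1) * a := Nat.mul_le_mul_right a (by omega)
          _ < A * a := (Nat.mul_lt_mul_right hapos).mpr (by omega)
          _ = m := by rw [hmA, mul_comm]
      have l2 : i2 * a < m := by
        calc i2 * a ≤ (A - 1) * a := Nat.mul_le_mul_right a (by omega)
          _ < A * a := (Nat.mul_lt_mul_right hapos).mpr (by omega)
          _ = m := by rw [hmA, mul_comm]
      have heq : i1 * a = i2 * a := by
        unfold Nat.ModEq at h1'
        rwa [Nat.mod_eq_of_lt l1, Nat.mod_eq_of_lt l2] at h1'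
      have : i1 = i2 := Nat.eq_of_mul_eq_mul_right hapos heq
      simp [this]
    have hrange : Set.range f = ((AddSubgroup.closure
        {((a : ZMod m), (0 : ZMod n)), ((s : ZMod m), (b : ZMod n))} :
        AddSubgroup (ZMod m × ZMod n)) : Set (ZMod m × ZMod n)) := by
      rw [hset]
      ext p
      simp only [Set.mem_range, Set.mem_setOf_eq]
      constructor
      · rintro ⟨⟨⟨i, hi⟩, ⟨j, hj⟩⟩, rfl⟩
        exact ⟨i, j, by omega, by omega, rfl⟩
      · rintro ⟨i, j, hi, hj, rfl⟩
        exact ⟨⟨⟨i, by omega⟩, ⟨j, by omega⟩⟩, rfl⟩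
    have := Nat.card_range_of_injective hinj
    rw [hrange, SetLike.coe_sort_coe] at this
    rw [this]
    simp [Nat.card_eq_fintype_card]
  rw [hcard, hmA, hnB]
  rw [show a * A * (b * B) = (a * b) * (A * B) by ring, Nat.mul_div_cancel_left _ (Nat.mul_pos hapos hbpos)]
end

section
/- Let m, n ∈ ℕ+ and let I_{m,n} = {(a,b,s) ∈ ℕ² × ℕ₀ : a ∣ m, b ∣ n, 0 ≤ s ≤ a−1 and a ∣ (n/b)·s}. Then the map (a,b,s) ↦ V_{a,b,s}, where V_{a,b,s} is the subgroup of ℤ_m × ℤ_n generated by (a,0) and (s,b), is a bijection between the set I_{m,n} and the set of all subgroups of ℤ_m × ℤ_n. -/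
lemma closure_neg_singleton {G : Type*} [AddCommGroup G] (x : G) :
    AddSubgroup.closure {-x} = AddSubgroup.closure {x} := by
  apply le_antisymm <;> rw [AddSubgroup.closure_le, Set.singleton_subset_iff]
  · exact neg_mem (AddSubgroup.subset_closure rfl)
  · have h := neg_mem (AddSubgroup.subset_closure (Set.mem_singleton (-x)))
    simpa using h

lemma zmod_mem_closure_iff {m : ℕ} (hm : 0 < m) {a : ℕ} (ha : a ∣ m) (c : ℕ) :
    (c : ZMod m) ∈ AddSubgroup.closure {(a : ZMod m)} ↔ a ∣ c := by
  rw [AddSubgroup.mem_closure_singleton]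
  constructor
  · rintro ⟨k, hk⟩
    have hk' : (k : ZMod m) * (a : ℕ) = (c : ℕ) := by rw [← zsmul_eq_mul]; exact hk
    have h0 : ((k * a - c : ℤ) : ZMod m) = 0 := by push_cast; rw [sub_eq_zero]; exact hk'
    rw [ZMod.intCast_zmod_eq_zero_iff_dvd] at h0
    have h1 : (a : ℤ) ∣ k * a - c := dvd_trans (Int.natCast_dvd_natCast.2 ha) h0
    have h2 : (a : ℤ) ∣ k * a := dvd_mul_left _ _
    have hac : (a : ℤ) ∣ (c : ℤ) := by
      have := dvd_sub h2 h1; simpa using this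
    exact_mod_cast hac
  · rintro ⟨k, rfl⟩
    exact ⟨k, by rw [zsmul_eq_mul]; push_cast; ring⟩

lemma zmod_closure_inj {m : ℕ} (hm : 0 < m) {d d' : ℕ} (hd : d ∣ m) (hd' : d' ∣ m)
    (h : AddSubgroup.closure {(d : ZMod m)} = AddSubgroup.closure {(d' : ZMod m)}) : d = d' := by
  have h1 : (d' : ZMod m) ∈ AddSubgroup.closure {(d : ZMod m)} :=
    h ▸ AddSubgroup.subset_closure rfl
  have h2 : (d : ZMod m) ∈ AddSubgroup.closure {(d' : ZMod m)} :=
    h.symm ▸ AddSubgroup.subset_closure rfl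
  exact Nat.dvd_antisymm ((zmod_mem_closure_iff hm hd d').1 h1)
    ((zmod_mem_closure_iff hm hd' d).1 h2)

lemma zmod_subgroup_eq_closure {n : ℕ} (hn : 0 < n) (H : AddSubgroup (ZMod n)) :
    ∃ d : ℕ, d ∣ n ∧ H = AddSubgroup.closure {(d : ZMod n)} := by
  obtain ⟨a, ha⟩ := Int.subgroup_cyclic (H.comap (Int.castAddHom (ZMod n)))
  have hmap : (H.comap (Int.castAddHom (ZMod n))).map (Int.castAddHom (ZMod n)) = H :=
    AddSubgroup.map_comap_eq_self_of_surjective ZMod.intCast_surjective H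
  have hfa : ∀ x : ℤ, (Int.castAddHom (ZMod n)) x = ((x : ℤ) : ZMod n) := fun _ => rfl
  refine ⟨a.natAbs, ?_, ?_⟩
  · have hn' : (n : ℤ) ∈ H.comap (Int.castAddHom (ZMod n)) := by
      rw [AddSubgroup.mem_comap, hfa]
      have : ((n : ℤ) : ZMod n) = 0 := by push_cast; exact ZMod.natCast_self n
      rw [this]; exact H.zero_mem
    rw [ha, AddSubgroup.mem_closure_singleton] at hn'
    obtain ⟨k, hk⟩ := hn'
    have : a ∣ (n : ℤ) := ⟨k, by rw [← hk, smul_eq_mul, mul_comm]⟩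
    exact Int.natCast_dvd_natCast.1 (Int.natAbs_dvd.2 this)
  · rw [← hmap, ha, AddMonoidHom.map_closure, Set.image_singleton, hfa]
    rcases Int.natAbs_eq a with he | he
    · conv_lhs => rw [he, Int.cast_natCast]
    · conv_lhs => rw [he, Int.cast_neg, Int.cast_natCast]
      rw [closure_neg_singleton]
lemma mem_V_iff {m n : ℕ} {a b s : ℕ} (z : ZMod m × ZMod n) :
    z ∈ AddSubgroup.closure {((a : ZMod m), (0 : ZMod n)), ((s : ZMod m), (b : ZMod n))} ↔
      ∃ i j : ℤ, i • (a : ZMod m) + j • (s : ZMod m) = z.1 ∧ j • (b : ZMod n) = z.2 := by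
  rw [AddSubgroup.mem_closure_pair]
  constructor
  · rintro ⟨i, j, hij⟩
    exact ⟨i, j, by simpa using congrArg Prod.fst hij, by simpa using congrArg Prod.snd hij⟩
  · rintro ⟨i, j, h1, h2⟩
    refine ⟨i, j, Prod.ext ?_ ?_⟩
    · simpa using h1
    · simpa using h2

lemma map_snd_V {m n : ℕ} {a b s : ℕ} :
    AddSubgroup.map (AddMonoidHom.snd (ZMod m) (ZMod n))
      (AddSubgroup.closure {((a : ZMod m), (0 : ZMod n)), ((s : ZMod m), (b : ZMod n))}) =
      AddSubgroup.closure {(b : ZMod n)} := by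
  rw [AddMonoidHom.map_closure]
  have himg : (AddMonoidHom.snd (ZMod m) (ZMod n)) ''
      {((a : ZMod m), (0 : ZMod n)), ((s : ZMod m), (b : ZMod n))} =
      {(0 : ZMod n), (b : ZMod n)} := by
    simp [Set.image_insert_eq]
  rw [himg]
  apply le_antisymm
  · rw [AddSubgroup.closure_le]
    rintro x (rfl | rfl)
    · exact zero_mem _
    · exact AddSubgroup.subset_closure rfl
  · exact AddSubgroup.closure_mono (by intro x hx; simp_all)

set_option maxHeartbeats 1000000 in
lemma fst_V {m n : ℕ} (hm : 0 < m) {a b s : ℕ} (ha : a ∣ m) (hb : b ∣ n) (hb0 : 0 < b)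
    (hdvd : a ∣ (n / b) * s) (x : ZMod m) :
    ((x, (0 : ZMod n)) ∈
      AddSubgroup.closure {((a : ZMod m), (0 : ZMod n)), ((s : ZMod m), (b : ZMod n))}) ↔
      x ∈ AddSubgroup.closure {(a : ZMod m)} := by
  rw [mem_V_iff]
  constructor
  · rintro ⟨i, j, h1, h2⟩
    simp only at h1 h2
    have hjb0 : ((j * b : ℤ) : ZMod n) = 0 := by
      push_cast
      rw [← zsmul_eq_mul]
      exact h2
    rw [ZMod.intCast_zmod_eq_zero_iff_dvd] at hjb0
    have hnb : (n : ℤ) = ((n / b : ℕ) : ℤ) * b := by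
      exact_mod_cast (Nat.div_mul_cancel hb).symm
    have hdvdj : ((n / b : ℕ) : ℤ) ∣ j := by
      rw [hnb] at hjb0
      exact (mul_dvd_mul_iff_right (by exact_mod_cast hb0.ne' : (b : ℤ) ≠ 0)).1 hjb0
    obtain ⟨k, hk⟩ := hdvdj
    have hmem : (((n / b) * s : ℕ) : ZMod m) ∈ AddSubgroup.closure {(a : ZMod m)} := by
      have := hdvd
      exact (zmod_mem_closure_iff hm ha _).2 hdvd
    have hx : x = i • (a : ZMod m) + k • (((n / b) * s : ℕ) : ZMod m) := by
      rw [← h1, hk, zsmul_eq_mul, zsmul_eq_mul, zsmul_eq_mul, Int.cast_mul,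
        Int.cast_natCast, Nat.cast_mul]
      ring
    rw [hx]
    have m1 : (a : ZMod m) ∈ AddSubgroup.closure {(a : ZMod m)} := AddSubgroup.subset_closure rfl
    exact add_mem (zsmul_mem m1 i) (zsmul_mem hmem k)
  · intro hx
    rw [AddSubgroup.mem_closure_singleton] at hx
    obtain ⟨i, hi⟩ := hx
    refine ⟨i, 0, ?_, ?_⟩
    · simpa using hi
    · simp
set_option maxHeartbeats 1000000 in
/-- The map `(a,b,s) ↦ V_{a,b,s}` (with `V_{a,b,s}` the subgroup of `ℤ_m × ℤ_n` generated by
`(a,0)` and `(s,b)`) is a bijection between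
`I_{m,n} = {(a,b,s) : a ∣ m, b ∣ n, 0 ≤ s ≤ a-1, a ∣ (n/b)·s}` and the set of all
subgroups of `ℤ_m × ℤ_n`. -/
theorem bijective_Vabs (m n : ℕ) (hm : 0 < m) (hn : 0 < n) :
    Function.Bijective
      (fun x : {x : ℕ × ℕ × ℕ //
          x.1 ∣ m ∧ x.2.1 ∣ n ∧ x.2.2 ≤ x.1 - 1 ∧ x.1 ∣ (n / x.2.1) * x.2.2} =>
        (AddSubgroup.closure
          {((x.1.1 : ZMod m), (0 : ZMod n)), ((x.1.2.2 : ZMod m), (x.1.2.1 : ZMod n))} :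
          AddSubgroup (ZMod m × ZMod n))) := by
  constructor
  · -- Injectivity
    rintro ⟨⟨a, b, s⟩, ham, hbn, hs, hdvd⟩ ⟨⟨a', b', s'⟩, ham', hbn', hs', hdvd'⟩ h
    dsimp only at h hs hdvd hs' hdvd' ham ham' hbn hbn'
    have ha0 : 0 < a := Nat.pos_of_dvd_of_pos ham hm
    have ha0' : 0 < a' := Nat.pos_of_dvd_of_pos ham' hm
    have hb0 : 0 < b := Nat.pos_of_dvd_of_pos hbn hn
    have hb0' : 0 < b' := Nat.pos_of_dvd_of_pos hbn' hn
    have hbb : b = b' := by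
      have h2 := congrArg (AddSubgroup.map (AddMonoidHom.snd (ZMod m) (ZMod n))) h
      rw [map_snd_V, map_snd_V] at h2
      exact zmod_closure_inj hn hbn hbn' h2
    have haa : a = a' := by
      apply zmod_closure_inj hm ham ham'
      ext x
      rw [← fst_V hm ham hbn hb0 hdvd x, ← fst_V hm ham' hbn' hb0' hdvd' x, h]
    have hss : s = s' := by
      have h1 : ((s : ZMod m), (b' : ZMod n)) ∈
          AddSubgroup.closure {((a' : ZMod m), (0 : ZMod n)), ((s' : ZMod m), (b' : ZMod n))} := by
        rw [← h, ← hbb]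
        exact AddSubgroup.subset_closure (by simp)
      have h2 : ((s' : ZMod m), (b' : ZMod n)) ∈
          AddSubgroup.closure {((a' : ZMod m), (0 : ZMod n)), ((s' : ZMod m), (b' : ZMod n))} :=
        AddSubgroup.subset_closure (by simp)
      have h3 := sub_mem h1 h2
      rw [Prod.mk_sub_mk, sub_self] at h3
      have h4 : (s : ZMod m) - s' ∈ AddSubgroup.closure {(a' : ZMod m)} :=
        (fst_V hm ham' hbn' hb0' hdvd' _).1 h3
      rw [← haa] at h4
      rcases le_total s' s with hle | hle
      · have h5 : ((s - s' : ℕ) : ZMod m) ∈ AddSubgroup.closure {(a : ZMod m)} := by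
          rwa [Nat.cast_sub hle]
        have h6 := (zmod_mem_closure_iff hm ham _).1 h5
        have h7 : s - s' = 0 := Nat.eq_zero_of_dvd_of_lt h6 (by omega)
        omega
      · have h5 : ((s' - s : ℕ) : ZMod m) ∈ AddSubgroup.closure {(a : ZMod m)} := by
          rw [Nat.cast_sub hle]
          simpa using neg_mem h4
        have h6 := (zmod_mem_closure_iff hm ham _).1 h5
        have h7 : s' - s = 0 := Nat.eq_zero_of_dvd_of_lt h6 (by omega)
        omega
    subst haa hbb hss
    rfl
  · -- Surjectivity
    intro H
    haveI : NeZero m := ⟨hm.ne'⟩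
    obtain ⟨b, hbn, hb⟩ :=
      zmod_subgroup_eq_closure hn (H.map (AddMonoidHom.snd (ZMod m) (ZMod n)))
    obtain ⟨a, ham, ha⟩ :=
      zmod_subgroup_eq_closure hm (H.comap (AddMonoidHom.inl (ZMod m) (ZMod n)))
    have ha0 : 0 < a := Nat.pos_of_dvd_of_pos ham hm
    have hb0 : 0 < b := Nat.pos_of_dvd_of_pos hbn hn
    have hkey' : ∀ x : ZMod m,
        ((x, (0 : ZMod n)) ∈ H ↔ x ∈ AddSubgroup.closure {(a : ZMod m)}) := by
      intro x
      rw [← ha, AddSubgroup.mem_comap, AddMonoidHom.inl_apply]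
    have hkey : ∀ c : ℕ, (((c : ZMod m), (0 : ZMod n)) ∈ H ↔ a ∣ c) := fun c =>
      (hkey' (c : ZMod m)).trans (zmod_mem_closure_iff hm ham c)
    have hbmem : (b : ZMod n) ∈ H.map (AddMonoidHom.snd (ZMod m) (ZMod n)) := by
      rw [hb]; exact AddSubgroup.subset_closure rfl
    obtain ⟨p, hpH, hp2⟩ := AddSubgroup.mem_map.1 hbmem
    obtain ⟨t', ht'⟩ := ZMod.natCast_zmod_surjective p.1
    set s := t' % a with hs_def
    have hsb : ((s : ZMod m), (b : ZMod n)) ∈ H := by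
      have htb : ((t' : ZMod m), (b : ZMod n)) ∈ H := by
        have hq : ((t' : ZMod m), p.2) ∈ H := by rw [ht']; simpa using hpH
        rwa [show p.2 = (b : ZMod n) from hp2] at hq
      have hmul : (((a * (t' / a) : ℕ) : ZMod m), (0 : ZMod n)) ∈ H := (hkey _).2 ⟨_, rfl⟩
      have h5 := sub_mem htb hmul
      rw [Prod.mk_sub_mk, sub_zero] at h5
      have hcast : (t' : ZMod m) - ((a * (t' / a) : ℕ) : ZMod m) = (s : ZMod m) := by
        have ht : a * (t' / a) + s = t' := Nat.div_add_mod t' a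
        have he : (t' : ZMod m) = ((a * (t' / a) : ℕ) : ZMod m) + (s : ZMod m) := by
          rw [← Nat.cast_add, ht]
        rw [he]
        ring
      rwa [hcast] at h5
    have hs_le : s ≤ a - 1 := by
      have := Nat.mod_lt t' ha0
      omega
    have hdvd : a ∣ (n / b) * s := by
      have hsmul : ((n / b) • (((s : ZMod m)), (b : ZMod n))) =
          ((((n / b) * s : ℕ) : ZMod m), (0 : ZMod n)) := by
        rw [Prod.smul_mk]
        congr 1
        · rw [nsmul_eq_mul, ← Nat.cast_mul]
        · rw [nsmul_eq_mul, ← Nat.cast_mul, Nat.div_mul_cancel hbn, ZMod.natCast_self]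
      have h6 := nsmul_mem hsb (n / b)
      rw [hsmul] at h6
      exact (hkey _).1 h6
    refine ⟨⟨(a, b, s), ham, hbn, hs_le, hdvd⟩, ?_⟩
    dsimp only
    apply le_antisymm
    · rw [AddSubgroup.closure_le]
      rintro x (rfl | rfl)
      · exact (hkey a).2 dvd_rfl
      · exact hsb
    · rintro ⟨x, y⟩ hxy
      have hy : y ∈ AddSubgroup.closure {(b : ZMod n)} := by
        rw [← hb]
        exact AddSubgroup.mem_map.2 ⟨(x, y), hxy, rfl⟩
      rw [AddSubgroup.mem_closure_singleton] at hy
      obtain ⟨j, hj⟩ := hy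
      have h7 : ((x, y) - j • ((s : ZMod m), (b : ZMod n))) ∈ H :=
        sub_mem hxy (zsmul_mem hsb j)
      have h8 : (x, y) - j • ((s : ZMod m), (b : ZMod n)) =
          (x - j • (s : ZMod m), (0 : ZMod n)) := by
        rw [Prod.smul_mk, Prod.mk_sub_mk, hj, sub_self]
      rw [h8] at h7
      have h9 : x - j • (s : ZMod m) ∈ AddSubgroup.closure {(a : ZMod m)} := (hkey' _).1 h7
      rw [AddSubgroup.mem_closure_singleton] at h9
      obtain ⟨i, hi⟩ := h9
      rw [mem_V_iff]
      refine ⟨i, j, ?_, ?_⟩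
      · show i • (a : ZMod m) + j • (s : ZMod m) = x
        rw [hi]
        abel
      · exact hj
end

section
/- Let (G,+) be a finite Abelian group, q ∈ ℕ+, H a subgroup of G, d a positive divisor of q, and α ∈ G with (q/d)·α ∈ H. Then the set V_{H,α,d} = {(k·α + β, k·d mod q) : 0 ≤ k ≤ q/d − 1, β ∈ H} is a subgroup of G × ℤ_q of order (q/d)·|H|. -/
/-- For a finite Abelian group `G`, `q ∈ ℕ+`, `H ≤ G`, `d ∣ q` and `α ∈ G` with
`(q/d)·α ∈ H`, the set `V_{H,α,d} = {(k·α + β, k·d) : 0 ≤ k ≤ q/d - 1, β ∈ H}` is a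
subgroup of `G × ℤ_q` of order `(q/d)·|H|`. -/
theorem subgroup_VHad {G : Type*} [AddCommGroup G] [Fintype G] (q : ℕ) (hq : 0 < q)
    (H : AddSubgroup G) (d : ℕ) (hd : d ∣ q) (α : G) (hα : (q / d) • α ∈ H) :
    ∃ V : AddSubgroup (G × ZMod q),
      (V : Set (G × ZMod q)) =
        {p : G × ZMod q | ∃ k : ℕ, k ≤ q / d - 1 ∧ ∃ β ∈ H,
          p = (k • α + β, ((k * d : ℕ) : ZMod q))} ∧
      Nat.card V = (q / d) * Nat.card H := by
  have hd0 : 0 < d := Nat.pos_of_dvd_of_pos hd hq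
  set m := q / d with hm
  have hmd : m * d = q := Nat.div_mul_cancel hd
  have hm0 : 0 < m := Nat.div_pos (Nat.le_of_dvd hq hd) hd0
  set S : Set (G × ZMod q) :=
    {p : G × ZMod q | ∃ k : ℕ, k ≤ m - 1 ∧ ∃ β ∈ H,
      p = (k • α + β, ((k * d : ℕ) : ZMod q))} with hS
  have hmem : ∀ p : G × ZMod q, p ∈ S ↔
      ∃ k : ℕ, k < m ∧ ∃ β ∈ H, p = (k • α + β, ((k * d : ℕ) : ZMod q)) := by
    intro p
    have : ∀ k : ℕ, k ≤ m - 1 ↔ k < m := fun k => Nat.le_sub_one_iff_lt hm0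
    simp only [hS, Set.mem_setOf_eq, this]
  -- reduction of the second coordinate by q
  have hcast : ∀ k : ℕ, (((k + m) * d : ℕ) : ZMod q) = ((k * d : ℕ) : ZMod q) := by
    intro k
    have h : (k + m) * d = k * d + q := by rw [add_mul, hmd]
    rw [h]
    push_cast
    simp [ZMod.natCast_self]
  have hzero : (0 : G × ZMod q) ∈ S := by
    rw [hmem]
    exact ⟨0, hm0, 0, H.zero_mem, by ext <;> simp⟩
  have hadd : ∀ a b : G × ZMod q, a ∈ S → b ∈ S → a + b ∈ S := by
    intro a b ha hb
    rw [hmem] at ha hb ⊢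
    obtain ⟨k₁, hk₁, β₁, hβ₁, rfl⟩ := ha
    obtain ⟨k₂, hk₂, β₂, hβ₂, rfl⟩ := hb
    rcases lt_or_ge (k₁ + k₂) m with h | h
    · refine ⟨k₁ + k₂, h, β₁ + β₂, H.add_mem hβ₁ hβ₂, ?_⟩
      simp only [Prod.mk_add_mk, Prod.mk.injEq]
      constructor
      · rw [add_smul]; abel
      · push_cast [add_mul]; ring
    · refine ⟨k₁ + k₂ - m, by omega, β₁ + β₂ + m • α, H.add_mem (H.add_mem hβ₁ hβ₂) hα, ?_⟩
      have hk : k₁ + k₂ = (k₁ + k₂ - m) + m := by omega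
      simp only [Prod.mk_add_mk, Prod.mk.injEq]
      constructor
      · calc k₁ • α + β₁ + (k₂ • α + β₂)
            = (k₁ + k₂) • α + (β₁ + β₂) := by rw [add_smul]; abel
          _ = ((k₁ + k₂ - m) + m) • α + (β₁ + β₂) := by rw [← hk]
          _ = (k₁ + k₂ - m) • α + (β₁ + β₂ + m • α) := by rw [add_smul]; abel
      · rw [← hcast (k₁ + k₂ - m), ← hk]
        push_cast [add_mul]; ring
  have hneg : ∀ a : G × ZMod q, a ∈ S → -a ∈ S := by
    intro a ha
    rw [hmem] at ha ⊢
    obtain ⟨k, hk, β, hβ, rfl⟩ := ha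
    rcases Nat.eq_zero_or_pos k with rfl | hk0
    · exact ⟨0, hm0, -β, H.neg_mem hβ, by simp⟩
    · refine ⟨m - k, by omega, -β - m • α, H.sub_mem (H.neg_mem hβ) hα, ?_⟩
      simp only [Prod.neg_mk, Prod.mk.injEq]
      have h2 : k • α + (m - k) • α = m • α := by
        rw [← add_smul]; congr 1; omega
      constructor
      · rw [sub_eq_add_neg, ← h2]; abel
      · have h4 : k * d ≤ q := by
          calc k * d ≤ m * d := Nat.mul_le_mul_right d (le_of_lt hk)
            _ = q := hmd
        have h5 : (m - k) * d + k * d = q := by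
          rw [Nat.sub_mul, hmd]; omega
        have h6 : (((m - k) * d : ℕ) : ZMod q) + ((k * d : ℕ) : ZMod q) = 0 := by
          rw [← Nat.cast_add, h5, ZMod.natCast_self]
        exact neg_eq_of_add_eq_zero_left h6
  refine ⟨{ carrier := S, zero_mem' := hzero,
            add_mem' := fun ha hb => hadd _ _ ha hb,
            neg_mem' := fun ha => hneg _ ha }, rfl, ?_⟩
  set V : AddSubgroup (G × ZMod q) :=
    { carrier := S, zero_mem' := hzero,
      add_mem' := fun ha hb => hadd _ _ ha hb,
      neg_mem' := fun ha => hneg _ ha } with hV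
  have hVmem : ∀ p : G × ZMod q, p ∈ V ↔ p ∈ S := fun p => Iff.rfl
  have hlt : ∀ k : ℕ, k < m → k * d < q := by
    intro k hkm
    calc k * d < m * d := (Nat.mul_lt_mul_right hd0).mpr hkm
      _ = q := hmd
  have hf : ∀ x : Fin m × H,
      ((x.1 : ℕ) • α + (x.2 : G), (((x.1 : ℕ) * d : ℕ) : ZMod q)) ∈ V := by
    intro x
    rw [hVmem, hmem]
    exact ⟨x.1, x.1.2, x.2, x.2.2, rfl⟩
  have hb : Function.Bijective (fun x : Fin m × H =>
      (⟨((x.1 : ℕ) • α + (x.2 : G), (((x.1 : ℕ) * d : ℕ) : ZMod q)), hf x⟩ : V)) := by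
    constructor
    · rintro ⟨k₁, β₁⟩ ⟨k₂, β₂⟩ hxy
      simp only [Subtype.mk.injEq, Prod.mk.injEq] at hxy
      have hk : (k₁ : ℕ) = (k₂ : ℕ) := by
        have h1 := hxy.2
        have v1 : (((k₁ : ℕ) * d : ℕ) : ZMod q).val = (k₁ : ℕ) * d :=
          ZMod.val_cast_of_lt (hlt _ k₁.2)
        have v2 : (((k₂ : ℕ) * d : ℕ) : ZMod q).val = (k₂ : ℕ) * d :=
          ZMod.val_cast_of_lt (hlt _ k₂.2)
        have : (k₁ : ℕ) * d = (k₂ : ℕ) * d := by rw [← v1, ← v2, h1]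
        exact Nat.eq_of_mul_eq_mul_right hd0 this
      have hβ : (β₁ : G) = (β₂ : G) := by
        have := hxy.1
        rw [hk] at this
        exact add_left_cancel this
      exact Prod.ext (Fin.ext hk) (Subtype.ext hβ)
    · rintro ⟨p, hp⟩
      rw [hVmem, hmem] at hp
      obtain ⟨k, hkm, β, hβ, rfl⟩ := hp
      exact ⟨(⟨k, hkm⟩, ⟨β, hβ⟩), rfl⟩
  rw [← Nat.card_eq_of_bijective _ hb, Nat.card_prod]
  simp
end

section
/- Let (G,+) be a finite Abelian group and q ∈ ℕ+. For every subgroup V of G × ℤ_q there exist a unique positive divisor d of q, a unique subgroup H of G, and an element α ∈ G, unique modulo H, such that (q/d)·α ∈ H and V = {(k·α + β, k·d mod q) : 0 ≤ k ≤ q/d − 1, β ∈ H}. Consequently, if for each subgroup H of G a transversal S_H of the cosets of H in G is fixed, the map (H, α, d) ↦ V_{H,α,d} is a bijection between the set I_{G,q} = {(H, α, d) : H ≤ G, α ∈ S_H, d ∣ q, (q/d)·α ∈ H} and the set of all subgroups of G × ℤ_q. -/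
open AddSubgroup

namespace SPZAux

variable {G : Type*} [AddCommGroup G]

/-- The candidate subgroup. -/
def W (q : ℕ) (H : AddSubgroup G) (α : G) (d : ℕ) : AddSubgroup (G × ZMod q) :=
  zmultiples (α, ((d : ℕ) : ZMod q)) ⊔ H.map (AddMonoidHom.inl G (ZMod q))

/-- The candidate set. -/
def VS (q : ℕ) (H : AddSubgroup G) (α : G) (d : ℕ) : Set (G × ZMod q) :=
  {p : G × ZMod q | ∃ k : ℕ, k ≤ q / d - 1 ∧ ∃ β ∈ H,
    p = (k • α + β, ((k * d : ℕ) : ZMod q))}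

lemma hksmul (q d k : ℕ) : k • ((d : ℕ) : ZMod q) = ((k * d : ℕ) : ZMod q) := by
  rw [nsmul_eq_mul, Nat.cast_mul]

lemma hmd (q d : ℕ) (hd : d ∣ q) : (q / d) • ((d : ℕ) : ZMod q) = 0 := by
  rw [nsmul_eq_mul, ← Nat.cast_mul, Nat.div_mul_cancel hd, ZMod.natCast_self]

lemma coe_W (q : ℕ) (hq : 0 < q) (H : AddSubgroup G) (α : G) (d : ℕ)
    (hd : d ∣ q) (hα : (q / d) • α ∈ H) :
    ((W q H α d : AddSubgroup (G × ZMod q)) : Set (G × ZMod q)) = VS q H α d := by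
  have hd0 : 0 < d := Nat.pos_of_dvd_of_pos hd hq
  set m := q / d with hm
  have hm0 : 0 < m := Nat.div_pos (Nat.le_of_dvd hq hd) hd0
  have hmP : (m : ℕ) • (α, ((d : ℕ) : ZMod q)) = ((m • α : G), (0 : ZMod q)) := by
    rw [Prod.smul_mk, hmd q d hd]
  ext p
  simp only [W, SetLike.mem_coe, mem_sup, mem_zmultiples_iff, AddSubgroup.mem_map,
    AddMonoidHom.inl_apply, VS, Set.mem_setOf_eq]
  constructor
  · rintro ⟨y, ⟨n, rfl⟩, z, ⟨β, hβ, rfl⟩, rfl⟩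
    have hmz : ((m : ℤ)) ≠ 0 := by exact_mod_cast hm0.ne'
    have hmod := Int.emod_nonneg n hmz
    set k := (n % (m : ℤ)).toNat with hkdef
    have hk : (k : ℤ) = n % (m : ℤ) := Int.toNat_of_nonneg hmod
    have hklt : k < m := by
      have := Int.emod_lt_of_pos n (by exact_mod_cast hm0 : (0:ℤ) < (m:ℤ))
      omega
    have key : n • (α, ((d : ℕ) : ZMod q))
        = (n / (m : ℤ)) • ((m : ℕ) • (α, ((d : ℕ) : ZMod q)))
          + (k : ℕ) • (α, ((d : ℕ) : ZMod q)) := by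
      rw [← natCast_zsmul _ m, ← mul_zsmul, ← natCast_zsmul _ k, hk, ← add_zsmul,
        Int.ediv_mul_add_emod]
    refine ⟨k, Nat.le_pred_of_lt hklt, (n / (m : ℤ)) • ((m : ℕ) • α) + β,
      add_mem (zsmul_mem hα _) hβ, ?_⟩
    rw [key, hmP, Prod.smul_mk, Prod.smul_mk, smul_zero, hksmul]
    refine Prod.ext ?_ ?_
    · show (n / (m : ℤ)) • m • α + k • α + β = k • α + ((n / (m : ℤ)) • m • α + β)
      abel
    · show 0 + ((k * d : ℕ) : ZMod q) + 0 = ((k * d : ℕ) : ZMod q)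
      rw [zero_add, add_zero]
  · rintro ⟨k, hk, β, hβ, rfl⟩
    refine ⟨(k : ℕ) • (α, ((d : ℕ) : ZMod q)), ⟨(k : ℤ), by rw [natCast_zsmul]⟩,
      (β, 0), ⟨β, hβ, rfl⟩, ?_⟩
    rw [Prod.smul_mk, hksmul, Prod.mk_add_mk, add_zero]


lemma exists_rep (q : ℕ) (hq : 0 < q) (V : AddSubgroup (G × ZMod q)) :
    ∃ (d : ℕ) (H : AddSubgroup G) (α : G), d ∣ q ∧ (q / d) • α ∈ H ∧ V = W q H α d := by
  haveI : NeZero q := ⟨hq.ne'⟩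
  set D' : AddSubgroup ℤ :=
    (V.map (AddMonoidHom.snd G (ZMod q))).comap (Int.castAddHom (ZMod q)) with hD'
  have hmemD' : ∀ n : ℤ, n ∈ D' ↔ ((n : ZMod q)) ∈ V.map (AddMonoidHom.snd G (ZMod q)) := by
    intro n; rfl
  obtain ⟨a, ha⟩ := Int.subgroup_cyclic D'
  set d := a.natAbs with hddef
  have hqD : (q : ℤ) ∈ D' := by
    rw [hmemD']
    have : (((q : ℤ) : ZMod q)) = 0 := by push_cast; exact ZMod.natCast_self q
    rw [this]; exact zero_mem _
  have hadvd : ∀ n : ℤ, n ∈ D' → a ∣ n := by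
    intro n hn
    rw [ha, mem_closure_singleton] at hn
    obtain ⟨z, hz⟩ := hn
    exact ⟨z, by rw [← hz, smul_eq_mul, mul_comm]⟩
  have hdq : d ∣ q := by
    have := hadvd _ hqD
    have h2 : a.natAbs ∣ (q : ℤ).natAbs := Int.natAbs_dvd_natAbs.mpr this
    rwa [Int.natAbs_natCast] at h2
  have hd0 : 0 < d := Nat.pos_of_dvd_of_pos hdq hq
  have hdD' : (d : ℤ) ∈ D' := by
    rw [ha, mem_closure_singleton]
    rcases Int.natAbs_eq a with h | h
    · exact ⟨1, by rw [one_zsmul, ← h]⟩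
    · exact ⟨-1, by rw [neg_one_zsmul, h, hddef, neg_neg]⟩
  rw [hmemD'] at hdD'
  obtain ⟨p0, hp0V, hp02⟩ := hdD'
  have hαV : (p0.1, ((d : ℕ) : ZMod q)) ∈ V := by
    have : ((d : ℤ) : ZMod q) = ((d : ℕ) : ZMod q) := by push_cast; rfl
    rw [← this, ← hp02]
    simpa using hp0V
  set α := p0.1
  set H : AddSubgroup G := V.comap (AddMonoidHom.inl G (ZMod q)) with hHdef
  have hmemH : ∀ g : G, g ∈ H ↔ ((g, (0 : ZMod q)) ∈ V) := fun g => Iff.rfl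
  refine ⟨d, H, α, hdq, ?_, ?_⟩
  · rw [hmemH]
    have := nsmul_mem hαV (q / d)
    rwa [Prod.smul_mk, hmd q d hdq] at this
  · apply le_antisymm
    · intro p hp
      have hx : ((p.2.val : ℤ)) ∈ D' := by
        rw [hmemD']
        have : ((p.2.val : ℤ) : ZMod q) = p.2 := by
          push_cast; exact ZMod.natCast_rightInverse p.2
        rw [this]
        exact ⟨p, hp, rfl⟩
      have hdvd : d ∣ p.2.val := by
        have := hadvd _ hx
        have h2 : a.natAbs ∣ ((p.2.val : ℤ)).natAbs := Int.natAbs_dvd_natAbs.mpr this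
        rwa [Int.natAbs_natCast] at h2
      set k := p.2.val / d with hkdef
      have hkd : k * d = p.2.val := Nat.div_mul_cancel hdvd
      have hsnd : ((k * d : ℕ) : ZMod q) = p.2 := by
        rw [hkd]; exact ZMod.natCast_rightInverse p.2
      have h3 : (p.1 - k • α, (0 : ZMod q)) ∈ V := by
        have hs := sub_mem hp (nsmul_mem hαV k)
        have : p - k • (α, ((d : ℕ) : ZMod q)) = (p.1 - k • α, (0 : ZMod q)) := by
          rw [Prod.smul_mk]
          refine Prod.ext rfl ?_
          show p.2 - k • ((d : ℕ) : ZMod q) = 0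
          rw [hksmul, hsnd, sub_self]
        rwa [this] at hs
      have : p = k • (α, ((d : ℕ) : ZMod q)) + (p.1 - k • α, (0 : ZMod q)) := by
        rw [Prod.smul_mk, Prod.mk_add_mk, hksmul, hsnd, add_zero]
        refine Prod.ext ?_ rfl
        show p.1 = k • α + (p.1 - k • α)
        abel
      rw [this, W, mem_sup]
      refine ⟨k • (α, ((d : ℕ) : ZMod q)), nsmul_mem (mem_zmultiples _) k,
        (p.1 - k • α, (0 : ZMod q)), ⟨p.1 - k • α, h3, rfl⟩, rfl⟩
    · rw [W, sup_le_iff]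
      constructor
      · rw [zmultiples_le]
        exact hαV
      · rw [map_le_iff_le_comap]

lemma dvd_helper (q d d' k : ℕ) (hd' : d' ∣ q)
    (h : ((d : ℕ) : ZMod q) = ((k * d' : ℕ) : ZMod q)) : d' ∣ d := by
  have h1 : d ≡ k * d' [MOD q] := (ZMod.natCast_eq_natCast_iff d (k * d') q).mp h
  have h2 : d ≡ k * d' [MOD d'] := Nat.ModEq.of_dvd hd' h1
  have h3 : k * d' ≡ 0 [MOD d'] := Nat.modEq_zero_iff_dvd.mpr ⟨k, mul_comm _ _⟩
  exact Nat.modEq_zero_iff_dvd.mp (h2.trans h3)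

lemma mem_zero (q d : ℕ) (H : AddSubgroup G) (α : G) (g : G) (hg : g ∈ H) :
    ((g, (0 : ZMod q)) : G × ZMod q) ∈ VS q H α d :=
  ⟨0, Nat.zero_le _, g, hg, by simp⟩

lemma mem_one (q d : ℕ) (H : AddSubgroup G) (α : G) (h2 : 2 ≤ q / d) :
    ((α, ((1 * d : ℕ) : ZMod q)) : G × ZMod q) ∈ VS q H α d :=
  ⟨1, by omega, 0, zero_mem _, by simp⟩

lemma kd_lt (q d k : ℕ) (hq : 0 < q) (hd : d ∣ q) (hk : k ≤ q / d - 1) : k * d < q := by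
  have hd0 : 0 < d := Nat.pos_of_dvd_of_pos hd hq
  have h5 : q / d * d = q := Nat.div_mul_cancel hd
  have h6 : 1 ≤ q / d := (Nat.one_le_div_iff hd0).mpr (Nat.le_of_dvd hq hd)
  calc k * d ≤ (q / d - 1) * d := Nat.mul_le_mul_right _ hk
    _ = q - d := by rw [Nat.sub_mul, one_mul, h5]
    _ < q := by omega

lemma H_sub (q : ℕ) (hq : 0 < q) (d d' : ℕ) (H H' : AddSubgroup G) (α α' : G)
    (hd' : d' ∣ q) (hsub : VS q H α d ⊆ VS q H' α' d') : H ≤ H' := by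
  haveI : NeZero q := ⟨hq.ne'⟩
  have hd'0 : 0 < d' := Nat.pos_of_dvd_of_pos hd' hq
  intro g hg
  obtain ⟨k, hk, β, hβ, heq⟩ := hsub (mem_zero q d H α g hg)
  have h2 : ((k * d' : ℕ) : ZMod q) = 0 := (congrArg Prod.snd heq).symm
  have h3 : q ∣ k * d' := (ZMod.natCast_eq_zero_iff _ q).mp h2
  have hk0 : k * d' = 0 := Nat.eq_zero_of_dvd_of_lt h3 (kd_lt q d' k hq hd' hk)
  have hkz : k = 0 := by
    rcases Nat.mul_eq_zero.mp hk0 with h | h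
    · exact h
    · omega
  have h7 : g = k • α' + β := congrArg Prod.fst heq
  rw [hkz, zero_nsmul, zero_add] at h7
  rw [h7]; exact hβ

lemma d_dvd (q : ℕ) (hq : 0 < q) (d d' : ℕ) (H H' : AddSubgroup G) (α α' : G)
    (hd : d ∣ q) (hd' : d' ∣ q) (hsub : VS q H α d ⊆ VS q H' α' d') : d' ∣ d := by
  have hd0 : 0 < d := Nat.pos_of_dvd_of_pos hd hq
  by_cases h2 : 2 ≤ q / d
  · obtain ⟨k, hk, β, hβ, heq⟩ := hsub (mem_one q d H α h2)
    have h3 : ((1 * d : ℕ) : ZMod q) = ((k * d' : ℕ) : ZMod q) := congrArg Prod.snd heq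
    rw [one_mul] at h3
    exact dvd_helper q d d' k hd' h3
  · have h6 : 1 ≤ q / d := (Nat.one_le_div_iff hd0).mpr (Nat.le_of_dvd hq hd)
    have h1 : q / d = 1 := by omega
    have hdq : d = q := by
      have h5 : q / d * d = q := Nat.div_mul_cancel hd
      rw [h1, one_mul] at h5; exact h5
    apply dvd_helper q d d' 0 hd'
    rw [hdq]
    simp [ZMod.natCast_self]

lemma uniq (q : ℕ) (hq : 0 < q) (d d' : ℕ) (H H' : AddSubgroup G) (α α' : G)
    (hd : d ∣ q) (hd' : d' ∣ q) (hα : (q / d) • α ∈ H) (hα' : (q / d') • α' ∈ H')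
    (hset : VS q H α d = VS q H' α' d') : d = d' ∧ H = H' ∧ α - α' ∈ H := by
  haveI : NeZero q := ⟨hq.ne'⟩
  have e1 : d = d' := Nat.dvd_antisymm
    (d_dvd q hq d' d H' H α' α hd' hd hset.symm.subset)
    (d_dvd q hq d d' H H' α α' hd hd' hset.subset)
  have e2 : H = H' := le_antisymm
    (H_sub q hq d d' H H' α α' hd' hset.subset)
    (H_sub q hq d' d H' H α' α hd hset.symm.subset)
  subst e1; subst e2
  refine ⟨rfl, rfl, ?_⟩
  have hd0 : 0 < d := Nat.pos_of_dvd_of_pos hd hq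
  by_cases h2 : 2 ≤ q / d
  · obtain ⟨k, hk, β, hβ, heq⟩ := hset.subset (mem_one q d H α h2)
    have h3 : ((1 * d : ℕ) : ZMod q) = ((k * d : ℕ) : ZMod q) := congrArg Prod.snd heq
    have h4 : (1 * d) % q = (k * d) % q := (ZMod.natCast_eq_natCast_iff _ _ q).mp h3
    have hlt1 : 1 * d < q := by
      have h5 : q / d * d = q := Nat.div_mul_cancel hd
      have : 2 * d ≤ q / d * d := Nat.mul_le_mul_right _ h2
      omega
    have hlt2 : k * d < q := kd_lt q d k hq hd hk
    rw [Nat.mod_eq_of_lt hlt1, Nat.mod_eq_of_lt hlt2] at h4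
    have hk1 : 1 = k := Nat.eq_of_mul_eq_mul_right hd0 h4
    have h7 : α = k • α' + β := congrArg Prod.fst heq
    rw [← hk1, one_nsmul] at h7
    have : α - α' = β := by rw [h7]; abel
    rw [this]; exact hβ
  · have h6 : 1 ≤ q / d := (Nat.one_le_div_iff hd0).mpr (Nat.le_of_dvd hq hd)
    have h1 : q / d = 1 := by omega
    rw [h1, one_nsmul] at hα hα'
    exact sub_mem hα hα'

lemma W_congr (q d : ℕ) (H : AddSubgroup G) (α y : G) (h : α - y ∈ H) :
    W q H α d = W q H y d := by
  have key : ∀ a b : G, a - b ∈ H → W q H a d ≤ W q H b d := by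
    intro a b hab
    rw [W, sup_le_iff]
    constructor
    · rw [zmultiples_le]
      have h1 : ((a, ((d : ℕ) : ZMod q)) : G × ZMod q)
          = (b, ((d : ℕ) : ZMod q)) + (a - b, 0) := by
        rw [Prod.mk_add_mk, add_zero]
        refine Prod.ext ?_ rfl
        show a = b + (a - b)
        abel
      rw [W, h1]
      exact add_mem (mem_sup_left (mem_zmultiples _)) (mem_sup_right ⟨a - b, hab, rfl⟩)
    · rw [W]
      exact le_sup_right
  exact le_antisymm (key α y h) (key y α (by rw [← neg_sub]; exact neg_mem h))

end SPZAux


/-- Every subgroup `V` of `G × ℤ_q` arises as `V_{H,α,d}` for a unique divisor `d ∣ q`,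
a unique subgroup `H ≤ G` and an element `α ∈ G` unique modulo `H` with `(q/d)·α ∈ H`;
consequently, fixing a transversal `S H` of the cosets of each subgroup `H` of `G`,
the map `(H,α,d) ↦ V_{H,α,d}` is a bijection between
`I_{G,q} = {(H,α,d) : H ≤ G, α ∈ S H, d ∣ q, (q/d)·α ∈ H}` and the set of subgroups of
`G × ℤ_q`. -/
theorem subgroups_of_prod_zmod {G : Type*} [AddCommGroup G] [Fintype G] (q : ℕ) (hq : 0 < q)
    (S : AddSubgroup G → Set G)
    (hS : ∀ H : AddSubgroup G, ∀ x : G, ∃! y, y ∈ S H ∧ x - y ∈ H) :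
    (∀ V : AddSubgroup (G × ZMod q),
      ∃ (d : ℕ) (H : AddSubgroup G) (α : G), d ∣ q ∧ (q / d) • α ∈ H ∧
        (V : Set (G × ZMod q)) =
          {p : G × ZMod q | ∃ k : ℕ, k ≤ q / d - 1 ∧ ∃ β ∈ H,
            p = (k • α + β, ((k * d : ℕ) : ZMod q))} ∧
        ∀ (d' : ℕ) (H' : AddSubgroup G) (α' : G), d' ∣ q → (q / d') • α' ∈ H' →
          (V : Set (G × ZMod q)) =
            {p : G × ZMod q | ∃ k : ℕ, k ≤ q / d' - 1 ∧ ∃ β ∈ H',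
              p = (k • α' + β, ((k * d' : ℕ) : ZMod q))} →
          d' = d ∧ H' = H ∧ α' - α ∈ H) ∧
    (∃ f : {x : AddSubgroup G × G × ℕ //
        x.2.1 ∈ S x.1 ∧ x.2.2 ∣ q ∧ (q / x.2.2) • x.2.1 ∈ x.1} →
          AddSubgroup (G × ZMod q),
      Function.Bijective f ∧
      ∀ x, ((f x : AddSubgroup (G × ZMod q)) : Set (G × ZMod q)) =
        {p : G × ZMod q | ∃ k : ℕ, k ≤ q / x.1.2.2 - 1 ∧ ∃ β ∈ x.1.1,
          p = (k • x.1.2.1 + β, ((k * x.1.2.2 : ℕ) : ZMod q))}) := by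
  constructor
  · intro V
    obtain ⟨d, H, α, hdq, hα, hV⟩ := SPZAux.exists_rep q hq V
    have hcoe : (V : Set (G × ZMod q)) = SPZAux.VS q H α d := by
      rw [hV]; exact SPZAux.coe_W q hq H α d hdq hα
    refine ⟨d, H, α, hdq, hα, hcoe, ?_⟩
    intro d' H' α' hd' hα' hcoe'
    have hset : SPZAux.VS q H' α' d' = SPZAux.VS q H α d := hcoe'.symm.trans hcoe
    obtain ⟨e1, e2, e3⟩ := SPZAux.uniq q hq d' d H' H α' α hd' hdq hα' hα hset
    exact ⟨e1, e2, e2 ▸ e3⟩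
  · refine ⟨fun x => SPZAux.W q x.1.1 x.1.2.1 x.1.2.2, ⟨?_, ?_⟩, ?_⟩
    · rintro ⟨⟨H, α, d⟩, hS1, hd, hα⟩ ⟨⟨H', α', d'⟩, hS1', hd', hα'⟩ hf
      simp only at hf hS1 hd hα hS1' hd' hα'
      have hset : SPZAux.VS q H α d = SPZAux.VS q H' α' d' := by
        rw [← SPZAux.coe_W q hq H α d hd hα, ← SPZAux.coe_W q hq H' α' d' hd' hα', hf]
      obtain ⟨e1, e2, e3⟩ := SPZAux.uniq q hq d d' H H' α α' hd hd' hα hα' hset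
      subst e1; subst e2
      have hαα : α = α' := by
        obtain ⟨z, _, hu⟩ := hS H α
        have h1 : α = z := hu α ⟨hS1, by rw [sub_self]; exact zero_mem _⟩
        have h2 : α' = z := hu α' ⟨hS1', e3⟩
        rw [h1, h2]
      subst hαα
      rfl
    · intro V
      obtain ⟨d, H, α, hdq, hα, hV⟩ := SPZAux.exists_rep q hq V
      obtain ⟨y, ⟨hyS, hyH⟩, _⟩ := hS H α
      have hyα : (q / d) • y ∈ H := by
        have h1 := nsmul_mem hyH (q / d)
        rw [smul_sub] at h1
        have h2 := sub_mem hα h1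
        rwa [sub_sub_cancel] at h2
      refine ⟨⟨(H, y, d), hyS, hdq, hyα⟩, ?_⟩
      show SPZAux.W q H y d = V
      rw [hV]
      exact (SPZAux.W_congr q d H α y hyH).symm
    · intro x
      exact SPZAux.coe_W q hq _ _ _ x.2.2.1 x.2.2.2
end

section
/- Let m, n, r ∈ ℕ+ and let a ∣ m, b ∣ n, c ∣ r. Set A = gcd(a, n/b), B = gcd(b, r/c), C = gcd(a, r/c), X = ABC / gcd(a·(r/c), ABC). Let t with 0 ≤ t ≤ A−1 and s = a·t/A; let w with 0 ≤ w ≤ B·gcd(t,X)/X − 1 and v = b·X·w/(B·gcd(t,X)); let u₀ be a solution of the linear congruence (r/c)·u ≡ r·v·s/(b·c) (mod a), and let u = u₀ + a·z/C with 0 ≤ z ≤ C−1. Then the set U_{a,b,c,t,w,z} = {(i·a + j·s + k·u mod m, j·b + k·v mod n, k·c mod r) : 0 ≤ i ≤ m/a − 1, 0 ≤ j ≤ n/b − 1, 0 ≤ k ≤ r/c − 1}, i.e. the subgroup of ℤ_m × ℤ_n × ℤ_r generated by (a,0,0), (s,b,0), (u,v,c), is a subgroup of ℤ_m × ℤ_n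 × ℤ_r of order mnr/(abc). -/
/-- With `a ∣ m`, `b ∣ n`, `c ∣ r`, `A = gcd(a, n/b)`, `B = gcd(b, r/c)`, `C = gcd(a, r/c)`,
`X = ABC / gcd(a·(r/c), ABC)`, `s = a·t/A` (`0 ≤ t ≤ A-1`),
`v = b·X·w/(B·gcd(t,X))` (`0 ≤ w ≤ B·gcd(t,X)/X - 1`), `u₀` a solution of
`(r/c)·u ≡ r·v·s/(b·c) (mod a)` and `u = u₀ + a·z/C` (`0 ≤ z ≤ C-1`), the subgroup
`U_{a,b,c,t,w,z}` of `ℤ_m × ℤ_n × ℤ_r` generated by `(a,0,0)`, `(s,b,0)`, `(u,v,c)` is the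
set `{(i·a + j·s + k·u, j·b + k·v, k·c)}` and has order `mnr/(abc)`. -/
theorem subgroup_Uabctzw (m n r : ℕ) (hm : 0 < m) (hn : 0 < n) (hr : 0 < r)
    (a b c : ℕ) (ha : a ∣ m) (hb : b ∣ n) (hc : c ∣ r)
    (A B C X : ℕ) (hA : A = Nat.gcd a (n / b)) (hB : B = Nat.gcd b (r / c))
    (hC : C = Nat.gcd a (r / c))
    (hX : X = A * B * C / Nat.gcd (a * (r / c)) (A * B * C))
    (t : ℕ) (ht : t ≤ A - 1) (s : ℕ) (hs : s = a * t / A)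
    (w : ℕ) (hw : w ≤ B * Nat.gcd t X / X - 1)
    (v : ℕ) (hv : v = b * X * w / (B * Nat.gcd t X))
    (u₀ : ℕ) (hu₀ : (r / c) * u₀ ≡ r * v * s / (b * c) [MOD a])
    (z : ℕ) (hz : z ≤ C - 1) (u : ℕ) (hu : u = u₀ + a * z / C) :
    ((AddSubgroup.closure
        {((a : ZMod m), (0 : ZMod n), (0 : ZMod r)),
         ((s : ZMod m), (b : ZMod n), (0 : ZMod r)),
         ((u : ZMod m), (v : ZMod n), (c : ZMod r))} :
        AddSubgroup (ZMod m × ZMod n × ZMod r)) : Set (ZMod m × ZMod n × ZMod r)) =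
      {p : ZMod m × ZMod n × ZMod r | ∃ i j k : ℕ,
        i ≤ m / a - 1 ∧ j ≤ n / b - 1 ∧ k ≤ r / c - 1 ∧
        p = (((i * a + j * s + k * u : ℕ) : ZMod m), ((j * b + k * v : ℕ) : ZMod n),
             ((k * c : ℕ) : ZMod r))} ∧
    Nat.card (AddSubgroup.closure
        {((a : ZMod m), (0 : ZMod n), (0 : ZMod r)),
         ((s : ZMod m), (b : ZMod n), (0 : ZMod r)),
         ((u : ZMod m), (v : ZMod n), (c : ZMod r))} :
        AddSubgroup (ZMod m × ZMod n × ZMod r)) = m * n * r / (a * b * c) := by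
  have ha0 : 0 < a := Nat.pos_of_dvd_of_pos ha hm
  have hb0 : 0 < b := Nat.pos_of_dvd_of_pos hb hn
  have hc0 : 0 < c := Nat.pos_of_dvd_of_pos hc hr
  set N := m / a with hN
  set P := n / b with hP
  set Q := r / c with hQdef
  have hN0 : 0 < N := Nat.div_pos (Nat.le_of_dvd hm ha) ha0
  have hP0 : 0 < P := Nat.div_pos (Nat.le_of_dvd hn hb) hb0
  have hQ0 : 0 < Q := Nat.div_pos (Nat.le_of_dvd hr hc) hc0
  have hmN : a * N = m := Nat.mul_div_cancel' ha
  have hnP : b * P = n := Nat.mul_div_cancel' hb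
  have hrQ : c * Q = r := Nat.mul_div_cancel' hc
  have hA0 : 0 < A := by rw [hA]; exact Nat.gcd_pos_of_pos_left _ ha0
  have hAa : A ∣ a := hA ▸ Nat.gcd_dvd_left _ _
  have hAP : A ∣ P := hA ▸ Nat.gcd_dvd_right _ _
  have hB0 : 0 < B := by rw [hB]; exact Nat.gcd_pos_of_pos_left _ hb0
  have hBb : B ∣ b := hB ▸ Nat.gcd_dvd_left _ _
  have hBQ : B ∣ Q := hB ▸ Nat.gcd_dvd_right _ _
  have hC0 : 0 < C := by rw [hC]; exact Nat.gcd_pos_of_pos_left _ ha0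
  have hCa : C ∣ a := hC ▸ Nat.gcd_dvd_left _ _
  have hCQ : C ∣ Q := hC ▸ Nat.gcd_dvd_right _ _
  have hABC0 : 0 < A * B * C := by positivity
  have hX0 : 0 < X := by
    rw [hX]
    exact Nat.div_pos (Nat.le_of_dvd hABC0 (Nat.gcd_dvd_right _ _))
      (Nat.gcd_pos_of_pos_right _ hABC0)
  set g := Nat.gcd t X with hg
  have hg0 : 0 < g := Nat.gcd_pos_of_pos_right _ hX0
  have hgX : g ∣ X := Nat.gcd_dvd_right _ _
  have hsA : s * A = a * t := by
    rw [hs]; exact Nat.div_mul_cancel (Dvd.dvd.mul_right hAa t)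
  set t₁ := t * (P / A) with ht₁
  have hPs : P * s = a * t₁ := by
    have h1 : A * (P / A) = P := Nat.mul_div_cancel' hAP
    calc P * s = (A * (P / A)) * s := by rw [h1]
      _ = (P / A) * (s * A) := by ring
      _ = (P / A) * (a * t) := by rw [hsA]
      _ = a * t₁ := by rw [ht₁]; ring
  have hvBg : v * (B * g) = b * X * w := by
    rw [hv]; exact Nat.div_mul_cancel (Dvd.dvd.mul_right (mul_dvd_mul hBb hgX) w)
  set j₀ := (Q / B) * ((X / g) * w) with hj₀
  have hQv : Q * v = b * j₀ := by
    have hBQ' : B * (Q / B) = Q := Nat.mul_div_cancel' hBQ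
    have hgX' : g * (X / g) = X := Nat.mul_div_cancel' hgX
    have key : (Q * v) * (B * g) = (b * j₀) * (B * g) := by
      calc (Q * v) * (B * g) = Q * (v * (B * g)) := by ring
        _ = Q * (b * X * w) := by rw [hvBg]
        _ = b * ((B * (Q / B)) * ((g * (X / g)) * w)) := by rw [hBQ', hgX']; ring
        _ = (b * j₀) * (B * g) := by rw [hj₀]; ring
    exact Nat.eq_of_mul_eq_mul_right (by positivity) key
  have hazC : (a * z / C) * C = a * z := Nat.div_mul_cancel (Dvd.dvd.mul_right hCa z)
  have hQaz : Q * (a * z / C) = a * (z * (Q / C)) := by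
    have hCQ' : C * (Q / C) = Q := Nat.mul_div_cancel' hCQ
    have key : (Q * (a * z / C)) * C = (a * (z * (Q / C))) * C := by
      calc (Q * (a * z / C)) * C = Q * ((a * z / C) * C) := by ring
        _ = Q * (a * z) := by rw [hazC]
        _ = (C * (Q / C)) * (a * z) := by rw [hCQ']
        _ = (a * (z * (Q / C))) * C := by ring
    exact Nat.eq_of_mul_eq_mul_right hC0 key
  have hrvs : r * v * s / (b * c) = j₀ * s := by
    have key : r * v * s = (b * c) * (j₀ * s) := by
      calc r * v * s = (c * Q) * v * s := by rw [hrQ]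
        _ = c * (Q * v) * s := by ring
        _ = c * (b * j₀) * s := by rw [hQv]
        _ = (b * c) * (j₀ * s) := by ring
    rw [key, Nat.mul_div_cancel_left _ (by positivity)]
  have hQu : Q * u ≡ j₀ * s [MOD a] := by
    rw [hu, Nat.mul_add, hQaz]
    calc Q * u₀ + a * (z * (Q / C)) ≡ Q * u₀ + 0 [MOD a] :=
          Nat.ModEq.add_left _ (Nat.modEq_zero_iff_dvd.mpr ⟨_, rfl⟩)
      _ = Q * u₀ := by ring
      _ ≡ j₀ * s [MOD a] := by rw [← hrvs]; exact hu₀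
  obtain ⟨e, he⟩ := hQu.dvd
  -- he : (↑(j₀ * s) : ℤ) - ↑(Q * u) = ↑a * e
  set g1 : ZMod m × ZMod n × ZMod r := ((a : ZMod m), (0 : ZMod n), (0 : ZMod r)) with hg1
  set g2 : ZMod m × ZMod n × ZMod r := ((s : ZMod m), (b : ZMod n), (0 : ZMod r)) with hg2
  set g3 : ZMod m × ZMod n × ZMod r := ((u : ZMod m), (v : ZMod n), (c : ZMod r)) with hg3
  haveI : NeZero m := ⟨hm.ne'⟩
  haveI : NeZero n := ⟨hn.ne'⟩
  haveI : NeZero r := ⟨hr.ne'⟩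
  -- cast relations
  have Hm1 : ((j₀ : ZMod m) * s - (Q : ZMod m) * u) = (a : ZMod m) * (e : ZMod m) := by
    have h := congrArg (fun x : ℤ => (x : ZMod m)) he
    push_cast at h
    convert h using 2
  have Hm2 : (P : ZMod m) * s = (a : ZMod m) * t₁ := by
    have h := congrArg (fun x : ℕ => (x : ZMod m)) hPs
    push_cast at h; exact h
  have Hm3 : (a : ZMod m) * (N : ZMod m) = 0 := by
    have h := congrArg (fun x : ℕ => (x : ZMod m)) hmN
    push_cast at h; rw [h, ZMod.natCast_self]
  have Hn1 : (Q : ZMod n) * v = (b : ZMod n) * j₀ := by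
    have h := congrArg (fun x : ℕ => (x : ZMod n)) hQv
    push_cast at h; exact h
  have Hn2 : (b : ZMod n) * (P : ZMod n) = 0 := by
    have h := congrArg (fun x : ℕ => (x : ZMod n)) hnP
    push_cast at h; rw [h, ZMod.natCast_self]
  have Hr1 : (c : ZMod r) * (Q : ZMod r) = 0 := by
    have h := congrArg (fun x : ℕ => (x : ZMod r)) hrQ
    push_cast at h; rw [h, ZMod.natCast_self]
  -- the combination lemma
  have hcomb : ∀ i j k : ℤ, i • g1 + j • g2 + k • g3 =
      (((i * a + j * s + k * u : ℤ) : ZMod m), ((j * b + k * v : ℤ) : ZMod n),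
        ((k * c : ℤ) : ZMod r)) := by
    intro i j k
    rw [hg1, hg2, hg3]
    refine Prod.ext ?_ (Prod.ext ?_ ?_) <;>
      simp [Prod.smul_def, smul_eq_mul, zsmul_eq_mul] <;> push_cast <;> ring
  have hcombN : ∀ i j k : ℕ, (i : ℤ) • g1 + (j : ℤ) • g2 + (k : ℤ) • g3 =
      (((i * a + j * s + k * u : ℕ) : ZMod m), ((j * b + k * v : ℕ) : ZMod n),
        ((k * c : ℕ) : ZMod r)) := by
    intro i j k
    rw [hcomb]
    refine Prod.ext ?_ (Prod.ext ?_ ?_) <;> push_cast <;> ring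
  -- key relation
  have M : ∀ i j k q p l : ℤ, i • g1 + j • g2 + (k + q * Q) • g3 =
      (i - q * e + p * t₁ + l * N) • g1 + (j + q * j₀ - p * P) • g2 + k • g3 := by
    intro i j k q p l
    rw [hcomb, hcomb]
    refine Prod.ext ?_ (Prod.ext ?_ ?_) <;> push_cast
    · linear_combination (-q : ZMod m) * Hm1 + (p : ZMod m) * Hm2 - (l : ZMod m) * Hm3
    · linear_combination (q : ZMod n) * Hn1 + (p : ZMod n) * Hn2
    · linear_combination (q : ZMod r) * Hr1
  -- reduction
  have hred : ∀ i j k : ℤ, ∃ i' j' k' : ℕ, i' < N ∧ j' < P ∧ k' < Q ∧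
      i • g1 + j • g2 + k • g3 = (i' : ℤ) • g1 + (j' : ℤ) • g2 + (k' : ℤ) • g3 := by
    intro i j k
    have hQZ : (0 : ℤ) < (Q : ℤ) := by exact_mod_cast hQ0
    have hPZ : (0 : ℤ) < (P : ℤ) := by exact_mod_cast hP0
    have hNZ : (0 : ℤ) < (N : ℤ) := by exact_mod_cast hN0
    set q : ℤ := k / Q with hq
    set k₂ : ℤ := k % Q with hk₂
    set p : ℤ := (j + q * j₀) / P with hp
    set j₂ : ℤ := (j + q * j₀) % P with hj₂
    set l : ℤ := -((i - q * e + p * t₁) / N) with hl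
    set i₂ : ℤ := (i - q * e + p * t₁) % N with hi₂
    have hkk : k = k₂ + q * Q := by
      have := Int.emod_add_ediv_mul k (Q : ℤ); rw [hk₂, hq]; linarith
    have hjj : j + q * j₀ - p * P = j₂ := by
      have := Int.emod_add_ediv_mul (j + q * j₀) (P : ℤ); rw [hj₂, hp]; linarith
    have hii : i - q * e + p * t₁ + l * N = i₂ := by
      have := Int.emod_add_ediv_mul (i - q * e + p * t₁) (N : ℤ); rw [hi₂, hl]; linarith
    have hk₂0 : 0 ≤ k₂ := Int.emod_nonneg _ hQZ.ne'
    have hk₂lt : k₂ < Q := Int.emod_lt_of_pos _ hQZ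
    have hj₂0 : 0 ≤ j₂ := Int.emod_nonneg _ hPZ.ne'
    have hj₂lt : j₂ < P := Int.emod_lt_of_pos _ hPZ
    have hi₂0 : 0 ≤ i₂ := Int.emod_nonneg _ hNZ.ne'
    have hi₂lt : i₂ < N := Int.emod_lt_of_pos _ hNZ
    refine ⟨i₂.toNat, j₂.toNat, k₂.toNat, ?_, ?_, ?_, ?_⟩
    · omega
    · omega
    · omega
    · rw [Int.toNat_of_nonneg hi₂0, Int.toNat_of_nonneg hj₂0, Int.toNat_of_nonneg hk₂0]
      rw [hkk]
      rw [M i j k₂ q p l, hjj, hii]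
  -- membership characterization
  have hmem : ∀ x : ZMod m × ZMod n × ZMod r,
      x ∈ AddSubgroup.closure {g1, g2, g3} ↔
        ∃ i j k : ℤ, x = i • g1 + j • g2 + k • g3 := by
    intro x
    constructor
    · intro hx
      induction hx using AddSubgroup.closure_induction with
      | mem y hy =>
        simp only [Set.mem_insert_iff, Set.mem_singleton_iff] at hy
        rcases hy with h | h | h
        · exact ⟨1, 0, 0, by simp [h]⟩
        · exact ⟨0, 1, 0, by simp [h]⟩
        · exact ⟨0, 0, 1, by simp [h]⟩
      | zero => exact ⟨0, 0, 0, by simp⟩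
      | add x y hx hy ihx ihy =>
        obtain ⟨i, j, k, rfl⟩ := ihx
        obtain ⟨i', j', k', rfl⟩ := ihy
        exact ⟨i + i', j + j', k + k', by rw [add_zsmul, add_zsmul, add_zsmul]; abel⟩
      | neg x hx ihx =>
        obtain ⟨i, j, k, rfl⟩ := ihx
        exact ⟨-i, -j, -k, by rw [neg_zsmul, neg_zsmul, neg_zsmul]; abel⟩
    · rintro ⟨i, j, k, rfl⟩
      have m1 : g1 ∈ AddSubgroup.closure {g1, g2, g3} :=
        AddSubgroup.subset_closure (by simp)
      have m2 : g2 ∈ AddSubgroup.closure {g1, g2, g3} :=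
        AddSubgroup.subset_closure (by simp)
      have m3 : g3 ∈ AddSubgroup.closure {g1, g2, g3} :=
        AddSubgroup.subset_closure (by simp)
      exact AddSubgroup.add_mem _ (AddSubgroup.add_mem _
        (AddSubgroup.zsmul_mem _ m1 i) (AddSubgroup.zsmul_mem _ m2 j))
        (AddSubgroup.zsmul_mem _ m3 k)
  constructor
  · ext x
    simp only [SetLike.mem_coe, Set.mem_setOf_eq, hmem]
    constructor
    · rintro ⟨i, j, k, rfl⟩
      obtain ⟨i', j', k', hi, hj, hk, hx⟩ := hred i j k
      exact ⟨i', j', k', by omega, by omega, by omega, by rw [hx, hcombN]⟩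
    · rintro ⟨i, j, k, hi, hj, hk, rfl⟩
      exact ⟨i, j, k, (hcombN i j k).symm⟩
  · set F : Fin N × Fin P × Fin Q → ZMod m × ZMod n × ZMod r :=
      fun y => ((y.1 : ℕ) : ℤ) • g1 + ((y.2.1 : ℕ) : ℤ) • g2 + ((y.2.2 : ℕ) : ℤ) • g3
      with hF
    have hrange : ((AddSubgroup.closure {g1, g2, g3} :
        AddSubgroup (ZMod m × ZMod n × ZMod r)) : Set (ZMod m × ZMod n × ZMod r)) =
        Set.range F := by
      ext x
      simp only [SetLike.mem_coe, hmem, Set.mem_range]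
      constructor
      · rintro ⟨i, j, k, rfl⟩
        obtain ⟨i', j', k', hi, hj, hk, hx⟩ := hred i j k
        exact ⟨(⟨i', hi⟩, ⟨j', hj⟩, ⟨k', hk⟩), hx.symm⟩
      · rintro ⟨y, rfl⟩
        exact ⟨y.1, y.2.1, y.2.2, rfl⟩
    have hinj : Function.Injective F := by
      rintro ⟨⟨i, hi⟩, ⟨j, hj⟩, ⟨k, hk⟩⟩ ⟨⟨i', hi'⟩, ⟨j', hj'⟩, ⟨k', hk'⟩⟩ hEq
      rw [hF] at hEq
      simp only at hEq
      rw [hcombN, hcombN] at hEq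
      have h3 := congrArg (fun p : ZMod m × ZMod n × ZMod r => p.2.2) hEq
      have h2 := congrArg (fun p : ZMod m × ZMod n × ZMod r => p.2.1) hEq
      have h1 := congrArg (fun p : ZMod m × ZMod n × ZMod r => p.1) hEq
      simp only at h1 h2 h3
      have hkc : k * c < r := by
        calc k * c < Q * c := by exact Nat.mul_lt_mul_of_lt_of_le hk (le_refl c) hc0
          _ = r := by rw [mul_comm]; exact hrQ
      have hkc' : k' * c < r := by
        calc k' * c < Q * c := by exact Nat.mul_lt_mul_of_lt_of_le hk' (le_refl c) hc0
          _ = r := by rw [mul_comm]; exact hrQ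
      have hkk : k = k' := by
        have : k * c = k' * c := by
          rw [← ZMod.val_cast_of_lt hkc, ← ZMod.val_cast_of_lt hkc', h3]
        exact Nat.eq_of_mul_eq_mul_right hc0 this
      subst hkk
      have hjb : j * b < n := by
        calc j * b < P * b := by exact Nat.mul_lt_mul_of_lt_of_le hj (le_refl b) hb0
          _ = n := by rw [mul_comm]; exact hnP
      have hjb' : j' * b < n := by
        calc j' * b < P * b := by exact Nat.mul_lt_mul_of_lt_of_le hj' (le_refl b) hb0
          _ = n := by rw [mul_comm]; exact hnP
      have hjj : j = j' := by
        have h2' : ((j * b : ℕ) : ZMod n) = ((j' * b : ℕ) : ZMod n) := by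
          push_cast at h2 ⊢
          linear_combination h2
        have : j * b = j' * b := by
          rw [← ZMod.val_cast_of_lt hjb, ← ZMod.val_cast_of_lt hjb', h2']
        exact Nat.eq_of_mul_eq_mul_right hb0 this
      subst hjj
      have hia : i * a < m := by
        calc i * a < N * a := by exact Nat.mul_lt_mul_of_lt_of_le hi (le_refl a) ha0
          _ = m := by rw [mul_comm]; exact hmN
      have hia' : i' * a < m := by
        calc i' * a < N * a := by exact Nat.mul_lt_mul_of_lt_of_le hi' (le_refl a) ha0
          _ = m := by rw [mul_comm]; exact hmN
      have hii : i = i' := by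
        have h1' : ((i * a : ℕ) : ZMod m) = ((i' * a : ℕ) : ZMod m) := by
          push_cast at h1 ⊢
          linear_combination h1
        have : i * a = i' * a := by
          rw [← ZMod.val_cast_of_lt hia, ← ZMod.val_cast_of_lt hia', h1']
        exact Nat.eq_of_mul_eq_mul_right ha0 this
      subst hii
      rfl
    have hcard : Nat.card (AddSubgroup.closure {g1, g2, g3} :
        AddSubgroup (ZMod m × ZMod n × ZMod r)) = N * P * Q := by
      rw [← SetLike.coe_sort_coe, hrange, Nat.card_range_of_injective hinj]
      simp [Nat.card_eq_fintype_card]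
      ring
    rw [hcard]
    have : m * n * r = (a * b * c) * (N * P * Q) := by
      rw [← hmN, ← hnP, ← hrQ]; ring
    rw [this, Nat.mul_div_cancel_left _ (by positivity)]
end

section
/- For all m, n, r ∈ ℕ+ and every positive divisor δ of mnr, the number of subgroups of order δ of the group ℤ_m × ℤ_n × ℤ_r equals Σ (A·B·C/X²)·P(X), the sum running over all triples (a,b,c) with a ∣ m, b ∣ n, c ∣ r and a·b·c = mnr/δ, where A = gcd(a, n/b), B = gcd(b, r/c), C = gcd(a, r/c), and X = ABC / gcd(a·(r/c), ABC). -/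
open Finset

/-- The gcd-sum (Pillai) function `P(n) = Σ_{k=1}^{n} gcd(k,n)`. -/
def P (n : ℕ) : ℕ := ∑ k ∈ Finset.Icc 1 n, Nat.gcd k n

/-- number of `u ∈ [0,a)` with `u ≡ z (mod e)`, where `e ∣ a`. -/
lemma count_cong (a e : ℕ) (he : 0 < e) (hea : e ∣ a) (z : ℤ) :
    ((range a).filter (fun u : ℕ => (e:ℤ) ∣ (u:ℤ) - z)).card = a / e := by
  have heZ : (0:ℤ) < (e:ℤ) := by exact_mod_cast he
  have hz0nn : 0 ≤ z % e := Int.emod_nonneg z heZ.ne'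
  have hz0lt : z % e < e := Int.emod_lt_of_pos z heZ
  set z0 : ℕ := (z % e).toNat with hz0def
  have hz0cast : (z0 : ℤ) = z % e := Int.toNat_of_nonneg hz0nn
  have hz0e : z0 < e := by omega
  have hdvd : (e:ℤ) ∣ (z0:ℤ) - z := by
    rw [hz0cast]
    exact ⟨-(z / e), by rw [Int.emod_def]; ring⟩
  have himg : (range a).filter (fun u : ℕ => (e:ℤ) ∣ (u:ℤ) - z)
      = (range (a/e)).image (fun i => z0 + i * e) := by
    obtain ⟨q, rfl⟩ := hea
    rw [Nat.mul_div_cancel_left _ he]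
    ext u
    simp only [mem_filter, mem_range, mem_image]
    constructor
    · rintro ⟨hu, k, hk⟩
      have h2 : (e:ℤ) ∣ (u:ℤ) - z0 := by
        have h3 : (u:ℤ) - z0 = ((u:ℤ) - z) - ((z0:ℤ) - z) := by ring
        rw [h3]; exact dvd_sub ⟨k, hk⟩ hdvd
      obtain ⟨j, hj⟩ := h2
      have huz : (u:ℤ) = z0 + (e:ℤ) * j := by linarith [hj]
      have hu0 : (0:ℤ) ≤ u := Int.natCast_nonneg u
      have hz0eZ : (z0:ℤ) < e := by exact_mod_cast hz0e
      have hj0 : 0 ≤ j := by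
        by_contra hcon
        push_neg at hcon
        have hj1 : j ≤ -1 := by omega
        have : (e:ℤ) * j ≤ (e:ℤ) * (-1) := mul_le_mul_of_nonneg_left hj1 heZ.le
        linarith
      have hjq : j < q := by
        have huq : (u:ℤ) < (e:ℤ) * q := by exact_mod_cast hu
        have : (e:ℤ) * j < (e:ℤ) * q := by linarith
        exact lt_of_mul_lt_mul_left this heZ.le
      have hje : (j.toNat : ℤ) = j := Int.toNat_of_nonneg hj0
      refine ⟨j.toNat, by omega, ?_⟩
      have : ((z0 + j.toNat * e : ℕ) : ℤ) = (u:ℤ) := by push_cast; rw [hje]; linarith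
      exact_mod_cast this
    · rintro ⟨i, hi, rfl⟩
      constructor
      · have h1 : z0 + i * e < e + i * e := Nat.add_lt_add_right hz0e _
        have h2 : e + i * e ≤ e * q := by
          calc e + i * e = (i+1) * e := by ring
            _ ≤ q * e := Nat.mul_le_mul_right _ hi
            _ = e * q := Nat.mul_comm _ _
        exact lt_of_lt_of_le h1 h2
      · have h3 : ((z0 + i*e : ℕ) : ℤ) - z = ((z0:ℤ) - z) + i * e := by push_cast; ring
        rw [h3]; exact dvd_add hdvd ⟨i, by ring⟩
  rw [himg, Finset.card_image_of_injective _ (fun i j hij => by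
    exact Nat.eq_of_mul_eq_mul_right he (Nat.add_left_cancel hij)), Finset.card_range]

/-- `k ∣ t * x ↔ k / gcd k t ∣ x` (ℤ-valued x, ℕ k t). -/
lemma dvd_mul_int (k t : ℕ) (hk : 0 < k) (x : ℤ) :
    (k:ℤ) ∣ (t:ℤ) * x ↔ ((k / Nat.gcd k t : ℕ) : ℤ) ∣ x := by
  have hd : 0 < Nat.gcd k t := Nat.gcd_pos_of_pos_left _ hk
  set d := Nat.gcd k t with hdd
  have hk' : d ∣ k := Nat.gcd_dvd_left _ _
  have ht' : d ∣ t := Nat.gcd_dvd_right _ _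
  have e1n : k * (t/d) = t * (k/d) := by
    rw [← Nat.mul_div_assoc k ht', ← Nat.mul_div_assoc t hk', Nat.mul_comm]
  constructor
  · rintro ⟨y, hy⟩
    have hco : Nat.Coprime (k / d) (t / d) := Nat.coprime_div_gcd_div_gcd hd
    have hcoZ : IsCoprime ((k/d : ℕ) : ℤ) ((t/d : ℕ) : ℤ) := by
      rw [Int.isCoprime_iff_gcd_eq_one]
      exact_mod_cast hco
    have hdvd2 : ((k/d : ℕ):ℤ) ∣ ((t/d : ℕ):ℤ) * x := by
      refine ⟨y, ?_⟩
      have e1 : (d:ℤ) * ((t/d:ℕ):ℤ) = (t:ℤ) := by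
        rw [← Nat.cast_mul, Nat.mul_div_cancel' ht']
      have e2 : (d:ℤ) * ((k/d:ℕ):ℤ) = (k:ℤ) := by
        rw [← Nat.cast_mul, Nat.mul_div_cancel' hk']
      have h1 : (d:ℤ) * (((t/d:ℕ):ℤ) * x) = (d:ℤ) * (((k/d:ℕ):ℤ) * y) :=
        calc (d:ℤ) * (((t/d:ℕ):ℤ) * x) = ((d:ℤ) * ((t/d:ℕ):ℤ)) * x := by ring
          _ = (t:ℤ) * x := by rw [e1]
          _ = (k:ℤ) * y := hy
          _ = ((d:ℤ) * ((k/d:ℕ):ℤ)) * y := by rw [e2]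
          _ = (d:ℤ) * (((k/d:ℕ):ℤ) * y) := by ring
      have hd0 : (d:ℤ) ≠ 0 := by exact_mod_cast hd.ne'
      exact mul_left_cancel₀ hd0 h1
    exact hcoZ.dvd_of_dvd_mul_left hdvd2
  · rintro ⟨y, rfl⟩
    refine ⟨(t/d : ℕ) * y, ?_⟩
    have e1 : (k:ℤ) * ((t/d:ℕ):ℤ) = (t:ℤ) * ((k/d:ℕ):ℤ) := by exact_mod_cast e1n
    calc (t:ℤ) * (((k/d:ℕ):ℤ) * y) = ((t:ℤ) * ((k/d:ℕ):ℤ)) * y := by ring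
      _ = ((k:ℤ) * ((t/d:ℕ):ℤ)) * y := by rw [e1]
      _ = (k:ℤ) * (((t/d:ℕ):ℤ) * y) := by ring

/-- count of solutions of `g·u ≡ w (mod a)` with `u ∈ [0,a)`. -/
lemma lin_cong_count (a g : ℕ) (ha : 0 < a) (w : ℤ) :
    ((range a).filter (fun u : ℕ => (a:ℤ) ∣ (g:ℤ) * u - w)).card
      = if ((Nat.gcd a g : ℤ) ∣ w) then Nat.gcd a g else 0 := by
  set d := Nat.gcd a g with hdd
  have hd : 0 < d := Nat.gcd_pos_of_pos_left _ ha
  by_cases hw : ((d : ℕ) : ℤ) ∣ w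
  · rw [if_pos hw]
    obtain ⟨q, hq⟩ := hw
    -- Bezout
    have hbez : ((d:ℕ) : ℤ) = (a:ℤ) * Int.gcdA a g + (g:ℤ) * Int.gcdB a g := by
      have := Int.gcd_eq_gcd_ab (a:ℤ) (g:ℤ)
      rwa [Int.gcd_natCast_natCast] at this
    set u₀ : ℤ := Int.gcdB a g * q with hu₀
    have h0 : (a:ℤ) ∣ (g:ℤ) * u₀ - w := by
      refine ⟨-(Int.gcdA a g * q), ?_⟩
      rw [hq, hbez]; ring
    have hiff : ∀ u : ℕ, ((a:ℤ) ∣ (g:ℤ) * u - w) ↔ (((a/d : ℕ):ℤ) ∣ (u:ℤ) - u₀) := by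
      intro u
      have hsplit : (g:ℤ) * u - w = (g:ℤ) * ((u:ℤ) - u₀) + ((g:ℤ) * u₀ - w) := by ring
      constructor
      · intro h
        have : (a:ℤ) ∣ (g:ℤ) * ((u:ℤ) - u₀) := by
          have := dvd_sub h h0
          simpa [hsplit, sub_sub_cancel] using (dvd_sub h h0 : (a:ℤ) ∣ ((g:ℤ)*u - w) - ((g:ℤ)*u₀ - w))
        exact (dvd_mul_int a g ha _).mp this
      · intro h
        rw [hsplit]
        exact dvd_add ((dvd_mul_int a g ha _).mpr h) h0
    rw [filter_congr (fun u _ => by rw [hiff u])]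
    have hda : d ∣ a := Nat.gcd_dvd_left _ _
    have hadpos : 0 < a / d := Nat.div_pos (Nat.le_of_dvd ha hda) hd
    rw [count_cong a (a/d) hadpos (Nat.div_dvd_of_dvd hda) u₀]
    exact Nat.div_div_self hda ha.ne'
  · rw [if_neg hw]
    rw [Finset.card_eq_zero, Finset.filter_eq_empty_iff]
    intro u _
    intro hcon
    apply hw
    have h1 : ((d:ℕ):ℤ) ∣ (g:ℤ) * u := Dvd.dvd.mul_right (by exact_mod_cast Nat.gcd_dvd_right a g) _
    have h2 : ((d:ℕ):ℤ) ∣ (g:ℤ) * u - w :=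
      dvd_trans (by exact_mod_cast Nat.gcd_dvd_left a g) hcon
    simpa using dvd_sub h1 h2

/-- pull a multiple-of-`a'` sum out of a range sum. -/
lemma sum_range_dvd {M : Type*} [AddCommMonoid M] (a' A : ℕ) (ha' : 0 < a') (F : ℕ → M) :
    ∑ s ∈ range (a' * A), (if a' ∣ s then F s else 0) = ∑ σ ∈ range A, F (a' * σ) := by
  rw [← Finset.sum_filter]
  have himg : (range (a' * A)).filter (fun s => a' ∣ s) = (range A).image (fun σ => a' * σ) := by
    ext s
    simp only [mem_filter, mem_range, mem_image]
    constructor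
    · rintro ⟨hs, k, rfl⟩
      refine ⟨k, ?_, rfl⟩
      have : k * a' < A * a' := by rw [mul_comm a' A] at hs; rwa [mul_comm] at hs
      exact lt_of_mul_lt_mul_right this (Nat.zero_le _)
    · rintro ⟨k, hk, rfl⟩
      exact ⟨(Nat.mul_lt_mul_left ha').mpr hk, ⟨k, rfl⟩⟩
  rw [himg, Finset.sum_image (fun x _ y _ h => Nat.eq_of_mul_eq_mul_left ha' h)]

lemma div_div_mul (B e g : ℕ) (hg : g ∣ e) (he : e ∣ B) (hgpos : 0 < g) :
    B / (e / g) = B / e * g := by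
  obtain ⟨e₁, rfl⟩ := hg
  obtain ⟨B₁, rfl⟩ := he
  rw [Nat.mul_div_cancel_left _ hgpos]
  rcases Nat.eq_zero_or_pos e₁ with rfl | he₁
  · simp
  · have l1 : g * (e₁ * B₁) / e₁ = g * B₁ := by
      rw [Nat.mul_div_assoc g ⟨B₁, rfl⟩, Nat.mul_div_cancel_left _ he₁]
    have l2 : g * (e₁ * B₁) / (g * e₁) = B₁ := by
      rw [← Nat.mul_assoc, Nat.mul_div_cancel_left _ (Nat.mul_pos hgpos he₁)]
    rw [Nat.mul_assoc, l1, l2, Nat.mul_comm]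

lemma sum_gcd_range (e : ℕ) (he : 0 < e) :
    ∑ σ ∈ range e, Nat.gcd e σ = P e := by
  have h0 : range e = insert 0 (Ico 1 e) := by
    ext x
    simp only [mem_range, mem_insert, mem_Ico]
    omega
  have h1 : Finset.Icc 1 e = insert e (Ico 1 e) := by
    ext x
    simp only [mem_Icc, mem_insert, mem_Ico]
    omega
  rw [h0, Finset.sum_insert (by simp), P, h1, Finset.sum_insert (by simp)]
  simp only [Nat.gcd_zero_right, Nat.gcd_self]
  congr 1
  exact Finset.sum_congr rfl (fun x _ => Nat.gcd_comm e x)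

lemma sum_gcd_blocks (e q : ℕ) (he : 0 < e) :
    ∑ σ ∈ range (e * q), Nat.gcd e σ = q * P e := by
  induction q with
  | zero => simp
  | succ q ih =>
    rw [Nat.mul_succ, Finset.sum_range_add, ih]
    have : ∀ x ∈ range e, Nat.gcd e (e * q + x) = Nat.gcd e x := by
      intro x _
      rw [Nat.add_comm, Nat.mul_comm, Nat.gcd_add_mul_right_right]
    rw [Finset.sum_congr rfl this, sum_gcd_range e he]
    ring

lemma e_dvd_gcds (a b n' r' : ℕ) (ha : 0 < a) (hb : 0 < b) (hn' : 0 < n') (hr' : 0 < r') :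
    (Nat.gcd a r' / Nat.gcd (Nat.gcd a r') ((a / Nat.gcd a n') * (r' / Nat.gcd b r'))) ∣ Nat.gcd a n' ∧
    (Nat.gcd a r' / Nat.gcd (Nat.gcd a r') ((a / Nat.gcd a n') * (r' / Nat.gcd b r'))) ∣ Nat.gcd b r' := by
  set A := Nat.gcd a n' with hA
  set B := Nat.gcd b r' with hB
  set C := Nat.gcd a r' with hC
  have hApos : 0 < A := Nat.gcd_pos_of_pos_left _ ha
  have hBpos : 0 < B := Nat.gcd_pos_of_pos_left _ hb
  have hCpos : 0 < C := Nat.gcd_pos_of_pos_left _ ha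
  have haA : A ∣ a := Nat.gcd_dvd_left _ _
  have hrB : B ∣ r' := Nat.gcd_dvd_right _ _
  have haApos : 0 < a / A := Nat.div_pos (Nat.le_of_dvd ha haA) hApos
  have hrBpos : 0 < r' / B := Nat.div_pos (Nat.le_of_dvd hr' hrB) hBpos
  set t0 := (a / A) * (r' / B) with ht0
  have ht0pos : 0 < t0 := Nat.mul_pos haApos hrBpos
  have hgpos : 0 < Nat.gcd C t0 := Nat.gcd_pos_of_pos_left _ hCpos
  have hepos : 0 < C / Nat.gcd C t0 :=
    Nat.div_pos (Nat.le_of_dvd hCpos (Nat.gcd_dvd_left _ _)) hgpos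
  have key : ∀ p : ℕ, (C / Nat.gcd C t0).factorization p ≤ min (A.factorization p) (B.factorization p) := by
    intro p
    rw [Nat.factorization_div (Nat.gcd_dvd_left C t0)]
    rw [Finsupp.tsub_apply]
    rw [Nat.factorization_gcd hCpos.ne' ht0pos.ne', Finsupp.inf_apply]
    rw [hC, Nat.factorization_gcd ha.ne' hr'.ne', Finsupp.inf_apply]
    rw [ht0, Nat.factorization_mul haApos.ne' hrBpos.ne', Finsupp.add_apply]
    rw [Nat.factorization_div haA, Nat.factorization_div hrB, Finsupp.tsub_apply, Finsupp.tsub_apply]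
    rw [hA, Nat.factorization_gcd ha.ne' hn'.ne', Finsupp.inf_apply]
    rw [hB, Nat.factorization_gcd hb.ne' hr'.ne', Finsupp.inf_apply]
    set x := a.factorization p
    set y := b.factorization p
    set n₁ := n'.factorization p
    set r₁ := r'.factorization p
    omega
  constructor
  · rw [← Nat.factorization_le_iff_dvd hepos.ne' hApos.ne', Finsupp.le_def]
    intro p
    exact le_trans (key p) (min_le_left _ _)
  · rw [← Nat.factorization_le_iff_dvd hepos.ne' hBpos.ne', Finsupp.le_def]
    intro p
    exact le_trans (key p) (min_le_right _ _)

lemma X_eq_e (a b n' r' : ℕ) (ha : 0 < a) (hb : 0 < b) (hn' : 0 < n') (hr' : 0 < r') :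
    Nat.gcd a n' * Nat.gcd b r' * Nat.gcd a r' /
        Nat.gcd (a * r') (Nat.gcd a n' * Nat.gcd b r' * Nat.gcd a r')
      = Nat.gcd a r' / Nat.gcd (Nat.gcd a r') ((a / Nat.gcd a n') * (r' / Nat.gcd b r')) := by
  set A := Nat.gcd a n' with hA
  set B := Nat.gcd b r' with hB
  set C := Nat.gcd a r' with hC
  have hApos : 0 < A := Nat.gcd_pos_of_pos_left _ ha
  have hBpos : 0 < B := Nat.gcd_pos_of_pos_left _ hb
  have haA : A ∣ a := Nat.gcd_dvd_left _ _
  have hrB : B ∣ r' := Nat.gcd_dvd_right _ _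
  set t0 := (a / A) * (r' / B) with ht0
  have h1 : a * r' = A * ((a / A) * r') := by
    rw [← Nat.mul_assoc, Nat.mul_div_cancel' haA]
  have h2 : A * B * C = A * (B * C) := by ring
  have h3 : (a / A) * r' = B * t0 := by
    rw [ht0]
    conv_lhs => rw [← Nat.mul_div_cancel' hrB]
    ring
  rw [h1, h2, Nat.gcd_mul_left, h3, Nat.gcd_mul_left]
  have h4 : A * B * C / (A * B * Nat.gcd t0 C) = C / Nat.gcd t0 C :=
    Nat.mul_div_mul_left _ _ (Nat.mul_pos hApos hBpos)
  have h5 : A * (B * Nat.gcd t0 C) = A * B * Nat.gcd t0 C := (mul_assoc _ _ _).symm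
  rw [h5, ← h2, h4, Nat.gcd_comm t0 C]

lemma dvd_mul_nat (k t z : ℕ) (hk : 0 < k) : k ∣ t * z ↔ (k / Nat.gcd k t) ∣ z := by
  have h := dvd_mul_int k t hk (z : ℤ)
  rw [← Nat.cast_mul, Int.natCast_dvd_natCast, Int.natCast_dvd_natCast] at h
  exact h

lemma ite_and_zero (p q : Prop) [Decidable p] [Decidable q] (x : ℕ) :
    (if p ∧ q then x else 0) = if p then (if q then x else 0) else 0 := by
  split_ifs <;> simp_all

lemma Ncount (a b n' r' : ℕ) (ha : 0 < a) (hb : 0 < b) (hn' : 0 < n') (hr' : 0 < r') :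
    ((Finset.range a ×ˢ Finset.range a ×ˢ Finset.range b).filter (fun t : ℕ × ℕ × ℕ =>
        a ∣ n' * t.1 ∧ b ∣ r' * t.2.2 ∧
        ((a:ℤ) ∣ (r':ℤ) * t.2.1 - ((r' * t.2.2 / b : ℕ) : ℤ) * t.1))).card
    = (Nat.gcd a n' * Nat.gcd b r' * Nat.gcd a r' /
        (Nat.gcd a n' * Nat.gcd b r' * Nat.gcd a r' /
          Nat.gcd (a * r') (Nat.gcd a n' * Nat.gcd b r' * Nat.gcd a r')) ^ 2) *
      P (Nat.gcd a n' * Nat.gcd b r' * Nat.gcd a r' /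
          Nat.gcd (a * r') (Nat.gcd a n' * Nat.gcd b r' * Nat.gcd a r')) := by
  rw [X_eq_e a b n' r' ha hb hn' hr']
  obtain ⟨heA, heB⟩ := e_dvd_gcds a b n' r' ha hb hn' hr'
  set A := Nat.gcd a n' with hA
  set B := Nat.gcd b r' with hB
  set C := Nat.gcd a r' with hC
  have hApos : 0 < A := Nat.gcd_pos_of_pos_left _ ha
  have hBpos : 0 < B := Nat.gcd_pos_of_pos_left _ hb
  have hCpos : 0 < C := Nat.gcd_pos_of_pos_left _ ha
  have haA : A ∣ a := Nat.gcd_dvd_left _ _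
  have hbB : B ∣ b := Nat.gcd_dvd_left _ _
  have hrB : B ∣ r' := Nat.gcd_dvd_right _ _
  set t0 := (a / A) * (r' / B) with ht0
  set e := C / Nat.gcd C t0 with he
  have hgCt0pos : 0 < Nat.gcd C t0 := Nat.gcd_pos_of_pos_left _ hCpos
  have hepos : 0 < e := Nat.div_pos (Nat.le_of_dvd hCpos (Nat.gcd_dvd_left _ _)) hgCt0pos
  -- step 1 : count over u
  have step1 : ∀ s v : ℕ,
      (∑ u ∈ Finset.range a, if (a ∣ n' * s ∧ b ∣ r' * v ∧
          ((a:ℤ) ∣ (r':ℤ) * u - ((r' * v / b : ℕ) : ℤ) * s)) then 1 else 0)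
      = if (a ∣ n' * s ∧ (b ∣ r' * v ∧ C ∣ (r' * v / b) * s)) then C else 0 := by
    intro s v
    by_cases h1 : a ∣ n' * s
    · by_cases h2 : b ∣ r' * v
      · simp only [h1, h2, true_and]
        rw [← Finset.card_filter]
        rw [lin_cong_count a r' ha (((r' * v / b : ℕ) : ℤ) * s)]
        have hcast : (((Nat.gcd a r' : ℕ)) : ℤ) ∣ ((r' * v / b : ℕ) : ℤ) * (s:ℤ) ↔
            C ∣ (r' * v / b) * s := by
          rw [← Nat.cast_mul, Int.natCast_dvd_natCast, hC]
        rw [if_congr hcast rfl rfl]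
      · simp [h2]
    · simp [h1]
  -- step 2 : reduce card to double sum
  have step2 : ((Finset.range a ×ˢ Finset.range a ×ˢ Finset.range b).filter (fun t : ℕ × ℕ × ℕ =>
        a ∣ n' * t.1 ∧ b ∣ r' * t.2.2 ∧
        ((a:ℤ) ∣ (r':ℤ) * t.2.1 - ((r' * t.2.2 / b : ℕ) : ℤ) * t.1))).card
      = ∑ s ∈ Finset.range a, ∑ v ∈ Finset.range b,
          if (a ∣ n' * s ∧ (b ∣ r' * v ∧ C ∣ (r' * v / b) * s)) then C else 0 := by
    rw [Finset.card_filter]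
    simp only [Finset.sum_product]
    refine Finset.sum_congr rfl (fun s _ => ?_)
    rw [Finset.sum_comm]
    exact Finset.sum_congr rfl (fun v _ => step1 s v)
  rw [step2]
  -- step 3 : reindex s
  have hacond : ∀ s, (a ∣ n' * s) ↔ (a / A) ∣ s := fun s => dvd_mul_nat a n' s ha
  have haprod : (a / A) * A = a := Nat.div_mul_cancel haA
  have haApos : 0 < a / A := Nat.div_pos (Nat.le_of_dvd ha haA) hApos
  have step3 : (∑ s ∈ Finset.range a, ∑ v ∈ Finset.range b,
        if (a ∣ n' * s ∧ (b ∣ r' * v ∧ C ∣ (r' * v / b) * s)) then C else 0)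
      = ∑ σ ∈ Finset.range A, ∑ v ∈ Finset.range b,
          if (b ∣ r' * v ∧ C ∣ (r' * v / b) * ((a / A) * σ)) then C else 0 := by
    have hform : ∀ s, (∑ v ∈ Finset.range b,
        if (a ∣ n' * s ∧ (b ∣ r' * v ∧ C ∣ (r' * v / b) * s)) then C else 0)
        = if (a / A) ∣ s then (∑ v ∈ Finset.range b,
            if (b ∣ r' * v ∧ C ∣ (r' * v / b) * s) then C else 0) else 0 := by
      intro s
      by_cases h1 : (a / A) ∣ s
      · simp only [if_pos h1]
        refine Finset.sum_congr rfl (fun v _ => ?_)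
        rw [if_congr (and_iff_right ((hacond s).mpr h1)) rfl rfl]
      · simp only [if_neg h1]
        refine Finset.sum_eq_zero (fun v _ => ?_)
        rw [if_neg]
        intro hcon
        exact h1 ((hacond s).mp hcon.1)
    calc (∑ s ∈ Finset.range a, ∑ v ∈ Finset.range b,
        if (a ∣ n' * s ∧ (b ∣ r' * v ∧ C ∣ (r' * v / b) * s)) then C else 0)
        = ∑ s ∈ Finset.range ((a/A) * A), (if (a / A) ∣ s then (∑ v ∈ Finset.range b,
            if (b ∣ r' * v ∧ C ∣ (r' * v / b) * s) then C else 0) else 0) := by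
          rw [haprod]; exact Finset.sum_congr rfl (fun s _ => hform s)
      _ = _ := sum_range_dvd (a/A) A haApos _
  rw [step3]
  -- step 4 : reindex v
  have hbcond : ∀ v, (b ∣ r' * v) ↔ (b / B) ∣ v := fun v => dvd_mul_nat b r' v hb
  have hbprod : (b / B) * B = b := Nat.div_mul_cancel hbB
  have hbBpos : 0 < b / B := Nat.div_pos (Nat.le_of_dvd hb hbB) hBpos
  have hdiv : ∀ τ, r' * ((b / B) * τ) / b = (r' / B) * τ := by
    intro τ
    obtain ⟨r₁, hr₁⟩ := hrB
    have h1 : r' / B = r₁ := by rw [hr₁, Nat.mul_div_cancel_left _ hBpos]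
    have h2 : r' * ((b / B) * τ) = b * (r₁ * τ) := by
      calc r' * ((b / B) * τ) = (B * (b / B)) * (r₁ * τ) := by rw [hr₁]; ring
        _ = b * (r₁ * τ) := by rw [Nat.mul_div_cancel' hbB]
    rw [h2, h1, Nat.mul_div_cancel_left _ hb]
  have step4 : (∑ σ ∈ Finset.range A, ∑ v ∈ Finset.range b,
        if (b ∣ r' * v ∧ C ∣ (r' * v / b) * ((a / A) * σ)) then C else 0)
      = ∑ σ ∈ Finset.range A, ∑ τ ∈ Finset.range B,
          if e ∣ σ * τ then C else 0 := by
    refine Finset.sum_congr rfl (fun σ _ => ?_)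
    calc (∑ v ∈ Finset.range b,
          if (b ∣ r' * v ∧ C ∣ (r' * v / b) * ((a / A) * σ)) then C else 0)
        = ∑ v ∈ Finset.range ((b/B) * B), (if (b / B) ∣ v then
            (if C ∣ (r' * v / b) * ((a / A) * σ) then C else 0) else 0) := by
          rw [hbprod]
          refine Finset.sum_congr rfl (fun v _ => ?_)
          rw [if_congr (and_congr_left' (hbcond v)) rfl rfl, ite_and_zero]
      _ = ∑ τ ∈ Finset.range B, (if C ∣ (r' * ((b/B) * τ) / b) * ((a / A) * σ) then C else 0) :=
          sum_range_dvd (b/B) B hbBpos _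
      _ = ∑ τ ∈ Finset.range B, if e ∣ σ * τ then C else 0 := by
          refine Finset.sum_congr rfl (fun τ _ => ?_)
          rw [hdiv τ]
          have harr : (r' / B) * τ * ((a / A) * σ) = t0 * (σ * τ) := by rw [ht0]; ring
          rw [harr]
          rw [if_congr (dvd_mul_nat C t0 (σ * τ) hCpos) rfl rfl, ← he]
  rw [step4]
  -- step 5 : count over τ
  have step5 : ∀ σ, (∑ τ ∈ Finset.range B, if e ∣ σ * τ then C else 0)
      = (B / e * Nat.gcd e σ) * C := by
    intro σ
    have hg : Nat.gcd e σ ∣ e := Nat.gcd_dvd_left _ _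
    have hgpos : 0 < Nat.gcd e σ := Nat.gcd_pos_of_pos_left _ hepos
    have hd' : (e / Nat.gcd e σ) ∣ B := dvd_trans (Nat.div_dvd_of_dvd hg) heB
    have hd'pos : 0 < e / Nat.gcd e σ :=
      Nat.div_pos (Nat.le_of_dvd hepos hg) hgpos
    calc (∑ τ ∈ Finset.range B, if e ∣ σ * τ then C else 0)
        = ∑ τ ∈ Finset.range ((e / Nat.gcd e σ) * (B / (e / Nat.gcd e σ))),
            (if (e / Nat.gcd e σ) ∣ τ then C else 0) := by
          rw [Nat.mul_div_cancel' hd']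
          refine Finset.sum_congr rfl (fun τ _ => ?_)
          rw [if_congr (dvd_mul_nat e σ τ hepos) rfl rfl]
      _ = ∑ τ' ∈ Finset.range (B / (e / Nat.gcd e σ)), C :=
          sum_range_dvd _ _ hd'pos _
      _ = (B / (e / Nat.gcd e σ)) * C := by
          rw [Finset.sum_const, Finset.card_range, smul_eq_mul]
      _ = (B / e * Nat.gcd e σ) * C := by
          rw [div_div_mul B e (Nat.gcd e σ) hg heB hgpos]
  -- step 6 : assemble
  have step6 : (∑ σ ∈ Finset.range A, ∑ τ ∈ Finset.range B, if e ∣ σ * τ then C else 0)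
      = (B / e * C) * ((A / e) * P e) := by
    calc (∑ σ ∈ Finset.range A, ∑ τ ∈ Finset.range B, if e ∣ σ * τ then C else 0)
        = ∑ σ ∈ Finset.range A, (B / e * C) * Nat.gcd e σ := by
          refine Finset.sum_congr rfl (fun σ _ => ?_)
          rw [step5 σ]; ring
      _ = (B / e * C) * ∑ σ ∈ Finset.range A, Nat.gcd e σ := by
          rw [Finset.mul_sum]
      _ = (B / e * C) * ((A / e) * P e) := by
          congr 1
          conv_lhs => rw [show A = e * (A / e) from (Nat.mul_div_cancel' heA).symm]
          rw [sum_gcd_blocks e (A / e) hepos]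
  rw [step6]
  -- final algebra
  obtain ⟨A₁, hA₁⟩ := heA
  obtain ⟨B₁, hB₁⟩ := heB
  have hAe : A / e = A₁ := by rw [hA₁, Nat.mul_div_cancel_left _ hepos]
  have hBe : B / e = B₁ := by rw [hB₁, Nat.mul_div_cancel_left _ hepos]
  have hABC : A * B * C / e ^ 2 = A₁ * B₁ * C := by
    rw [hA₁, hB₁]
    have : e * A₁ * (e * B₁) * C = e ^ 2 * (A₁ * B₁ * C) := by ring
    rw [this, Nat.mul_div_cancel_left _ (by positivity)]
  rw [hAe, hBe, hABC]
  ring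

/-! ## The lattice `L3` -/

/-- The subgroup of `ℤ³` generated by `(a,0,0), (s,b,0), (u,v,c)`. -/
def L3 (a b c s u v : ℕ) : AddSubgroup (ℤ × ℤ × ℤ) where
  carrier := {p | ∃ i j k : ℤ, p = (i*a + j*s + k*u, j*b + k*v, k*c)}
  zero_mem' := ⟨0, 0, 0, by simp; rfl⟩
  add_mem' := by
    rintro p q ⟨i,j,k,rfl⟩ ⟨i',j',k',rfl⟩
    exact ⟨i+i', j+j', k+k', by
      simp only [Prod.mk_add_mk, Prod.mk.injEq]
      refine ⟨by ring, by ring, by ring⟩⟩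
  neg_mem' := by
    rintro p ⟨i,j,k,rfl⟩
    exact ⟨-i, -j, -k, by
      simp only [Prod.neg_mk, Prod.mk.injEq]
      refine ⟨by ring, by ring, by ring⟩⟩

lemma mem_L3 (a b c s u v : ℕ) (p : ℤ × ℤ × ℤ) :
    p ∈ L3 a b c s u v ↔ ∃ i j k : ℤ, p = (i*a + j*s + k*u, j*b + k*v, k*c) := Iff.rfl

lemma index_L3 (a b c s u v : ℕ) (ha : 0 < a) (hb : 0 < b) (hc : 0 < c) :
    (L3 a b c s u v).index = a * b * c := by
  haveI : NeZero a := ⟨ha.ne'⟩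
  haveI : NeZero b := ⟨hb.ne'⟩
  haveI : NeZero c := ⟨hc.ne'⟩
  have hcZ : (c:ℤ) ≠ 0 := by exact_mod_cast hc.ne'
  have hbZ : (b:ℤ) ≠ 0 := by exact_mod_cast hb.ne'
  have haZ : (a:ℤ) ≠ 0 := by exact_mod_cast ha.ne'
  set red : ℤ × ℤ × ℤ → ZMod a × ZMod b × ZMod c := fun p =>
    (((p.1 - p.2.2 / c * u - (p.2.1 - p.2.2 / c * v) / b * s : ℤ) : ZMod a),
     ((p.2.1 - p.2.2 / c * v : ℤ) : ZMod b),
     ((p.2.2 : ℤ) : ZMod c)) with hred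
  have hinv : ∀ (p d : ℤ × ℤ × ℤ), d ∈ L3 a b c s u v → red (p + d) = red p := by
    rintro ⟨x, y, z⟩ ⟨_, _, _⟩ ⟨i, j, k, hd⟩
    rw [hd]
    have h3 : (z + k * c) / c = z / c + k := Int.add_mul_ediv_right z k hcZ
    simp only [hred, Prod.mk_add_mk]
    have e2 : (y + (j*b + k*v)) - (z + k*c)/c * v = (y - z/c*v) + j*b := by
      rw [h3]; ring
    have h2 : ((y + (j*b + k*v)) - (z + k*c)/c * v) / b = (y - z/c*v)/b + j := by
      rw [e2, Int.add_mul_ediv_right _ j hbZ]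
    have e1 : (x + (i*a + j*s + k*u)) - (z + k*c)/c * u
        - ((y + (j*b + k*v)) - (z + k*c)/c * v)/b * s
        = (x - z/c*u - (y - z/c*v)/b * s) + i*a := by
      rw [h2, h3]; ring
    refine Prod.ext ?_ (Prod.ext ?_ ?_)
    · show ((_ : ℤ) : ZMod a) = _
      rw [e1]
      push_cast
      simp [ZMod.natCast_self]
    · show ((_ : ℤ) : ZMod b) = _
      rw [e2]
      push_cast
      simp [ZMod.natCast_self]
    · show (((z + k*c : ℤ)) : ZMod c) = _
      push_cast
      simp [ZMod.natCast_self]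
  have hcongr : ∀ p q : ℤ × ℤ × ℤ, (QuotientAddGroup.leftRel (L3 a b c s u v)) p q →
      red p = red q := by
    intro p q h
    rw [QuotientAddGroup.leftRel_apply] at h
    have : q = p + (-p + q) := by abel
    rw [this, hinv p _ h]
  set F : (ℤ × ℤ × ℤ) ⧸ (L3 a b c s u v) → ZMod a × ZMod b × ZMod c :=
    Quotient.lift red (fun p q h => hcongr p q h) with hF
  have hbij : Function.Bijective F := by
    constructor
    · intro p' q'
      induction p' using Quotient.ind
      induction q' using Quotient.ind
      rename_i p q
      intro hpq
      have hpq' : red p = red q := hpq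
      refine Quotient.sound (QuotientAddGroup.leftRel_apply.mpr ?_)
      obtain ⟨hx, hy, hz⟩ := Prod.mk.injEq .. ▸ Prod.ext_iff.mp hpq'
      -- third coordinate
      have h3 : ((p.2.2 : ZMod c)) = (q.2.2 : ZMod c) := hz
      rw [ZMod.intCast_eq_intCast_iff] at h3
      have hdz : (c:ℤ) ∣ q.2.2 - p.2.2 := (Int.ModEq.dvd h3)
      set k := (q.2.2 - p.2.2) / c with hk
      have hzz : q.2.2 = p.2.2 + k * c := by
        rw [hk, Int.ediv_mul_cancel hdz]; ring
      have hkq : q.2.2 / c = p.2.2 / c + k := by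
        rw [hzz, Int.add_mul_ediv_right _ k hcZ]
      -- second coordinate
      have h2 : ((p.2.1 - p.2.2/c*v : ℤ) : ZMod b) = ((q.2.1 - q.2.2/c*v : ℤ) : ZMod b) := hy
      rw [ZMod.intCast_eq_intCast_iff] at h2
      have hdy : (b:ℤ) ∣ (q.2.1 - q.2.2/c*v) - (p.2.1 - p.2.2/c*v) := Int.ModEq.dvd h2
      set Δy := (q.2.1 - q.2.2/c*v) - (p.2.1 - p.2.2/c*v) with hΔy
      set j := Δy / b with hj
      have hyy : q.2.1 - p.2.1 = j * b + k * v := by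
        have h4 : Δy = j * b := by rw [hj, Int.ediv_mul_cancel hdy]
        have : q.2.1 - p.2.1 = Δy + (q.2.2/c - p.2.2/c) * v := by rw [hΔy]; ring
        rw [this, h4, hkq]; ring
      have hjq : (q.2.1 - q.2.2/c*v)/b = (p.2.1 - p.2.2/c*v)/b + j := by
        have : q.2.1 - q.2.2/c*v = (p.2.1 - p.2.2/c*v) + j * b := by
          have h4 : Δy = j * b := by rw [hj, Int.ediv_mul_cancel hdy]
          rw [← h4, hΔy]; ring
        rw [this, Int.add_mul_ediv_right _ j hbZ]
      -- first coordinate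
      have h1 : ((p.1 - p.2.2/c*u - (p.2.1 - p.2.2/c*v)/b*s : ℤ) : ZMod a)
          = ((q.1 - q.2.2/c*u - (q.2.1 - q.2.2/c*v)/b*s : ℤ) : ZMod a) := hx
      rw [ZMod.intCast_eq_intCast_iff] at h1
      have hdx : (a:ℤ) ∣ (q.1 - q.2.2/c*u - (q.2.1 - q.2.2/c*v)/b*s)
          - (p.1 - p.2.2/c*u - (p.2.1 - p.2.2/c*v)/b*s) := Int.ModEq.dvd h1
      set Δx := (q.1 - q.2.2/c*u - (q.2.1 - q.2.2/c*v)/b*s)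
          - (p.1 - p.2.2/c*u - (p.2.1 - p.2.2/c*v)/b*s) with hΔx
      set i := Δx / a with hi
      have hxx : q.1 - p.1 = i * a + j * s + k * u := by
        have h5 : Δx = i * a := by rw [hi, Int.ediv_mul_cancel hdx]
        have : q.1 - p.1 = Δx + (q.2.2/c - p.2.2/c) * u
            + ((q.2.1 - q.2.2/c*v)/b - (p.2.1 - p.2.2/c*v)/b) * s := by rw [hΔx]; ring
        rw [this, h5, hjq, hkq]; ring
      refine ⟨i, j, k, ?_⟩
      have : -p + q = (q.1 - p.1, q.2.1 - p.2.1, q.2.2 - p.2.2) := by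
        refine Prod.ext ?_ (Prod.ext ?_ ?_)
        · show -p.1 + q.1 = q.1 - p.1; ring
        · show -p.2.1 + q.2.1 = q.2.1 - p.2.1; ring
        · show -p.2.2 + q.2.2 = q.2.2 - p.2.2; ring
      rw [this, hxx, hyy]
      have : q.2.2 - p.2.2 = k * c := by rw [hk, Int.ediv_mul_cancel hdz]
      rw [this]
    · rintro ⟨x, y, z⟩
      refine ⟨Quotient.mk _ ((x.val : ℤ), (y.val : ℤ), (z.val : ℤ)), ?_⟩
      show red _ = _
      have hz : ((z.val : ℤ)) / c = 0 := by
        apply Int.ediv_eq_zero_of_lt (by positivity)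
        exact_mod_cast ZMod.val_lt z
      have hy : ((y.val : ℤ) - 0 * v) / b = 0 := by
        rw [zero_mul, sub_zero]
        apply Int.ediv_eq_zero_of_lt (by positivity)
        exact_mod_cast ZMod.val_lt y
      simp only [hred, hz, hy]
      simp only [zero_mul, sub_zero]
      refine Prod.ext ?_ (Prod.ext ?_ ?_)
      · show (((x.val : ℤ)) : ZMod a) = x
        rw [Int.cast_natCast, ZMod.natCast_val, ZMod.cast_id]
      · show (((y.val : ℤ)) : ZMod b) = y
        rw [Int.cast_natCast, ZMod.natCast_val, ZMod.cast_id]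
      · show (((z.val : ℤ)) : ZMod c) = z
        rw [Int.cast_natCast, ZMod.natCast_val, ZMod.cast_id]
  rw [AddSubgroup.index_eq_card, Nat.card_congr (Equiv.ofBijective F hbij),
    Nat.card_prod, Nat.card_prod, Nat.card_zmod, Nat.card_zmod, Nat.card_zmod, Nat.mul_assoc]

/-! ## group-side machinery -/

/-- the canonical surjection `ℤ³ → ZMod m × ZMod n × ZMod r`. -/
def castHom3 (m n r : ℕ) : (ℤ × ℤ × ℤ) →+ ZMod m × ZMod n × ZMod r :=
  (Int.castAddHom (ZMod m)).prodMap ((Int.castAddHom (ZMod n)).prodMap (Int.castAddHom (ZMod r)))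

lemma castHom3_apply (m n r : ℕ) (p : ℤ × ℤ × ℤ) :
    castHom3 m n r p = ((p.1 : ZMod m), (p.2.1 : ZMod n), (p.2.2 : ZMod r)) := rfl

lemma castHom3_surj (m n r : ℕ) : Function.Surjective (castHom3 m n r) :=
  (ZMod.intCast_surjective).prodMap ((ZMod.intCast_surjective).prodMap ZMod.intCast_surjective)

lemma mem_ker_castHom3 (m n r : ℕ) (p : ℤ × ℤ × ℤ) :
    p ∈ (castHom3 m n r).ker ↔ ((m:ℤ) ∣ p.1 ∧ (n:ℤ) ∣ p.2.1 ∧ (r:ℤ) ∣ p.2.2) := by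
  rw [AddMonoidHom.mem_ker, castHom3_apply, Prod.ext_iff, Prod.ext_iff]
  simp only [Prod.fst_zero, Prod.snd_zero]
  rw [ZMod.intCast_zmod_eq_zero_iff_dvd, ZMod.intCast_zmod_eq_zero_iff_dvd,
    ZMod.intCast_zmod_eq_zero_iff_dvd]

lemma exists_gen (H : AddSubgroup ℤ) (w : ℕ) (hw : 0 < w) (hwH : (w:ℤ) ∈ H) :
    ∃ d : ℕ, 0 < d ∧ d ∣ w ∧ (d:ℤ) ∈ H ∧ ∀ x ∈ H, ((d:ℕ):ℤ) ∣ x := by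
  obtain ⟨g, hg⟩ := Int.subgroup_cyclic H
  have hmem : ∀ x : ℤ, x ∈ H ↔ g ∣ x := by
    intro x
    rw [hg, ← AddSubgroup.zmultiples_eq_closure, Int.mem_zmultiples_iff]
  have hgw : g ∣ (w:ℤ) := (hmem _).mp hwH
  have hg0 : g ≠ 0 := by
    rintro rfl
    rw [zero_dvd_iff] at hgw
    exact hw.ne' (by exact_mod_cast hgw)
  refine ⟨g.natAbs, Int.natAbs_pos.mpr hg0, ?_, ?_, ?_⟩
  · exact Int.natCast_dvd_natCast.mp (by rw [Int.natCast_natAbs, abs_dvd]; exact_mod_cast hgw)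
  · rw [hmem, Int.natCast_natAbs]
    exact (dvd_abs g g).mpr dvd_rfl
  · intro x hx
    rw [Int.natCast_natAbs, abs_dvd]
    exact (hmem x).mp hx

lemma int_eq_of_dvd_of_lt (a x y : ℕ) (hx : x < a) (hy : y < a)
    (h : (a:ℤ) ∣ (x:ℤ) - y) : x = y := by
  obtain ⟨i, hi⟩ := h
  have haZ : (0:ℤ) < a := by exact_mod_cast (show 0 < a by omega)
  have hxZ : (x:ℤ) < a := by exact_mod_cast hx
  have hyZ : (y:ℤ) < a := by exact_mod_cast hy
  have hx0 : (0:ℤ) ≤ x := Int.natCast_nonneg x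
  have hy0 : (0:ℤ) ≤ y := Int.natCast_nonneg y
  have hi0 : i = 0 := by
    rcases lt_trichotomy i 0 with h' | h' | h'
    · have : i ≤ -1 := by omega
      have := mul_le_mul_of_nonneg_left this haZ.le
      linarith
    · exact h'
    · have : 1 ≤ i := h'
      have := mul_le_mul_of_nonneg_left this haZ.le
      linarith
  rw [hi0, mul_zero] at hi
  exact_mod_cast (by linarith : (x:ℤ) = y)

lemma L3_cond_of_ker_le (m n r a b c s u v : ℕ)
    (hm : 0 < m) (hn : 0 < n) (hr : 0 < r)
    (ha : 0 < a) (hb : 0 < b) (hc : 0 < c)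
    (hK : (castHom3 m n r).ker ≤ L3 a b c s u v) :
    a ∣ m ∧ b ∣ n ∧ c ∣ r ∧ a ∣ (n / b) * s ∧ b ∣ (r / c) * v ∧
      ((a:ℤ) ∣ ((r / c : ℕ) : ℤ) * u - ((r / c * v / b : ℕ) : ℤ) * s) := by
  have haZ : (a:ℤ) ≠ 0 := by exact_mod_cast ha.ne'
  have hbZ : (b:ℤ) ≠ 0 := by exact_mod_cast hb.ne'
  have hcZ : (c:ℤ) ≠ 0 := by exact_mod_cast hc.ne'
  have hg1 : ((m:ℤ), (0:ℤ), (0:ℤ)) ∈ L3 a b c s u v := by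
    apply hK; rw [mem_ker_castHom3]; exact ⟨dvd_rfl, dvd_zero _, dvd_zero _⟩
  have hg2 : ((0:ℤ), (n:ℤ), (0:ℤ)) ∈ L3 a b c s u v := by
    apply hK; rw [mem_ker_castHom3]; exact ⟨dvd_zero _, dvd_rfl, dvd_zero _⟩
  have hg3 : ((0:ℤ), (0:ℤ), (r:ℤ)) ∈ L3 a b c s u v := by
    apply hK; rw [mem_ker_castHom3]; exact ⟨dvd_zero _, dvd_zero _, dvd_rfl⟩
  obtain ⟨i1, j1, k1, h1⟩ := hg1
  obtain ⟨i2, j2, k2, h2⟩ := hg2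
  obtain ⟨i3, j3, k3, h3⟩ := hg3
  rw [Prod.ext_iff, Prod.ext_iff] at h1 h2 h3
  have h1x := h1.1
  have h1y := h1.2.1
  have h1z := h1.2.2
  have h2x := h2.1
  have h2y := h2.2.1
  have h2z := h2.2.2
  have h3x := h3.1
  have h3y := h3.2.1
  have h3z := h3.2.2
  dsimp only at h1x h1y h1z h2x h2y h2z h3x h3y h3z
  -- first generator : a ∣ m
  have hk1 : k1 = 0 := by
    rcases mul_eq_zero.mp h1z.symm with h | h
    · exact h
    · exact absurd h hcZ
  have hj1 : j1 = 0 := by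
    rw [hk1, zero_mul, add_zero] at h1y
    rcases mul_eq_zero.mp h1y.symm with h | h
    · exact h
    · exact absurd h hbZ
  have ham : a ∣ m := by
    have : (m:ℤ) = a * i1 := by rw [h1x, hk1, hj1]; ring
    exact Int.natCast_dvd_natCast.mp ⟨i1, this⟩
  -- second generator
  have hk2 : k2 = 0 := by
    rcases mul_eq_zero.mp h2z.symm with h | h
    · exact h
    · exact absurd h hcZ
  rw [hk2, zero_mul, add_zero] at h2y h2x
  have hbn : b ∣ n := Int.natCast_dvd_natCast.mp ⟨j2, by rw [h2y]; ring⟩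
  have hj2 : j2 = ((n / b : ℕ) : ℤ) := by
    have hnb : ((n / b : ℕ) : ℤ) * b = n := by
      rw [← Nat.cast_mul, Nat.div_mul_cancel hbn]
    apply mul_right_cancel₀ hbZ
    rw [hnb]; exact h2y.symm
  have hans : a ∣ (n / b) * s := by
    rw [hj2] at h2x
    have : ((n / b * s : ℕ) : ℤ) = a * (-i2) := by rw [Nat.cast_mul]; linarith [h2x]
    exact Int.natCast_dvd_natCast.mp ⟨-i2, this⟩
  -- third generator
  have hcr : c ∣ r := Int.natCast_dvd_natCast.mp ⟨k3, by rw [h3z]; ring⟩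
  have hk3 : k3 = ((r / c : ℕ) : ℤ) := by
    have hrc : ((r / c : ℕ) : ℤ) * c = r := by
      rw [← Nat.cast_mul, Nat.div_mul_cancel hcr]
    apply mul_right_cancel₀ hcZ
    rw [hrc]; exact h3z.symm
  rw [hk3] at h3y h3x
  have hbrv : b ∣ (r / c) * v := by
    have : ((r / c * v : ℕ) : ℤ) = b * (-j3) := by rw [Nat.cast_mul]; linarith [h3y]
    exact Int.natCast_dvd_natCast.mp ⟨-j3, this⟩
  have hvb : ((r / c * v / b : ℕ) : ℤ) * b = ((r / c : ℕ) : ℤ) * v := by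
    rw [← Nat.cast_mul, Nat.div_mul_cancel hbrv, Nat.cast_mul]
  have hj3 : j3 = -(((r / c * v / b : ℕ)) : ℤ) := by
    apply mul_right_cancel₀ hbZ
    rw [neg_mul, hvb]; linarith [h3y]
  refine ⟨ham, hbn, hcr, hans, hbrv, ?_⟩
  rw [hj3] at h3x
  exact ⟨-i3, by linarith [h3x]⟩

lemma ker_le_L3_of_cond (m n r a b c s u v : ℕ)
    (ha : 0 < a) (hb : 0 < b) (hc : 0 < c)
    (h1 : a ∣ m) (h2 : b ∣ n) (h3 : c ∣ r)
    (h4 : a ∣ (n / b) * s) (h5 : b ∣ (r / c) * v)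
    (h6 : (a:ℤ) ∣ ((r / c : ℕ) : ℤ) * u - ((r / c * v / b : ℕ) : ℤ) * s) :
    (castHom3 m n r).ker ≤ L3 a b c s u v := by
  have hg1 : ((m:ℤ), (0:ℤ), (0:ℤ)) ∈ L3 a b c s u v := by
    refine ⟨((m / a : ℕ) : ℤ), 0, 0, ?_⟩
    have hma : ((m / a : ℕ) : ℤ) * a = m := by
      rw [← Nat.cast_mul, Nat.div_mul_cancel h1]
    simp only [Prod.mk.injEq]
    refine ⟨by linarith [hma], by ring, by ring⟩
  have hg2 : ((0:ℤ), (n:ℤ), (0:ℤ)) ∈ L3 a b c s u v := by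
    refine ⟨-(((n / b * s / a : ℕ)) : ℤ), ((n / b : ℕ) : ℤ), 0, ?_⟩
    have habs : ((n / b * s / a : ℕ) : ℤ) * a = ((n / b : ℕ) : ℤ) * s := by
      rw [← Nat.cast_mul, Nat.div_mul_cancel h4, Nat.cast_mul]
    have hnb : ((n / b : ℕ) : ℤ) * b = n := by
      rw [← Nat.cast_mul, Nat.div_mul_cancel h2]
    simp only [Prod.mk.injEq]
    refine ⟨by linarith [habs], by linarith [hnb], by ring⟩
  have hg3 : ((0:ℤ), (0:ℤ), (r:ℤ)) ∈ L3 a b c s u v := by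
    obtain ⟨w₁, hw₁⟩ := h6
    refine ⟨-w₁, -(((r / c * v / b : ℕ)) : ℤ), ((r / c : ℕ) : ℤ), ?_⟩
    have hvb : ((r / c * v / b : ℕ) : ℤ) * b = ((r / c : ℕ) : ℤ) * v := by
      rw [← Nat.cast_mul, Nat.div_mul_cancel h5, Nat.cast_mul]
    have hrc : ((r / c : ℕ) : ℤ) * c = r := by
      rw [← Nat.cast_mul, Nat.div_mul_cancel h3]
    simp only [Prod.mk.injEq]
    refine ⟨by linarith [hw₁], by linarith [hvb], by linarith [hrc]⟩
  intro p hp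
  rw [mem_ker_castHom3] at hp
  obtain ⟨⟨x, hx⟩, ⟨y, hy⟩, ⟨z, hz⟩⟩ := hp
  have hdecomp : p = x • ((m:ℤ), (0:ℤ), (0:ℤ)) + y • ((0:ℤ), (n:ℤ), (0:ℤ))
      + z • ((0:ℤ), (0:ℤ), (r:ℤ)) := by
    refine Prod.ext ?_ (Prod.ext ?_ ?_)
    · show p.1 = (x • ((m:ℤ), (0:ℤ), (0:ℤ)) + y • ((0:ℤ), (n:ℤ), (0:ℤ))
        + z • ((0:ℤ), (0:ℤ), (r:ℤ))).1
      simp [smul_eq_mul, hx]; ring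
    · show p.2.1 = _
      simp [smul_eq_mul, hy]; ring
    · show p.2.2 = _
      simp [smul_eq_mul, hz]; ring
  rw [hdecomp]
  exact add_mem (add_mem (AddSubgroup.zsmul_mem _ hg1 x) (AddSubgroup.zsmul_mem _ hg2 y))
    (AddSubgroup.zsmul_mem _ hg3 z)

lemma L3_fst_dvd (a b c s u v : ℕ) (hb : 0 < b) (hc : 0 < c) (x : ℤ)
    (hx : (x, (0:ℤ), (0:ℤ)) ∈ L3 a b c s u v) : (a:ℤ) ∣ x := by
  have hbZ : (b:ℤ) ≠ 0 := by exact_mod_cast hb.ne'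
  have hcZ : (c:ℤ) ≠ 0 := by exact_mod_cast hc.ne'
  obtain ⟨i, j, k, hh⟩ := hx
  rw [Prod.ext_iff, Prod.ext_iff] at hh
  have h1 := hh.1
  have h2 := hh.2.1
  have h3 := hh.2.2
  dsimp only at h1 h2 h3
  have hk : k = 0 := by
    rcases mul_eq_zero.mp h3.symm with h | h
    · exact h
    · exact absurd h hcZ
  have hj : j = 0 := by
    rw [hk, zero_mul, add_zero] at h2
    rcases mul_eq_zero.mp h2.symm with h | h
    · exact h
    · exact absurd h hbZ
  rw [hk, hj] at h1
  exact ⟨i, by rw [h1]; ring⟩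

lemma L3_snd_dvd (a b c s u v : ℕ) (hc : 0 < c) (x y : ℤ)
    (hx : (x, y, (0:ℤ)) ∈ L3 a b c s u v) : (b:ℤ) ∣ y := by
  have hcZ : (c:ℤ) ≠ 0 := by exact_mod_cast hc.ne'
  obtain ⟨i, j, k, hh⟩ := hx
  rw [Prod.ext_iff, Prod.ext_iff] at hh
  have h2 := hh.2.1
  have h3 := hh.2.2
  dsimp only at h2 h3
  have hk : k = 0 := by
    rcases mul_eq_zero.mp h3.symm with h | h
    · exact h
    · exact absurd h hcZ
  rw [hk, zero_mul, add_zero] at h2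
  exact ⟨j, by rw [h2]; ring⟩

lemma L3_trd_dvd (a b c s u v : ℕ) (p : ℤ × ℤ × ℤ)
    (hp : p ∈ L3 a b c s u v) : (c:ℤ) ∣ p.2.2 := by
  obtain ⟨i, j, k, hh⟩ := hp
  rw [Prod.ext_iff, Prod.ext_iff] at hh
  have h3 := hh.2.2
  dsimp only at h3
  exact ⟨k, by rw [h3]; ring⟩

lemma L3_self_g1 (a b c s u v : ℕ) : (((a:ℕ):ℤ), (0:ℤ), (0:ℤ)) ∈ L3 a b c s u v :=
  ⟨1, 0, 0, by simp only [Prod.mk.injEq]; refine ⟨by ring, by ring, by ring⟩⟩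

lemma L3_self_g2 (a b c s u v : ℕ) : (((s:ℕ):ℤ), ((b:ℕ):ℤ), (0:ℤ)) ∈ L3 a b c s u v :=
  ⟨0, 1, 0, by simp only [Prod.mk.injEq]; refine ⟨by ring, by ring, by ring⟩⟩

lemma L3_self_g3 (a b c s u v : ℕ) : (((u:ℕ):ℤ), ((v:ℕ):ℤ), ((c:ℕ):ℤ)) ∈ L3 a b c s u v :=
  ⟨0, 0, 1, by simp only [Prod.mk.injEq]; refine ⟨by ring, by ring, by ring⟩⟩

lemma L3_inj (a b c s u v a' b' c' s' u' v' : ℕ)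
    (ha : 0 < a) (hb : 0 < b) (hc : 0 < c)
    (ha' : 0 < a') (hb' : 0 < b') (hc' : 0 < c')
    (hs : s < a) (hu : u < a) (hv : v < b)
    (hs' : s' < a') (hu' : u' < a') (hv' : v' < b')
    (h : L3 a b c s u v = L3 a' b' c' s' u' v') :
    a = a' ∧ b = b' ∧ c = c' ∧ s = s' ∧ u = u' ∧ v = v' := by
  have haa : a = a' := by
    apply Nat.dvd_antisymm
    · exact Int.natCast_dvd_natCast.mp (L3_fst_dvd a b c s u v hb hc _
        (h.symm ▸ L3_self_g1 a' b' c' s' u' v'))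
    · exact Int.natCast_dvd_natCast.mp (L3_fst_dvd a' b' c' s' u' v' hb' hc' _
        (h ▸ L3_self_g1 a b c s u v))
  have hbb : b = b' := by
    apply Nat.dvd_antisymm
    · exact Int.natCast_dvd_natCast.mp (L3_snd_dvd a b c s u v hc _ _
        (h.symm ▸ L3_self_g2 a' b' c' s' u' v'))
    · exact Int.natCast_dvd_natCast.mp (L3_snd_dvd a' b' c' s' u' v' hc' _ _
        (h ▸ L3_self_g2 a b c s u v))
  have hcc : c = c' := by
    apply Nat.dvd_antisymm
    · exact Int.natCast_dvd_natCast.mp (L3_trd_dvd a b c s u v _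
        (h.symm ▸ L3_self_g3 a' b' c' s' u' v'))
    · exact Int.natCast_dvd_natCast.mp (L3_trd_dvd a' b' c' s' u' v' _
        (h ▸ L3_self_g3 a b c s u v))
  have haZ : (a:ℤ) ≠ 0 := by exact_mod_cast ha.ne'
  have hbZ : (b:ℤ) ≠ 0 := by exact_mod_cast hb.ne'
  have hcZ : (c:ℤ) ≠ 0 := by exact_mod_cast hc.ne'
  -- s = s'
  have hg2' := h ▸ L3_self_g2 a b c s u v
  obtain ⟨i, j, k, hh⟩ := hg2'
  rw [Prod.ext_iff, Prod.ext_iff] at hh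
  have h1 := hh.1
  have h2 := hh.2.1
  have h3 := hh.2.2
  dsimp only at h1 h2 h3
  have hk : k = 0 := by
    rcases mul_eq_zero.mp h3.symm with hx | hx
    · exact hx
    · exact absurd hx (by rw [← hcc]; exact hcZ)
  rw [hk, zero_mul, add_zero] at h2 h1
  have hj : j = 1 := by
    rw [← hbb] at h2
    have : j * (b:ℤ) = 1 * b := by rw [← h2]; ring
    exact mul_right_cancel₀ hbZ this
  have hss : s = s' := by
    apply int_eq_of_dvd_of_lt a s s' hs (haa ▸ hs')
    rw [hj, one_mul] at h1
    refine ⟨i, ?_⟩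
    rw [haa]; rw [h1]; ring
  -- v, u
  have hg3' := h ▸ L3_self_g3 a b c s u v
  obtain ⟨i', j', k', hh'⟩ := hg3'
  rw [Prod.ext_iff, Prod.ext_iff] at hh'
  have h1' := hh'.1
  have h2' := hh'.2.1
  have h3' := hh'.2.2
  dsimp only at h1' h2' h3'
  have hk' : k' = 1 := by
    rw [← hcc] at h3'
    have : k' * (c:ℤ) = 1 * c := by rw [← h3']; ring
    exact mul_right_cancel₀ hcZ this
  rw [hk', one_mul] at h2' h1'
  have hvv : v = v' := by
    apply int_eq_of_dvd_of_lt b v v' hv (hbb ▸ hv')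
    refine ⟨j', ?_⟩
    rw [hbb]; rw [h2']; ring
  have hj' : j' = 0 := by
    rw [← hbb, ← hvv] at h2'
    have : j' * (b:ℤ) = 0 := by linarith [h2']
    rcases mul_eq_zero.mp this with hx | hx
    · exact hx
    · exact absurd hx hbZ
  have huu : u = u' := by
    apply int_eq_of_dvd_of_lt a u u' hu (haa ▸ hu')
    rw [hj', zero_mul, add_zero] at h1'
    refine ⟨i', ?_⟩
    rw [haa]; rw [h1']; ring
  exact ⟨haa, hbb, hcc, hss, huu, hvv⟩

def inl12 : ℤ × ℤ →+ ℤ × ℤ × ℤ where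
  toFun p := (p.1, p.2, 0)
  map_zero' := rfl
  map_add' p q := by
    refine Prod.ext rfl (Prod.ext rfl ?_)
    show (0:ℤ) = 0 + 0
    ring

def fst1 : ℤ →+ ℤ × ℤ × ℤ where
  toFun x := (x, 0, 0)
  map_zero' := rfl
  map_add' p q := by
    refine Prod.ext rfl (Prod.ext ?_ ?_)
    · show (0:ℤ) = 0 + 0; ring
    · show (0:ℤ) = 0 + 0; ring

def trd3 : ℤ × ℤ × ℤ →+ ℤ := (AddMonoidHom.snd ℤ ℤ).comp (AddMonoidHom.snd ℤ (ℤ × ℤ))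

lemma exists_params (m n r : ℕ) (hm : 0 < m) (hn : 0 < n) (hr : 0 < r)
    (L : AddSubgroup (ℤ × ℤ × ℤ)) (hK : (castHom3 m n r).ker ≤ L) :
    ∃ a b c s u v : ℕ, 0 < a ∧ 0 < b ∧ 0 < c ∧ s < a ∧ u < a ∧ v < b ∧
      L = L3 a b c s u v := by
  have hmemM : (((m:ℕ):ℤ), (0:ℤ), (0:ℤ)) ∈ L := by
    apply hK; rw [mem_ker_castHom3]; exact ⟨dvd_rfl, dvd_zero _, dvd_zero _⟩
  have hmemN : ((0:ℤ), ((n:ℕ):ℤ), (0:ℤ)) ∈ L := by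
    apply hK; rw [mem_ker_castHom3]; exact ⟨dvd_zero _, dvd_rfl, dvd_zero _⟩
  have hmemR : ((0:ℤ), (0:ℤ), ((r:ℕ):ℤ)) ∈ L := by
    apply hK; rw [mem_ker_castHom3]; exact ⟨dvd_zero _, dvd_zero _, dvd_rfl⟩
  -- c from third projection
  obtain ⟨c, hcpos, hcr, hcH, hcall⟩ := exists_gen (L.map trd3) r hr
    ⟨((0:ℤ), (0:ℤ), ((r:ℕ):ℤ)), hmemR, rfl⟩
  have hcall' : ∀ p ∈ L, (c:ℤ) ∣ p.2.2 := fun p hp => hcall _ ⟨p, hp, rfl⟩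
  obtain ⟨p₀, hp₀L, hp₀⟩ := hcH
  -- b, s₀ from middle
  have hL2mem : ∀ x y : ℤ, (x, y, (0:ℤ)) ∈ L ↔ (x, y) ∈ L.comap inl12 := by
    intro x y; rfl
  obtain ⟨b, hbpos, hbn, hbH, hball0⟩ := exists_gen ((L.comap inl12).map (AddMonoidHom.snd ℤ ℤ))
    n hn ⟨((0:ℤ), ((n:ℕ):ℤ)), (hL2mem 0 n).mp hmemN, rfl⟩
  have hball : ∀ x y : ℤ, (x, y, (0:ℤ)) ∈ L → (b:ℤ) ∣ y := fun x y hxy =>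
    hball0 _ ⟨(x, y), (hL2mem x y).mp hxy, rfl⟩
  obtain ⟨q₀, hq₀L, hq₀⟩ := hbH
  have hq₀L' : (q₀.1, ((b:ℕ):ℤ), (0:ℤ)) ∈ L := by
    have h3 : (q₀.1, q₀.2, (0:ℤ)) ∈ L := hq₀L
    have h4 : q₀.2 = ((b:ℕ):ℤ) := hq₀
    rw [h4] at h3
    exact h3
  -- a from first
  have hL1mem : ∀ x : ℤ, (x, (0:ℤ), (0:ℤ)) ∈ L ↔ x ∈ L.comap fst1 := by
    intro x; rfl
  obtain ⟨a, hapos, ham, haH, haall0⟩ := exists_gen (L.comap fst1) m hm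
    ((hL1mem m).mp hmemM)
  have haall : ∀ x : ℤ, (x, (0:ℤ), (0:ℤ)) ∈ L → (a:ℤ) ∣ x := fun x hx =>
    haall0 _ ((hL1mem x).mp hx)
  have haL : (((a:ℕ):ℤ), (0:ℤ), (0:ℤ)) ∈ L := (hL1mem a).mpr haH
  have haZ : (0:ℤ) < a := by exact_mod_cast hapos
  have hbZ : (0:ℤ) < b := by exact_mod_cast hbpos
  have hcZ : (0:ℤ) < c := by exact_mod_cast hcpos
  -- canonical s
  set s₁ : ℤ := q₀.1 % a with hs₁
  have hs₁mem : (s₁, ((b:ℕ):ℤ), (0:ℤ)) ∈ L := by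
    have h := L.sub_mem hq₀L' (L.zsmul_mem haL (q₀.1 / a))
    have heq : (q₀.1, ((b:ℕ):ℤ), (0:ℤ)) - (q₀.1 / a) • (((a:ℕ):ℤ), (0:ℤ), (0:ℤ))
        = (s₁, ((b:ℕ):ℤ), (0:ℤ)) := by
      refine Prod.ext ?_ (Prod.ext ?_ ?_)
      · show q₀.1 - (q₀.1 / a) • ((a:ℕ):ℤ) = s₁
        rw [zsmul_eq_mul, Int.cast_id, hs₁, Int.emod_def]; ring
      · show ((b:ℕ):ℤ) - (q₀.1 / a) • (0:ℤ) = ((b:ℕ):ℤ)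
        rw [smul_zero, sub_zero]
      · show (0:ℤ) - (q₀.1 / a) • (0:ℤ) = (0:ℤ)
        rw [smul_zero, sub_zero]
    rw [heq] at h; exact h
  have hs₁nn : 0 ≤ s₁ := Int.emod_nonneg _ haZ.ne'
  have hs₁lt : s₁ < a := Int.emod_lt_of_pos _ haZ
  -- canonical u, v
  have hp₀' : (p₀.1, p₀.2.1, ((c:ℕ):ℤ)) ∈ L := by
    have : p₀ = (p₀.1, p₀.2.1, ((c:ℕ):ℤ)) := by
      refine Prod.ext rfl (Prod.ext rfl ?_)
      show p₀.2.2 = ((c:ℕ):ℤ)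
      rw [← hp₀]; rfl
    rw [← this]; exact hp₀L
  set v₁ : ℤ := p₀.2.1 % b with hv₁
  set u₁ : ℤ := p₀.1 - (p₀.2.1 / b) * s₁ with hu₁
  have hq1mem : (u₁, v₁, ((c:ℕ):ℤ)) ∈ L := by
    have h := L.sub_mem hp₀' (L.zsmul_mem hs₁mem (p₀.2.1 / b))
    have heq : (p₀.1, p₀.2.1, ((c:ℕ):ℤ)) - (p₀.2.1 / b) • (s₁, ((b:ℕ):ℤ), (0:ℤ))
        = (u₁, v₁, ((c:ℕ):ℤ)) := by
      refine Prod.ext ?_ (Prod.ext ?_ ?_)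
      · show p₀.1 - (p₀.2.1 / b) • s₁ = u₁
        rw [zsmul_eq_mul, Int.cast_id, hu₁]
      · show p₀.2.1 - (p₀.2.1 / b) • ((b:ℕ):ℤ) = v₁
        rw [zsmul_eq_mul, Int.cast_id, hv₁, Int.emod_def]; ring
      · show ((c:ℕ):ℤ) - (p₀.2.1 / b) • (0:ℤ) = ((c:ℕ):ℤ)
        rw [smul_zero, sub_zero]
    rw [heq] at h; exact h
  set u₂ : ℤ := u₁ % a with hu₂
  have hu₂mem : (u₂, v₁, ((c:ℕ):ℤ)) ∈ L := by
    have h := L.sub_mem hq1mem (L.zsmul_mem haL (u₁ / a))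
    have heq : (u₁, v₁, ((c:ℕ):ℤ)) - (u₁ / a) • (((a:ℕ):ℤ), (0:ℤ), (0:ℤ))
        = (u₂, v₁, ((c:ℕ):ℤ)) := by
      refine Prod.ext ?_ (Prod.ext ?_ ?_)
      · show u₁ - (u₁ / a) • ((a:ℕ):ℤ) = u₂
        rw [zsmul_eq_mul, Int.cast_id, hu₂, Int.emod_def]; ring
      · show v₁ - (u₁ / a) • (0:ℤ) = v₁
        rw [smul_zero, sub_zero]
      · show ((c:ℕ):ℤ) - (u₁ / a) • (0:ℤ) = ((c:ℕ):ℤ)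
        rw [smul_zero, sub_zero]
    rw [heq] at h; exact h
  have hv₁nn : 0 ≤ v₁ := Int.emod_nonneg _ hbZ.ne'
  have hv₁lt : v₁ < b := Int.emod_lt_of_pos _ hbZ
  have hu₂nn : 0 ≤ u₂ := Int.emod_nonneg _ haZ.ne'
  have hu₂lt : u₂ < a := Int.emod_lt_of_pos _ haZ
  refine ⟨a, b, c, s₁.toNat, u₂.toNat, v₁.toNat, hapos, hbpos, hcpos, ?_, ?_, ?_, ?_⟩
  · exact_mod_cast (Int.toNat_of_nonneg hs₁nn).symm ▸ hs₁lt
  · exact_mod_cast (Int.toNat_of_nonneg hu₂nn).symm ▸ hu₂lt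
  · exact_mod_cast (Int.toNat_of_nonneg hv₁nn).symm ▸ hv₁lt
  · -- L = L3
    have hsc : ((s₁.toNat : ℕ) : ℤ) = s₁ := Int.toNat_of_nonneg hs₁nn
    have huc : ((u₂.toNat : ℕ) : ℤ) = u₂ := Int.toNat_of_nonneg hu₂nn
    have hvc : ((v₁.toNat : ℕ) : ℤ) = v₁ := Int.toNat_of_nonneg hv₁nn
    apply le_antisymm
    · -- L ≤ L3
      intro p hp
      have hkdvd : (c:ℤ) ∣ p.2.2 := hcall' p hp
      set k : ℤ := p.2.2 / c with hkk
      have hkc : k * c = p.2.2 := Int.ediv_mul_cancel hkdvd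
      have hqmem : (p.1 - k * u₂, p.2.1 - k * v₁, (0:ℤ)) ∈ L := by
        have h := L.sub_mem hp (L.zsmul_mem hu₂mem k)
        have heq : p - k • (u₂, v₁, ((c:ℕ):ℤ)) = (p.1 - k * u₂, p.2.1 - k * v₁, (0:ℤ)) := by
          refine Prod.ext ?_ (Prod.ext ?_ ?_)
          · show p.1 - k • u₂ = p.1 - k * u₂
            rw [zsmul_eq_mul, Int.cast_id]
          · show p.2.1 - k • v₁ = p.2.1 - k * v₁
            rw [zsmul_eq_mul, Int.cast_id]
          · show p.2.2 - k • ((c:ℕ):ℤ) = 0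
            rw [zsmul_eq_mul, Int.cast_id, ← hkc]; ring
        rw [heq] at h; exact h
      have hjdvd : (b:ℤ) ∣ p.2.1 - k * v₁ := hball _ _ hqmem
      set j : ℤ := (p.2.1 - k * v₁) / b with hjj
      have hjb : j * b = p.2.1 - k * v₁ := Int.ediv_mul_cancel hjdvd
      have hq'mem : (p.1 - k * u₂ - j * s₁, (0:ℤ), (0:ℤ)) ∈ L := by
        have h := L.sub_mem hqmem (L.zsmul_mem hs₁mem j)
        have heq : (p.1 - k * u₂, p.2.1 - k * v₁, (0:ℤ)) - j • (s₁, ((b:ℕ):ℤ), (0:ℤ))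
            = (p.1 - k * u₂ - j * s₁, (0:ℤ), (0:ℤ)) := by
          refine Prod.ext ?_ (Prod.ext ?_ ?_)
          · show p.1 - k * u₂ - j • s₁ = p.1 - k * u₂ - j * s₁
            rw [zsmul_eq_mul, Int.cast_id]
          · show p.2.1 - k * v₁ - j • ((b:ℕ):ℤ) = 0
            rw [zsmul_eq_mul, Int.cast_id, ← hjb]; ring
          · show (0:ℤ) - j • (0:ℤ) = 0
            rw [smul_zero, sub_zero]
        rw [heq] at h; exact h
      have hidvd : (a:ℤ) ∣ p.1 - k * u₂ - j * s₁ := haall _ hq'mem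
      set i : ℤ := (p.1 - k * u₂ - j * s₁) / a with hii
      have hia : i * a = p.1 - k * u₂ - j * s₁ := Int.ediv_mul_cancel hidvd
      refine ⟨i, j, k, ?_⟩
      refine Prod.ext ?_ (Prod.ext ?_ ?_)
      · show p.1 = i * a + j * (s₁.toNat : ℕ) + k * (u₂.toNat : ℕ)
        rw [hsc, huc]; linarith [hia]
      · show p.2.1 = j * b + k * (v₁.toNat : ℕ)
        rw [hvc]; linarith [hjb]
      · show p.2.2 = k * c
        linarith [hkc]
    · -- L3 ≤ L
      rintro p ⟨i, j, k, rfl⟩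
      have hcomb : ((i * a + j * (s₁.toNat : ℕ) + k * (u₂.toNat : ℕ) : ℤ),
          (j * b + k * (v₁.toNat : ℕ) : ℤ), (k * c : ℤ))
          = i • (((a:ℕ):ℤ), (0:ℤ), (0:ℤ)) + j • (s₁, ((b:ℕ):ℤ), (0:ℤ))
            + k • (u₂, v₁, ((c:ℕ):ℤ)) := by
        refine Prod.ext ?_ (Prod.ext ?_ ?_)
        · show (i * a + j * (s₁.toNat : ℕ) + k * (u₂.toNat : ℕ) : ℤ)
            = i • ((a:ℕ):ℤ) + j • s₁ + k • u₂
          rw [zsmul_eq_mul, zsmul_eq_mul, zsmul_eq_mul, Int.cast_id, Int.cast_id,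
            Int.cast_id, hsc, huc]
        · show (j * b + k * (v₁.toNat : ℕ) : ℤ) = i • (0:ℤ) + j • ((b:ℕ):ℤ) + k • v₁
          rw [smul_zero, zsmul_eq_mul, zsmul_eq_mul, Int.cast_id, Int.cast_id, hvc]
          ring
        · show (k * c : ℤ) = i • (0:ℤ) + j • (0:ℤ) + k • ((c:ℕ):ℤ)
          rw [smul_zero, smul_zero, zsmul_eq_mul, Int.cast_id]
          ring
      rw [hcomb]
      exact L.add_mem (L.add_mem (L.zsmul_mem haL i) (L.zsmul_mem hs₁mem j))
        (L.zsmul_mem hu₂mem k)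

lemma comap_map_L3 (m n r a b c s u v : ℕ)
    (hker : (castHom3 m n r).ker ≤ L3 a b c s u v) :
    AddSubgroup.comap (castHom3 m n r)
      (AddSubgroup.map (castHom3 m n r) (L3 a b c s u v)) = L3 a b c s u v := by
  rw [AddSubgroup.comap_map_eq]
  exact sup_eq_left.mpr hker

lemma index_map_L3 (m n r a b c s u v : ℕ) (ha : 0 < a) (hb : 0 < b) (hc : 0 < c)
    (hker : (castHom3 m n r).ker ≤ L3 a b c s u v) :
    (AddSubgroup.map (castHom3 m n r) (L3 a b c s u v)).index = a * b * c := by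
  have h1 := AddSubgroup.index_comap_of_surjective
    (AddSubgroup.map (castHom3 m n r) (L3 a b c s u v)) (castHom3_surj m n r)
  rw [comap_map_L3 m n r a b c s u v hker] at h1
  rw [← h1, index_L3 a b c s u v ha hb hc]

lemma card_map_L3 (m n r δ a b c s u v : ℕ)
    (hm : 0 < m) (hn : 0 < n) (hr : 0 < r) (hδ : δ ∣ m * n * r) (hδpos : 0 < δ)
    (ha : 0 < a) (hb : 0 < b) (hc : 0 < c)
    (habc : a * b * c = m * n * r / δ)
    (hker : (castHom3 m n r).ker ≤ L3 a b c s u v) :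
    Nat.card (AddSubgroup.map (castHom3 m n r) (L3 a b c s u v)) = δ := by
  have hG : Nat.card (ZMod m × ZMod n × ZMod r) = m * n * r := by
    rw [Nat.card_prod, Nat.card_prod, Nat.card_zmod, Nat.card_zmod, Nat.card_zmod,
      Nat.mul_assoc]
  have h1 := AddSubgroup.card_mul_index (AddSubgroup.map (castHom3 m n r) (L3 a b c s u v))
  rw [hG, index_map_L3 m n r a b c s u v ha hb hc hker, habc] at h1
  -- h1 : Nat.card (map ...) * (m*n*r/δ) = m*n*r
  have hmnr : 0 < m * n * r := by positivity
  have hq : 0 < m * n * r / δ := Nat.div_pos (Nat.le_of_dvd hmnr hδ) hδpos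
  have h2 : δ * (m * n * r / δ) = m * n * r := Nat.mul_div_cancel' hδ
  have := Nat.eq_of_mul_eq_mul_right hq (h1.trans h2.symm)
  exact this

/-- For `δ ∣ mnr`, the number of subgroups of order `δ` of `ℤ_m × ℤ_n × ℤ_r` equals
`Σ (A·B·C/X²)·P(X)`, the sum over all triples `(a,b,c)` with `a ∣ m`, `b ∣ n`, `c ∣ r`
and `a·b·c = mnr/δ`, where `A = gcd(a, n/b)`, `B = gcd(b, r/c)`, `C = gcd(a, r/c)` and
`X = ABC / gcd(a·(r/c), ABC)`. -/
theorem card_addSubgroups_order (m n r : ℕ) (hm : 0 < m) (hn : 0 < n) (hr : 0 < r)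
    (δ : ℕ) (hδ : δ ∣ m * n * r) (hδpos : 0 < δ) :
    Nat.card {V : AddSubgroup (ZMod m × ZMod n × ZMod r) // Nat.card V = δ} =
      ∑ a ∈ m.divisors, ∑ b ∈ n.divisors, ∑ c ∈ r.divisors,
        if a * b * c = m * n * r / δ then
          (Nat.gcd a (n / b) * Nat.gcd b (r / c) * Nat.gcd a (r / c) /
              (Nat.gcd a (n / b) * Nat.gcd b (r / c) * Nat.gcd a (r / c) /
                Nat.gcd (a * (r / c))
                  (Nat.gcd a (n / b) * Nat.gcd b (r / c) * Nat.gcd a (r / c))) ^ 2) *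
            P (Nat.gcd a (n / b) * Nat.gcd b (r / c) * Nat.gcd a (r / c) /
                Nat.gcd (a * (r / c))
                  (Nat.gcd a (n / b) * Nat.gcd b (r / c) * Nat.gcd a (r / c)))
        else 0 := by
  classical
  set inner : ℕ × ℕ × ℕ → Finset (ℕ × ℕ × ℕ) := fun abc =>
    (Finset.range abc.1 ×ˢ Finset.range abc.1 ×ˢ Finset.range abc.2.1).filter (fun t =>
      abc.1 ∣ (n / abc.2.1) * t.1 ∧ abc.2.1 ∣ (r / abc.2.2) * t.2.2 ∧
      ((abc.1:ℤ) ∣ ((r / abc.2.2 : ℕ) : ℤ) * t.2.1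
        - ((r / abc.2.2 * t.2.2 / abc.2.1 : ℕ) : ℤ) * t.1)) with hinner
  set T : Finset (Σ _ : ℕ × ℕ × ℕ, ℕ × ℕ × ℕ) :=
    ((m.divisors ×ˢ n.divisors ×ˢ r.divisors).filter
      (fun abc => abc.1 * abc.2.1 * abc.2.2 = m * n * r / δ)).sigma inner with hT
  have hdec : ∀ (abc suv : ℕ × ℕ × ℕ), ((⟨abc, suv⟩ : Σ _ : ℕ × ℕ × ℕ, ℕ × ℕ × ℕ) ∈ T) ↔
      (abc.1 ∣ m ∧ abc.2.1 ∣ n ∧ abc.2.2 ∣ r ∧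
        abc.1 * abc.2.1 * abc.2.2 = m * n * r / δ ∧
        suv.1 < abc.1 ∧ suv.2.1 < abc.1 ∧ suv.2.2 < abc.2.1 ∧
        abc.1 ∣ (n / abc.2.1) * suv.1 ∧ abc.2.1 ∣ (r / abc.2.2) * suv.2.2 ∧
        ((abc.1:ℤ) ∣ ((r / abc.2.2 : ℕ) : ℤ) * suv.2.1
          - ((r / abc.2.2 * suv.2.2 / abc.2.1 : ℕ) : ℤ) * suv.1)) := by
    intro abc suv
    rw [hT, Finset.mem_sigma, Finset.mem_filter, Finset.mem_product, Finset.mem_product]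
    rw [hinner]
    simp only [Finset.mem_filter, Finset.mem_product, Finset.mem_range, Nat.mem_divisors]
    constructor
    · rintro ⟨⟨⟨⟨h1, _⟩, ⟨h2, _⟩, ⟨h3, _⟩⟩, h4⟩, ⟨⟨h5, h6, h7⟩, h8, h9, h10⟩⟩
      exact ⟨h1, h2, h3, h4, h5, h6, h7, h8, h9, h10⟩
    · rintro ⟨h1, h2, h3, h4, h5, h6, h7, h8, h9, h10⟩
      exact ⟨⟨⟨⟨h1, hm.ne'⟩, ⟨h2, hn.ne'⟩, ⟨h3, hr.ne'⟩⟩, h4⟩, ⟨⟨h5, h6, h7⟩, h8, h9, h10⟩⟩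
  -- counting T
  have hTcard : T.card =
      ∑ a ∈ m.divisors, ∑ b ∈ n.divisors, ∑ c ∈ r.divisors,
        if a * b * c = m * n * r / δ then
          (Nat.gcd a (n / b) * Nat.gcd b (r / c) * Nat.gcd a (r / c) /
              (Nat.gcd a (n / b) * Nat.gcd b (r / c) * Nat.gcd a (r / c) /
                Nat.gcd (a * (r / c))
                  (Nat.gcd a (n / b) * Nat.gcd b (r / c) * Nat.gcd a (r / c))) ^ 2) *
            P (Nat.gcd a (n / b) * Nat.gcd b (r / c) * Nat.gcd a (r / c) /
                Nat.gcd (a * (r / c))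
                  (Nat.gcd a (n / b) * Nat.gcd b (r / c) * Nat.gcd a (r / c)))
        else 0 := by
    rw [hT, Finset.card_sigma, Finset.sum_filter]
    rw [Finset.sum_product]
    refine Finset.sum_congr rfl (fun a ha => ?_)
    rw [Finset.sum_product]
    refine Finset.sum_congr rfl (fun b hb => ?_)
    refine Finset.sum_congr rfl (fun c hc => ?_)
    rw [Nat.mem_divisors] at ha hb hc
    have hapos : 0 < a := Nat.pos_of_dvd_of_pos ha.1 hm
    have hbpos : 0 < b := Nat.pos_of_dvd_of_pos hb.1 hn
    have hcpos : 0 < c := Nat.pos_of_dvd_of_pos hc.1 hr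
    have hn' : 0 < n / b := Nat.div_pos (Nat.le_of_dvd hn hb.1) hbpos
    have hr' : 0 < r / c := Nat.div_pos (Nat.le_of_dvd hr hc.1) hcpos
    rw [hinner]
    rw [Ncount a b (n / b) (r / c) hapos hbpos hn' hr']
  -- the bijection
  have hcardx : ∀ x : ↥T, Nat.card
      (AddSubgroup.map (castHom3 m n r)
        (L3 x.1.1.1 x.1.1.2.1 x.1.1.2.2 x.1.2.1 x.1.2.2.1 x.1.2.2.2)) = δ := by
    rintro ⟨⟨⟨a, b, c⟩, s, u, v⟩, hx⟩
    rw [hdec] at hx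
    obtain ⟨h1, h2, h3, h4, h5, h6, h7, h8, h9, h10⟩ := hx
    have hapos : 0 < a := Nat.pos_of_dvd_of_pos h1 hm
    have hbpos : 0 < b := Nat.pos_of_dvd_of_pos h2 hn
    have hcpos : 0 < c := Nat.pos_of_dvd_of_pos h3 hr
    exact card_map_L3 m n r δ a b c s u v hm hn hr hδ hδpos hapos hbpos hcpos h4
      (ker_le_L3_of_cond m n r a b c s u v hapos hbpos hcpos h1 h2 h3 h8 h9 h10)
  have hbijcard : Nat.card {V : AddSubgroup (ZMod m × ZMod n × ZMod r) // Nat.card V = δ}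
      = T.card := by
    rw [← Nat.card_eq_finsetCard]
    refine Nat.card_congr (Equiv.symm (Equiv.ofBijective
      (fun x => ⟨AddSubgroup.map (castHom3 m n r)
        (L3 x.1.1.1 x.1.1.2.1 x.1.1.2.2 x.1.2.1 x.1.2.2.1 x.1.2.2.2), hcardx x⟩) ⟨?_, ?_⟩))
    · -- injective
      rintro ⟨⟨⟨a, b, c⟩, s, u, v⟩, hx⟩ ⟨⟨⟨a', b', c'⟩, s', u', v'⟩, hy⟩ hxy
      have hmapeq : AddSubgroup.map (castHom3 m n r) (L3 a b c s u v)
          = AddSubgroup.map (castHom3 m n r) (L3 a' b' c' s' u' v') := congrArg Subtype.val hxy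
      rw [hdec] at hx hy
      obtain ⟨h1, h2, h3, h4, h5, h6, h7, h8, h9, h10⟩ := hx
      obtain ⟨h1', h2', h3', h4', h5', h6', h7', h8', h9', h10'⟩ := hy
      have hapos : 0 < a := Nat.pos_of_dvd_of_pos h1 hm
      have hbpos : 0 < b := Nat.pos_of_dvd_of_pos h2 hn
      have hcpos : 0 < c := Nat.pos_of_dvd_of_pos h3 hr
      have hapos' : 0 < a' := Nat.pos_of_dvd_of_pos h1' hm
      have hbpos' : 0 < b' := Nat.pos_of_dvd_of_pos h2' hn
      have hcpos' : 0 < c' := Nat.pos_of_dvd_of_pos h3' hr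
      have hL3eq : L3 a b c s u v = L3 a' b' c' s' u' v' := by
        have e1 := comap_map_L3 m n r a b c s u v
          (ker_le_L3_of_cond m n r a b c s u v hapos hbpos hcpos h1 h2 h3 h8 h9 h10)
        have e2 := comap_map_L3 m n r a' b' c' s' u' v'
          (ker_le_L3_of_cond m n r a' b' c' s' u' v' hapos' hbpos' hcpos' h1' h2' h3' h8' h9' h10')
        rw [← e1, ← e2, hmapeq]
      obtain ⟨ea, eb, ec, es, eu, ev⟩ := L3_inj a b c s u v a' b' c' s' u' v'
        hapos hbpos hcpos hapos' hbpos' hcpos' h5 h6 h7 h5' h6' h7' hL3eq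
      subst ea; subst eb; subst ec; subst es; subst eu; subst ev
      rfl
    · -- surjective
      rintro ⟨V, hV⟩
      set L := AddSubgroup.comap (castHom3 m n r) V with hL
      have hker : (castHom3 m n r).ker ≤ L := by
        intro x hx
        rw [AddMonoidHom.mem_ker] at hx
        rw [hL, AddSubgroup.mem_comap, hx]
        exact V.zero_mem
      obtain ⟨a, b, c, s, u, v, hapos, hbpos, hcpos, hs, hu, hv, hLeq⟩ :=
        exists_params m n r hm hn hr L hker
      have hkerL3 : (castHom3 m n r).ker ≤ L3 a b c s u v := hLeq ▸ hker
      obtain ⟨h1, h2, h3, h8, h9, h10⟩ :=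
        L3_cond_of_ker_le m n r a b c s u v hm hn hr hapos hbpos hcpos hkerL3
      have hVmap : AddSubgroup.map (castHom3 m n r) (L3 a b c s u v) = V := by
        rw [← hLeq, hL]
        exact AddSubgroup.map_comap_eq_self_of_surjective (castHom3_surj m n r) V
      have hVindex : V.index = a * b * c := by
        rw [← hVmap]
        exact index_map_L3 m n r a b c s u v hapos hbpos hcpos hkerL3
      have h4 : a * b * c = m * n * r / δ := by
        have hG : Nat.card (ZMod m × ZMod n × ZMod r) = m * n * r := by
          rw [Nat.card_prod, Nat.card_prod, Nat.card_zmod, Nat.card_zmod, Nat.card_zmod,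
            Nat.mul_assoc]
        have hcm := AddSubgroup.card_mul_index V
        rw [hG, hV, hVindex] at hcm
        rw [← hcm, Nat.mul_div_cancel_left _ hδpos]
      refine ⟨⟨⟨⟨a, b, c⟩, s, u, v⟩, ?_⟩, ?_⟩
      · rw [hdec]
        exact ⟨h1, h2, h3, h4, hs, hu, hv, h8, h9, h10⟩
      · exact Subtype.ext hVmap
  rw [hbijcard, hTcard]
end

section
/- For every n ∈ ℕ+, s(n) ≤ n²·(τ(n))⁴, where s(n) denotes the total number of subgroups of ℤ_n × ℤ_n × ℤ_n and τ(n) is the number of positive divisors of n. -/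
section Enc

variable {C B : Type*} [AddCommGroup C] [AddCommGroup B]

/-- The projection of a subgroup of `C × B` to the first factor. -/
noncomputable def encH (S : AddSubgroup (C × B)) : AddSubgroup C :=
  S.map (AddMonoidHom.fst C B)

/-- The part of a subgroup of `C × B` lying over `0` in the first factor. -/
noncomputable def encJ (S : AddSubgroup (C × B)) : AddSubgroup B :=
  S.comap (AddMonoidHom.inr C B)

lemma mem_encH {S : AddSubgroup (C × B)} {y : C} :
    y ∈ encH S ↔ ∃ b, (y, b) ∈ S := by
  constructor
  · rintro ⟨⟨y', b⟩, h, rfl⟩; exact ⟨b, h⟩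
  · rintro ⟨b, h⟩; exact ⟨(y, b), h, rfl⟩

lemma mem_encJ {S : AddSubgroup (C × B)} {b : B} : b ∈ encJ S ↔ ((0 : C), b) ∈ S := Iff.rfl

open scoped Classical in
/-- Choose a second coordinate over a first coordinate. -/
noncomputable def pick (S : AddSubgroup (C × B)) (y : C) : B :=
  if h : ∃ b, (y, b) ∈ S then h.choose else 0

lemma pick_mem {S : AddSubgroup (C × B)} {y : C} (h : ∃ b, (y, b) ∈ S) :
    (y, pick S y) ∈ S := by
  rw [pick, dif_pos h]
  exact h.choose_spec

lemma mk_eq_mk_pick {S : AddSubgroup (C × B)} {y : C} {b : B} (h : (y, b) ∈ S) :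
    (QuotientAddGroup.mk b : B ⧸ encJ S) = QuotientAddGroup.mk (pick S y) := by
  rw [QuotientAddGroup.eq_iff_sub_mem]
  have h2 : (y, pick S y) ∈ S := pick_mem ⟨b, h⟩
  have h3 : ((y, b) - (y, pick S y)) ∈ S := sub_mem h h2
  have h4 : ((y, b) - (y, pick S y)) = ((0 : C), b - pick S y) := by
    ext <;> simp
  rw [h4] at h3
  exact h3

/-- The graph homomorphism of a subgroup of `C × B`. -/
noncomputable def encF (S : AddSubgroup (C × B)) : encH S →+ B ⧸ encJ S where
  toFun y := QuotientAddGroup.mk (pick S y.1)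
  map_zero' := by
    have : ((0 : C), (0 : B)) ∈ S := S.zero_mem
    have h := mk_eq_mk_pick this
    exact h.symm.trans rfl
  map_add' := by
    rintro ⟨y, hy⟩ ⟨z, hz⟩
    have hyp : (y, pick S y) ∈ S := pick_mem (mem_encH.mp hy)
    have hzp : (z, pick S z) ∈ S := pick_mem (mem_encH.mp hz)
    have hsum : (y + z, pick S y + pick S z) ∈ S := by
      have := S.add_mem hyp hzp
      simpa using this
    have h := mk_eq_mk_pick hsum
    simp only [AddSubgroup.coe_add]
    rw [← h]
    rfl

/-- Encoding of subgroups of `C × B`. -/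
noncomputable def enc (S : AddSubgroup (C × B)) :
    Σ (H : AddSubgroup C), Σ (J : AddSubgroup B), (H →+ B ⧸ J) :=
  ⟨encH S, encJ S, encF S⟩

/-- Decoding. -/
noncomputable def dec (x : Σ (H : AddSubgroup C), Σ (J : AddSubgroup B), (H →+ B ⧸ J)) :
    AddSubgroup (C × B) where
  carrier := {p | ∃ h : p.1 ∈ x.1, x.2.2 ⟨p.1, h⟩ = QuotientAddGroup.mk p.2}
  zero_mem' := ⟨x.1.zero_mem, map_zero x.2.2⟩
  add_mem' := by
    rintro ⟨a1, a2⟩ ⟨b1, b2⟩ ⟨ha, hfa⟩ ⟨hb, hfb⟩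
    refine ⟨x.1.add_mem ha hb, ?_⟩
    have h := map_add x.2.2 ⟨a1, ha⟩ ⟨b1, hb⟩
    rw [hfa, hfb] at h
    exact h
  neg_mem' := by
    rintro ⟨a1, a2⟩ ⟨ha, hfa⟩
    refine ⟨x.1.neg_mem ha, ?_⟩
    have h := map_neg x.2.2 ⟨a1, ha⟩
    rw [hfa] at h
    exact h

lemma dec_enc (S : AddSubgroup (C × B)) : dec (enc S) = S := by
  ext ⟨y, b⟩
  constructor
  · rintro ⟨h, hf⟩
    have hpick : (y, pick S y) ∈ S := pick_mem (mem_encH.mp h)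
    have hf' : (QuotientAddGroup.mk (pick S y) : B ⧸ encJ S) = QuotientAddGroup.mk b := hf
    rw [QuotientAddGroup.eq_iff_sub_mem] at hf'
    have h0 : ((0 : C), pick S y - b) ∈ S := hf'
    have := S.sub_mem hpick h0
    simpa using this
  · intro h
    refine ⟨mem_encH.mpr ⟨b, h⟩, (mk_eq_mk_pick h).symm⟩

lemma enc_injective : Function.Injective (enc (C := C) (B := B)) :=
  Function.LeftInverse.injective dec_enc

/-- Encoding of pairs (subgroup, coset). -/
noncomputable def encQ (p : Σ (J : AddSubgroup (C × B)), (C × B) ⧸ J) :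
    Σ (H : AddSubgroup C), Σ (J₁ : AddSubgroup B),
      ((H →+ B ⧸ J₁) × (C ⧸ H) × (B ⧸ J₁)) :=
  ⟨encH p.1, encJ p.1,
    (encF p.1,
     QuotientAddGroup.mk p.2.out.1,
     QuotientAddGroup.mk (p.2.out.2 -
       pick p.1 (p.2.out.1 - (QuotientAddGroup.mk p.2.out.1 : C ⧸ encH p.1).out)))⟩

/-- Projection extracting the `enc` data from `encQ` data. -/
noncomputable def projQ (x : Σ (H : AddSubgroup C), Σ (J₁ : AddSubgroup B),
      ((H →+ B ⧸ J₁) × (C ⧸ H) × (B ⧸ J₁))) :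
    Σ (H : AddSubgroup C), Σ (J : AddSubgroup B), (H →+ B ⧸ J) :=
  ⟨x.1, x.2.1, x.2.2.1⟩

lemma encQ_injective : Function.Injective (encQ (C := C) (B := B)) := by
  rintro ⟨J, c⟩ ⟨J', c'⟩ h
  have hJ : J = J' := enc_injective (congrArg (projQ (C := C) (B := B)) h)
  subst hJ
  obtain ⟨-, h⟩ := Sigma.ext_iff.mp h
  replace h := eq_of_heq h
  obtain ⟨-, h⟩ := Sigma.ext_iff.mp h
  replace h := eq_of_heq h
  have h2 := congrArg (fun z => z.2.1) h
  have h3 := congrArg (fun z => z.2.2) h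
  simp only [encQ] at h2 h3
  clear h
  set u := c.out.1 with hu
  set v := c.out.2 with hv
  set u' := c'.out.1 with hu'
  set v' := c'.out.2 with hv'
  set w := (QuotientAddGroup.mk u : C ⧸ encH J).out with hwdef
  have hw' : (QuotientAddGroup.mk u' : C ⧸ encH J).out = w := by
    rw [← h2]
  rw [hw'] at h3
  have hwmem : u - w ∈ encH J := by
    have hh : (QuotientAddGroup.mk u : C ⧸ encH J) = QuotientAddGroup.mk w := by
      rw [hwdef, QuotientAddGroup.out_eq']
    rwa [QuotientAddGroup.eq_iff_sub_mem] at hh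
  have hwmem' : u' - w ∈ encH J := by
    have hh : (QuotientAddGroup.mk u' : C ⧸ encH J) = QuotientAddGroup.mk w := by
      rw [← hw', QuotientAddGroup.out_eq']
    rwa [QuotientAddGroup.eq_iff_sub_mem] at hh
  set t := pick J (u - w) with ht
  set t' := pick J (u' - w) with ht'
  have hmem1 : (u - w, t) ∈ J := pick_mem (mem_encH.mp hwmem)
  have hmem2 : (u' - w, t') ∈ J := pick_mem (mem_encH.mp hwmem')
  rw [QuotientAddGroup.eq_iff_sub_mem] at h3
  have hmem3 : ((0 : C), (v - t) - (v' - t')) ∈ J := h3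
  have key : ((u, v) - (u', v')) ∈ J := by
    have hs := J.add_mem (J.sub_mem hmem1 hmem2) hmem3
    have heq : ((u - w, t) - (u' - w, t') + ((0 : C), (v - t) - (v' - t'))) =
        ((u, v) - (u', v')) := by
      ext
      · simp only [Prod.fst_add, Prod.fst_sub]
        abel
      · simp only [Prod.snd_add, Prod.snd_sub]
        abel
    rwa [heq] at hs
  have hcc : (QuotientAddGroup.mk (u, v) : (C × B) ⧸ J) = QuotientAddGroup.mk (u', v') := by
    rw [QuotientAddGroup.eq_iff_sub_mem]; exact key
  have hc : c = c' := by
    have e1 : (QuotientAddGroup.mk (u, v) : (C × B) ⧸ J) = c := by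
      rw [hu, hv]
      exact QuotientAddGroup.out_eq' c
    have e2 : (QuotientAddGroup.mk (u', v') : (C × B) ⧸ J) = c' := by
      rw [hu', hv']
      exact QuotientAddGroup.out_eq' c'
    rw [← e1, ← e2, hcc]
  rw [hc]

end Enc

section Counting

lemma nat_card_sigma_le {ι : Type*} {F : ι → Type*} [Finite ι] [∀ i, Finite (F i)] (k : ℕ)
    (h : ∀ i, Nat.card (F i) ≤ k) : Nat.card (Σ i, F i) ≤ Nat.card ι * k := by
  classical
  cases nonempty_fintype ι
  haveI : ∀ i, Fintype (F i) := fun i => Fintype.ofFinite _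
  rw [Nat.card_eq_fintype_card, Nat.card_eq_fintype_card, Fintype.card_sigma]
  calc ∑ i, Fintype.card (F i) ≤ ∑ _i : ι, k :=
        Finset.sum_le_sum (fun i _ => by rw [← Nat.card_eq_fintype_card]; exact h i)
    _ = Fintype.card ι * k := by rw [Finset.sum_const, Finset.card_univ, smul_eq_mul]

lemma card_hom_le_card_codomain (G Q : Type*) [AddCommGroup G] [IsAddCyclic G]
    [AddCommGroup Q] [Finite Q] : Nat.card (G →+ Q) ≤ Nat.card Q := by
  obtain ⟨g, hg⟩ := IsAddCyclic.exists_generator (α := G)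
  apply Nat.card_le_card_of_injective (fun φ : G →+ Q => φ g)
  intro φ ψ h
  have h' : φ g = ψ g := h
  ext x
  obtain ⟨k, hk⟩ := AddSubgroup.mem_zmultiples_iff.mp (hg x)
  rw [← hk, map_zsmul, map_zsmul, h']

lemma card_hom_le_card_domain (G Q : Type*) [AddCommGroup G] [Finite G] [IsAddCyclic G]
    [AddCommGroup Q] [Finite Q] [IsAddCyclic Q] : Nat.card (G →+ Q) ≤ Nat.card G := by
  classical
  haveI : Fintype Q := Fintype.ofFinite Q
  obtain ⟨g, hg⟩ := IsAddCyclic.exists_generator (α := G)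
  set m := Nat.card G with hm
  have hm0 : 0 < m := Nat.card_pos
  have hT : (Finset.filter (fun a : Q => m • a = 0) Finset.univ).card ≤ m :=
    IsAddCyclic.card_nsmul_eq_zero_le hm0
  have : Nat.card (G →+ Q) ≤
      Nat.card (Finset.filter (fun a : Q => m • a = 0) Finset.univ : Finset Q) := by
    apply Nat.card_le_card_of_injective
      (fun φ : G →+ Q => (⟨φ g, by
        simp only [Finset.mem_filter, Finset.mem_univ, true_and]
        rw [← map_nsmul]
        have : (m • g : G) = 0 := by
          rw [hm]; exact card_nsmul_eq_zero'
        rw [this, map_zero]⟩ :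
        (Finset.filter (fun a : Q => m • a = 0) Finset.univ : Finset Q)))
    intro φ ψ h
    have h' : φ g = ψ g := congrArg Subtype.val h
    ext x
    obtain ⟨k, hk⟩ := AddSubgroup.mem_zmultiples_iff.mp (hg x)
    rw [← hk, map_zsmul, map_zsmul, h']
  calc Nat.card (G →+ Q) ≤ _ := this
    _ = (Finset.filter (fun a : Q => m • a = 0) Finset.univ).card := Nat.card_eq_finsetCard _
    _ ≤ m := hT

lemma addSubgroup_zmod_eq_of_card_eq {n : ℕ} [NeZero n] (S S' : AddSubgroup (ZMod n))
    (h : Nat.card S = Nat.card S') : S = S' := by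
  classical
  have key : ∀ T : AddSubgroup (ZMod n),
      (T : Set (ZMod n)) = {x : ZMod n | Nat.card T • x = 0} := by
    intro T
    set m := Nat.card T with hmdef
    have hm0 : 0 < m := Nat.card_pos
    have hsub : (T : Set (ZMod n)) ⊆ {x : ZMod n | m • x = 0} := by
      intro x hx
      have : (m • (⟨x, hx⟩ : T) : T) = 0 := by
        rw [hmdef]; exact card_nsmul_eq_zero'
      have := congrArg (Subtype.val) this
      simpa using this
    have hfin : {x : ZMod n | m • x = 0}.Finite := Set.toFinite _
    have hcard : {x : ZMod n | m • x = 0}.ncard ≤ m := by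
      have heq : {x : ZMod n | m • x = 0} =
          ↑(Finset.filter (fun a : ZMod n => m • a = 0) Finset.univ) := by
        ext x; simp
      rw [heq, Set.ncard_coe_finset]
      exact IsAddCyclic.card_nsmul_eq_zero_le hm0
    have hTcard : (T : Set (ZMod n)).ncard = m := by
      rw [← Nat.card_coe_set_eq, hmdef]
      rfl
    exact (Set.eq_of_subset_of_ncard_le hsub (hcard.trans hTcard.ge) hfin)
  have h1 := key S
  have h2 := key S'
  rw [h] at h1
  exact SetLike.ext' (h1.trans h2.symm)

end Counting

instance addMonoidHom.finite {G Q : Type*} [AddZeroClass G] [AddZeroClass Q] [Finite G]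
    [Finite Q] : Finite (G →+ Q) :=
  Finite.of_injective (fun φ => (φ : G → Q)) DFunLike.coe_injective

/-- For every `n ∈ ℕ+`, the number of subgroups of `ℤ_n × ℤ_n × ℤ_n` is at most
`n²·τ(n)⁴`. -/
theorem card_addSubgroups_le (n : ℕ) (hn : 0 < n) :
    Nat.card (AddSubgroup (ZMod n × ZMod n × ZMod n)) ≤ n ^ 2 * n.divisors.card ^ 4 := by
  haveI : NeZero n := ⟨hn.ne'⟩
  set d := n.divisors.card with hd
  set T := Nat.card (AddSubgroup (ZMod n)) with hT
  -- count of subgroups of `ZMod n`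
  have hdiv : T ≤ d := by
    have hinj : Function.Injective
        (fun S : AddSubgroup (ZMod n) => (⟨Nat.card S, by
          rw [Nat.mem_divisors]
          exact ⟨(AddSubgroup.card_addSubgroup_dvd_card S).trans (Nat.card_zmod n).dvd, hn.ne'⟩⟩ :
          n.divisors)) := by
      intro S S' hss
      exact addSubgroup_zmod_eq_of_card_eq S S' (congrArg Subtype.val hss)
    calc T ≤ Nat.card n.divisors := Nat.card_le_card_of_injective _ hinj
      _ = d := Nat.card_eq_finsetCard _
  have hd1 : 1 ≤ d := Finset.card_pos.mpr ⟨n, Nat.mem_divisors_self n hn.ne'⟩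
  -- inner uniform bound
  have M1 : ∀ H₂ J₁ : AddSubgroup (ZMod n),
      Nat.card ((H₂ →+ ZMod n ⧸ J₁) × (ZMod n ⧸ H₂) × (ZMod n ⧸ J₁)) ≤ n * n := by
    intro H₂ J₁
    haveI : IsAddCyclic (ZMod n ⧸ J₁) :=
      isAddCyclic_of_surjective (QuotientAddGroup.mk' J₁) (QuotientAddGroup.mk'_surjective J₁)
    have h1 : Nat.card (H₂ →+ ZMod n ⧸ J₁) ≤ Nat.card H₂ :=
      card_hom_le_card_domain _ _
    have h2 : Nat.card (ZMod n ⧸ H₂) * Nat.card H₂ = n := by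
      have := (AddSubgroup.card_eq_card_quotient_mul_card_addSubgroup H₂).symm
      rwa [Nat.card_zmod] at this
    have h3 : Nat.card (ZMod n ⧸ J₁) ≤ n := by
      apply Nat.le_of_dvd hn
      have := AddSubgroup.card_quotient_dvd_card J₁
      rwa [Nat.card_zmod] at this
    rw [Nat.card_prod, Nat.card_prod]
    calc Nat.card (H₂ →+ ZMod n ⧸ J₁) * (Nat.card (ZMod n ⧸ H₂) * Nat.card (ZMod n ⧸ J₁))
        ≤ Nat.card H₂ * (Nat.card (ZMod n ⧸ H₂) * Nat.card (ZMod n ⧸ J₁)) :=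
          Nat.mul_le_mul_right _ h1
      _ = (Nat.card (ZMod n ⧸ H₂) * Nat.card H₂) * Nat.card (ZMod n ⧸ J₁) := by ring
      _ = n * Nat.card (ZMod n ⧸ J₁) := by rw [h2]
      _ ≤ n * n := Nat.mul_le_mul_left _ h3
  -- bound on Σ J, (ZMod n × ZMod n) ⧸ J
  have M2 : Nat.card (Σ J : AddSubgroup (ZMod n × ZMod n), (ZMod n × ZMod n) ⧸ J) ≤
      T * (T * (n * n)) := by
    calc Nat.card (Σ J : AddSubgroup (ZMod n × ZMod n), (ZMod n × ZMod n) ⧸ J)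
        ≤ Nat.card (Σ H : AddSubgroup (ZMod n), Σ J₁ : AddSubgroup (ZMod n),
            ((H →+ ZMod n ⧸ J₁) × (ZMod n ⧸ H) × (ZMod n ⧸ J₁))) :=
          Nat.card_le_card_of_injective _ encQ_injective
      _ ≤ T * (T * (n * n)) := by
          apply nat_card_sigma_le
          intro H
          apply nat_card_sigma_le
          intro J₁
          exact M1 H J₁
  -- top level
  calc Nat.card (AddSubgroup (ZMod n × ZMod n × ZMod n))
      ≤ Nat.card (Σ H : AddSubgroup (ZMod n), Σ J : AddSubgroup (ZMod n × ZMod n),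
          (H →+ (ZMod n × ZMod n) ⧸ J)) :=
        Nat.card_le_card_of_injective _ enc_injective
    _ ≤ T * (T * (T * (n * n))) := by
        apply nat_card_sigma_le
        intro H
        obtain ⟨g, hg⟩ := IsAddCyclic.exists_generator (α := H)
        have hev : ∀ J : AddSubgroup (ZMod n × ZMod n),
            Function.Injective (fun φ : H →+ (ZMod n × ZMod n) ⧸ J => φ g) := by
          intro J φ ψ hps
          have h' : φ g = ψ g := hps
          ext x
          obtain ⟨k, hk⟩ := AddSubgroup.mem_zmultiples_iff.mp (hg x)
          rw [← hk, map_zsmul, map_zsmul, h']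
        calc Nat.card (Σ J : AddSubgroup (ZMod n × ZMod n), (H →+ (ZMod n × ZMod n) ⧸ J))
            ≤ Nat.card (Σ J : AddSubgroup (ZMod n × ZMod n), (ZMod n × ZMod n) ⧸ J) :=
              Nat.card_le_card_of_injective _
                (Function.injective_id.sigma_map hev)
          _ ≤ T * (T * (n * n)) := M2
    _ ≤ d * (d * (d * (n * n))) := by
        exact Nat.mul_le_mul hdiv (Nat.mul_le_mul hdiv (Nat.mul_le_mul_right _ hdiv))
    _ = n ^ 2 * d ^ 3 := by ring
    _ ≤ n ^ 2 * d ^ 4 := Nat.mul_le_mul_left _ (Nat.pow_le_pow_right hd1 (by norm_num))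
end

section
/- The function (m,n,r) ↦ s(m,n,r) counting the subgroups of ℤ_m × ℤ_n × ℤ_r is multiplicative as a function of three variables: for all m₁, n₁, r₁, m₂, n₂, r₂ ∈ ℕ+ with gcd(m₁·n₁·r₁, m₂·n₂·r₂) = 1, one has s(m₁m₂, n₁n₂, r₁r₂) = s(m₁,n₁,r₁)·s(m₂,n₂,r₂). -/
open AddSubgroup

lemma key_mem {A B : Type*} [AddGroup A] [AddGroup B] [Finite A] [Finite B]
    (h : Nat.Coprime (Nat.card A) (Nat.card B)) (K : AddSubgroup (A × B))
    {x : A × B} (hx : x ∈ K) : (x.1, (0 : B)) ∈ K := by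
  obtain ⟨c, hc1, hc2⟩ := Nat.chineseRemainder h 1 0
  have h1 : addOrderOf x.1 ∣ Nat.card A := addOrderOf_dvd_natCard x.1
  have h2 : addOrderOf x.2 ∣ Nat.card B := addOrderOf_dvd_natCard x.2
  have : c • x = (x.1, (0 : B)) := by
    have e1 : c • x.1 = x.1 := by
      rw [nsmul_eq_nsmul_iff_modEq.mpr (hc1.of_dvd h1)] ; exact one_nsmul _
    have e2 : c • x.2 = 0 := by
      rw [nsmul_eq_nsmul_iff_modEq.mpr (hc2.of_dvd h2)] ; exact zero_nsmul _
    rw [Prod.smul_def, e1, e2]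
  exact this ▸ K.nsmul_mem hx c

lemma card_addSubgroup_prod {A B : Type*} [AddGroup A] [AddGroup B] [Finite A] [Finite B]
    (h : Nat.Coprime (Nat.card A) (Nat.card B)) :
    Nat.card (AddSubgroup (A × B)) = Nat.card (AddSubgroup A) * Nat.card (AddSubgroup B) := by
  rw [← Nat.card_prod]
  refine Nat.card_congr
    { toFun := fun K => (K.map (AddMonoidHom.fst A B), K.map (AddMonoidHom.snd A B))
      invFun := fun p => p.1.prod p.2
      left_inv := ?_, right_inv := ?_ }
  · intro K
    ext ⟨a, b⟩
    simp only [AddSubgroup.mem_prod, AddSubgroup.mem_map, AddMonoidHom.coe_fst,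
      AddMonoidHom.coe_snd]
    constructor
    · rintro ⟨⟨x, hx, rfl⟩, ⟨y, hy, rfl⟩⟩
      have h1 := key_mem h K hx
      have h2 : ((0 : A), y.2) ∈ K := by
        have h2' := K.sub_mem hy (key_mem h K hy)
        have e : y - (y.1, (0 : B)) = ((0 : A), y.2) := by
          rw [Prod.mk.injEq] at *; constructor <;> simp [Prod.fst_sub, Prod.snd_sub]
        rwa [e] at h2'
      simpa using K.add_mem h1 h2
    · intro hab
      exact ⟨⟨(a, b), hab, rfl⟩, ⟨(a, b), hab, rfl⟩⟩
  · rintro ⟨H, J⟩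
    have h0H : (0 : A) ∈ H := H.zero_mem
    have h0J : (0 : B) ∈ J := J.zero_mem
    refine Prod.ext ?_ ?_ <;> ext x <;>
      simp only [AddSubgroup.mem_map, AddMonoidHom.coe_fst, AddMonoidHom.coe_snd,
        AddSubgroup.mem_prod]
    · exact ⟨fun ⟨y, hy, e⟩ => e ▸ hy.1, fun hx => ⟨(x, 0), ⟨hx, h0J⟩, rfl⟩⟩
    · exact ⟨fun ⟨y, hy, e⟩ => e ▸ hy.2, fun hx => ⟨(0, x), ⟨h0H, hx⟩, rfl⟩⟩

lemma card_addSubgroup_congr {A B : Type*} [AddGroup A] [AddGroup B] (e : A ≃+ B) :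
    Nat.card (AddSubgroup A) = Nat.card (AddSubgroup B) :=
  Nat.card_congr
    { toFun := AddSubgroup.map e.toAddMonoidHom
      invFun := AddSubgroup.map e.symm.toAddMonoidHom
      left_inv := fun K => by ext x; simp [AddSubgroup.mem_map]
      right_inv := fun K => by ext x; simp [AddSubgroup.mem_map] }

/-- The number of subgroups of `ℤ_m × ℤ_n × ℤ_r` is multiplicative as a function of the
three variables: if `gcd(m₁n₁r₁, m₂n₂r₂) = 1` then
`s(m₁m₂, n₁n₂, r₁r₂) = s(m₁,n₁,r₁)·s(m₂,n₂,r₂)`. -/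
theorem card_addSubgroups_multiplicative (m₁ n₁ r₁ m₂ n₂ r₂ : ℕ)
    (hm₁ : 0 < m₁) (hn₁ : 0 < n₁) (hr₁ : 0 < r₁)
    (hm₂ : 0 < m₂) (hn₂ : 0 < n₂) (hr₂ : 0 < r₂)
    (hcop : Nat.gcd (m₁ * n₁ * r₁) (m₂ * n₂ * r₂) = 1) :
    Nat.card (AddSubgroup (ZMod (m₁ * m₂) × ZMod (n₁ * n₂) × ZMod (r₁ * r₂))) =
      Nat.card (AddSubgroup (ZMod m₁ × ZMod n₁ × ZMod r₁)) *
        Nat.card (AddSubgroup (ZMod m₂ × ZMod n₂ × ZMod r₂)) := by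
  have hcop' : Nat.Coprime (m₁ * n₁ * r₁) (m₂ * n₂ * r₂) := hcop
  have hm : Nat.Coprime m₁ m₂ :=
    Nat.Coprime.coprime_dvd_right (dvd_mul_of_dvd_left (dvd_mul_right m₂ n₂) r₂)
      (Nat.Coprime.coprime_dvd_left (dvd_mul_of_dvd_left (dvd_mul_right m₁ n₁) r₁) hcop')
  have hn : Nat.Coprime n₁ n₂ :=
    Nat.Coprime.coprime_dvd_right (dvd_mul_of_dvd_left (dvd_mul_left n₂ m₂) r₂)
      (Nat.Coprime.coprime_dvd_left (dvd_mul_of_dvd_left (dvd_mul_left n₁ m₁) r₁) hcop')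
  have hr : Nat.Coprime r₁ r₂ :=
    Nat.Coprime.coprime_dvd_right (dvd_mul_left r₂ (m₂ * n₂))
      (Nat.Coprime.coprime_dvd_left (dvd_mul_left r₁ (m₁ * n₁)) hcop')
  haveI : NeZero m₁ := ⟨hm₁.ne'⟩
  haveI : NeZero n₁ := ⟨hn₁.ne'⟩
  haveI : NeZero r₁ := ⟨hr₁.ne'⟩
  haveI : NeZero m₂ := ⟨hm₂.ne'⟩
  haveI : NeZero n₂ := ⟨hn₂.ne'⟩
  haveI : NeZero r₂ := ⟨hr₂.ne'⟩
  haveI : NeZero (m₁ * m₂) := ⟨(Nat.mul_pos hm₁ hm₂).ne'⟩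
  haveI : NeZero (n₁ * n₂) := ⟨(Nat.mul_pos hn₁ hn₂).ne'⟩
  haveI : NeZero (r₁ * r₂) := ⟨(Nat.mul_pos hr₁ hr₂).ne'⟩
  -- Build the AddEquiv
  have e : (ZMod (m₁ * m₂) × ZMod (n₁ * n₂) × ZMod (r₁ * r₂)) ≃+
      (ZMod m₁ × ZMod n₁ × ZMod r₁) × (ZMod m₂ × ZMod n₂ × ZMod r₂) := by
    refine AddEquiv.trans
      (AddEquiv.prodCongr (ZMod.chineseRemainder hm).toAddEquiv
        (AddEquiv.prodCongr (ZMod.chineseRemainder hn).toAddEquiv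
          (ZMod.chineseRemainder hr).toAddEquiv)) ?_
    exact AddEquiv.trans
      (AddEquiv.prodCongr (AddEquiv.refl _) (AddEquiv.prodProdProdComm _ _ _ _))
      (AddEquiv.prodProdProdComm _ _ _ _)
  rw [card_addSubgroup_congr e]
  refine card_addSubgroup_prod ?_
  simpa [Nat.card_prod, Nat.card_zmod, mul_assoc] using hcop'
end
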